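/- arXiv:0901.0929 — 6 statements merged into one kernel-verified Lean document; each statement's English description precedes it below -/
import Mathlib

section
/- Let p(z) = a₁z + a₂z² + … + a_nzⁿ be a real polynomial with zero constant term which is a bijection from ℝ to ℝ. If U₁, U₂ ∈ 𝒲 satisfy p(U₁) = p(U₂) almost everywhere on [0,1]² (where p is applied to a kernel via operator powers), then U₁ = U₂ almost everywhere; i.e., the map U ↦ p(U) is injective on 𝒲 up to almost-everywhere equality. -/
open MeasureTheory
open scoped Classical

noncomputable section

/-- The unit interval `[0,1]` as a subset of `ℝ`. -/
def I01 : Set ℝ := Set.Icc 0 1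

/-- The cube `[0,1]^n`. -/
def cube (n : ℕ) : Set (Fin n → ℝ) := Set.univ.pi fun _ => I01

/-- `W` belongs to `𝒲`: a bounded symmetric measurable function on `[0,1]²`. -/
def memW (W : ℝ → ℝ → ℝ) : Prop :=
  Measurable (Function.uncurry W) ∧
  (∀ x ∈ I01, ∀ y ∈ I01, W x y = W y x) ∧
  ∃ C : ℝ, ∀ x ∈ I01, ∀ y ∈ I01, |W x y| ≤ C

/-- `W` belongs to `𝒲₀`: a graphon, i.e. symmetric measurable with values in `[0,1]`. -/
def memW0 (W : ℝ → ℝ → ℝ) : Prop :=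
  Measurable (Function.uncurry W) ∧
  (∀ x ∈ I01, ∀ y ∈ I01, W x y = W y x) ∧
  ∀ x ∈ I01, ∀ y ∈ I01, W x y ∈ Set.Icc (0 : ℝ) 1

/-- Homomorphism density `t(F,W)` of a finite simple graph `F` in `W`. -/
def homDensity {n : ℕ} (F : SimpleGraph (Fin n)) (W : ℝ → ℝ → ℝ) : ℝ :=
  ∫ x in cube n,
    ∏ p ∈ Finset.univ.filter (fun p : Fin n × Fin n => p.1 < p.2 ∧ F.Adj p.1 p.2),
      W (x p.1) (x p.2)

/-- Two kernels are weakly isomorphic if all their homomorphism densities agree. -/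
def WeaklyIsomorphic (U W : ℝ → ℝ → ℝ) : Prop :=
  ∀ (n : ℕ) (F : SimpleGraph (Fin n)), homDensity F U = homDensity F W

/-- `W` is finitely forcible within the class `A`. -/
def FinitelyForcible (A : (ℝ → ℝ → ℝ) → Prop) (W : ℝ → ℝ → ℝ) : Prop :=
  A W ∧ ∃ (k : ℕ) (n : Fin k → ℕ) (F : ∀ i, SimpleGraph (Fin (n i))),
    ∀ U, A U → (∀ i, homDensity (F i) U = homDensity (F i) W) → WeaklyIsomorphic U W

/-- Density function `t^k(F,W)` of a `k`-labeled graph, as a function of the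
labeled variables; the graph has `k` labeled and `m` unlabeled vertices. -/
def labDensity {k m : ℕ} (F : SimpleGraph (Fin (k + m))) (W : ℝ → ℝ → ℝ)
    (x : Fin k → ℝ) : ℝ :=
  ∫ y in cube m,
    ∏ p ∈ Finset.univ.filter
        (fun p : Fin (k + m) × Fin (k + m) => p.1 < p.2 ∧ F.Adj p.1 p.2),
      W (Fin.append x y p.1) (Fin.append x y p.2)

/-- Kernel-operator product `(U∘V)(x,y) = ∫₀¹ U(x,z)V(z,y) dz`. -/
def kerMul (U V : ℝ → ℝ → ℝ) : ℝ → ℝ → ℝ :=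
  fun x y => ∫ z in I01, U x z * V z y

/-- `kerPow U i = U^{∘(i+1)}`, the `(i+1)`-st kernel-operator power of `U`. -/
def kerPow (U : ℝ → ℝ → ℝ) : ℕ → (ℝ → ℝ → ℝ)
  | 0 => U
  | i + 1 => kerMul (kerPow U i) U

/-- `p(U) = Σ_{i=1}^n a_i U^{∘i}` where `a i` is the coefficient of `z^{i+1}`. -/
def kerPoly (n : ℕ) (a : Fin n → ℝ) (U : ℝ → ℝ → ℝ) : ℝ → ℝ → ℝ :=
  fun x y => ∑ i, a i * kerPow U i x y

open scoped ComplexConjugate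

namespace St3

abbrev μI : Measure ℝ := volume.restrict I01

lemma I01_meas : MeasurableSet I01 := measurableSet_Icc

instance : IsProbabilityMeasure μI :=
  ⟨by simp [μI, I01, Real.volume_Icc]⟩

abbrev H : Type := Lp ℂ 2 μI

/-- A globally bounded, globally measurable kernel. -/
structure IsKer (K : ℝ → ℝ → ℝ) : Prop where
  meas : Measurable (Function.uncurry K)
  bdd : ∃ C : ℝ, ∀ x y, |K x y| ≤ C

variable {K L : ℝ → ℝ → ℝ}

namespace IsKer

lemma measL (hK : IsKer K) (x : ℝ) : Measurable (K x) :=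
  hK.meas.comp (measurable_const.prodMk measurable_id)

lemma measR (hK : IsKer K) (y : ℝ) : Measurable (fun x => K x y) :=
  hK.meas.comp (measurable_id.prodMk measurable_const)

/-- chosen bound -/
def C (hK : IsKer K) : ℝ := hK.bdd.choose

lemma le_C (hK : IsKer K) (x y : ℝ) : |K x y| ≤ hK.C := hK.bdd.choose_spec x y

lemma C_nonneg (hK : IsKer K) : 0 ≤ hK.C := le_trans (abs_nonneg _) (hK.le_C 0 0)

end IsKer

/-- The function underlying the integral operator with kernel `K`. -/
def opFun (K : ℝ → ℝ → ℝ) (f : ℝ → ℂ) (x : ℝ) : ℂ := ∫ y, (K x y : ℂ) * f y ∂μI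

lemma norm_coe_mul (r : ℝ) (z : ℂ) : ‖(r : ℂ) * z‖ = |r| * ‖z‖ := by
  rw [norm_mul, Complex.norm_real, Real.norm_eq_abs]

lemma integrable_kmul (hK : IsKer K) {f : ℝ → ℂ} (hf : Integrable f μI) (x : ℝ) :
    Integrable (fun y => (K x y : ℂ) * f y) μI := by
  refine Integrable.mono' (hf.norm.const_mul hK.C) ?_ ?_
  · exact ((Complex.measurable_ofReal.comp (hK.measL x)).aestronglyMeasurable).mul
      hf.aestronglyMeasurable
  · refine Filter.Eventually.of_forall (fun y => ?_)
    rw [norm_coe_mul]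
    exact mul_le_mul_of_nonneg_right (hK.le_C x y) (norm_nonneg _)

lemma integrable_H (f : H) : Integrable (⇑f) μI :=
  (Lp.memLp f).integrable one_le_two

lemma int_norm_le (f : H) : ∫ y, ‖f y‖ ∂μI ≤ ‖f‖ := by
  have hfi : Integrable (⇑f) μI := integrable_H f
  have h1 : ENNReal.ofReal (∫ y, ‖f y‖ ∂μI) = eLpNorm (⇑f) 1 μI := by
    rw [eLpNorm_one_eq_lintegral_enorm, ofReal_integral_norm_eq_lintegral_enorm hfi]
  have h2 : eLpNorm (⇑f) 1 μI ≤ eLpNorm (⇑f) 2 μI :=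
    eLpNorm_le_eLpNorm_of_exponent_le one_le_two (Lp.aestronglyMeasurable f)
  have h3 : eLpNorm (⇑f) 2 μI ≠ ⊤ := (Lp.memLp f).2.ne
  rw [Lp.norm_def]
  have := ENNReal.toReal_mono h3 (h1 ▸ h2)
  rwa [ENNReal.toReal_ofReal (integral_nonneg (fun y => norm_nonneg _))] at this

lemma opFun_aesm (hK : IsKer K) {f : ℝ → ℂ} (hf : AEStronglyMeasurable f μI) :
    AEStronglyMeasurable (opFun K f) μI := by
  have h : AEStronglyMeasurable (fun p : ℝ × ℝ => (K p.1 p.2 : ℂ) * f p.2) (μI.prod μI) :=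
    ((Complex.measurable_ofReal.comp hK.meas).aestronglyMeasurable).mul hf.comp_snd
  exact h.integral_prod_right'

lemma opFun_bound (hK : IsKer K) (f : H) (x : ℝ) :
    ‖opFun K (⇑f) x‖ ≤ hK.C * ‖f‖ := by
  have h1 : ‖opFun K (⇑f) x‖ ≤ ∫ y, ‖(K x y : ℂ) * f y‖ ∂μI := norm_integral_le_integral_norm _
  have h2 : ∫ y, ‖(K x y : ℂ) * f y‖ ∂μI ≤ ∫ y, hK.C * ‖f y‖ ∂μI := by
    refine integral_mono (integrable_kmul hK (integrable_H f) x).norm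
      ((integrable_H f).norm.const_mul _) (fun y => ?_)
    rw [norm_coe_mul]
    exact mul_le_mul_of_nonneg_right (hK.le_C x y) (norm_nonneg _)
  have h3 : ∫ y, hK.C * ‖f y‖ ∂μI = hK.C * ∫ y, ‖f y‖ ∂μI := integral_const_mul _ _
  calc ‖opFun K (⇑f) x‖ ≤ hK.C * ∫ y, ‖f y‖ ∂μI := by linarith [h1, h2, h3.le, h3.ge]
    _ ≤ hK.C * ‖f‖ := mul_le_mul_of_nonneg_left (int_norm_le f) hK.C_nonneg

lemma opFun_memLp (hK : IsKer K) (f : H) : MemLp (opFun K (⇑f)) 2 μI :=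
  MemLp.of_bound (opFun_aesm hK (Lp.aestronglyMeasurable f)) (hK.C * ‖f‖)
    (Filter.Eventually.of_forall (opFun_bound hK f))

/-- The integral operator with kernel `K` as a continuous linear map on `L²`. -/
def opCLM (hK : IsKer K) : H →L[ℂ] H :=
  LinearMap.mkContinuous
    { toFun := fun f => MemLp.toLp (opFun K (⇑f)) (opFun_memLp hK f)
      map_add' := by
        intro f g
        rw [← MemLp.toLp_add (opFun_memLp hK f) (opFun_memLp hK g)]
        refine MemLp.toLp_congr (opFun_memLp hK (f + g)) _
          (Filter.Eventually.of_forall (fun x => ?_))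
        have h1 : (fun y => (K x y : ℂ) * (⇑(f + g)) y)
            =ᵐ[μI] fun y => (K x y : ℂ) * f y + (K x y : ℂ) * g y := by
          filter_upwards [Lp.coeFn_add f g] with y hy
          rw [hy, Pi.add_apply, mul_add]
        show opFun K (⇑(f + g)) x = opFun K (⇑f) x + opFun K (⇑g) x
        rw [opFun, integral_congr_ae h1,
          integral_add (integrable_kmul hK (integrable_H f) x)
            (integrable_kmul hK (integrable_H g) x)]
        rfl
      map_smul' := by
        intro c f
        rw [RingHom.id_apply, ← MemLp.toLp_const_smul c (opFun_memLp hK f)]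
        refine MemLp.toLp_congr (opFun_memLp hK (c • f)) _
          (Filter.Eventually.of_forall (fun x => ?_))
        have h1 : (fun y => (K x y : ℂ) * (⇑(c • f)) y)
            =ᵐ[μI] fun y => c * ((K x y : ℂ) * f y) := by
          filter_upwards [Lp.coeFn_smul c f] with y hy
          rw [hy, Pi.smul_apply, smul_eq_mul]; ring
        show opFun K (⇑(c • f)) x = (c • opFun K (⇑f)) x
        rw [opFun, integral_congr_ae h1, integral_const_mul]
        rfl }
    hK.C
    (by
      intro f
      simp only [LinearMap.coe_mk, AddHom.coe_mk]
      rw [Lp.norm_toLp]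
      have : eLpNorm (opFun K (⇑f)) 2 μI ≤ ENNReal.ofReal (hK.C * ‖f‖) := by
        have := eLpNorm_le_of_ae_bound (μ := μI) (p := 2)
          (Filter.Eventually.of_forall (opFun_bound hK f))
        simpa using this
      have h2 := ENNReal.toReal_mono ENNReal.ofReal_ne_top this
      rwa [ENNReal.toReal_ofReal (mul_nonneg hK.C_nonneg (norm_nonneg f))] at h2)

lemma opCLM_coe (hK : IsKer K) (f : H) : ⇑(opCLM hK f) =ᵐ[μI] opFun K (⇑f) :=
  MemLp.coeFn_toLp (opFun_memLp hK f)

end St3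

namespace St3

variable {K L : ℝ → ℝ → ℝ}

lemma opCLM_congr (hK : IsKer K) (hL : IsKer L)
    (h : (fun p : ℝ × ℝ => K p.1 p.2) =ᵐ[μI.prod μI] fun p => L p.1 p.2) :
    opCLM hK = opCLM hL := by
  ext f
  refine (opCLM_coe hK f).trans (Filter.EventuallyEq.trans ?_ (opCLM_coe hL f).symm)
  have h2 := Measure.ae_ae_of_ae_prod h
  filter_upwards [h2] with x hx
  refine integral_congr_ae (hx.mono fun y hy => ?_)
  show ((K x y : ℝ) : ℂ) * f y = ((L x y : ℝ) : ℂ) * f y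
  rw [hy]

lemma integrable_prod_bound {F : ℝ × ℝ → ℂ} (hF : AEStronglyMeasurable F (μI.prod μI))
    {g₁ g₂ : ℝ → ℝ} (hg₁ : Integrable g₁ μI) (hg₂ : Integrable g₂ μI)
    (hb : ∀ p : ℝ × ℝ, ‖F p‖ ≤ g₁ p.1 * g₂ p.2) : Integrable F (μI.prod μI) := by
  refine Integrable.mono' ?_ hF (Filter.Eventually.of_forall hb)
  have := hg₁.mul_prod hg₂
  exact this

/-- Self-adjointness of integral operators with symmetric real kernel. -/
lemma opCLM_isSelfAdjoint (hK : IsKer K) (hsymm : ∀ x y, K x y = K y x) :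
    IsSelfAdjoint (opCLM hK) := by
  rw [ContinuousLinearMap.isSelfAdjoint_iff_isSymmetric]
  intro f g
  have hf := integrable_H f
  have hg := integrable_H g
  -- both sides as double integrals
  have hL2 : ∀ (u v : H), (inner ℂ u v : ℂ) = ∫ x, conj (u x) * v x ∂μI := fun u v => by
    rw [L2.inner_def]; simp [mul_comm]
  rw [ContinuousLinearMap.coe_coe, hL2, hL2]
  have h1 : ∫ x, conj ((opCLM hK f) x) * g x ∂μI
      = ∫ x, ∫ y, (K x y : ℂ) * conj (f y) * g x ∂μI ∂μI := by
    refine integral_congr_ae ?_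
    filter_upwards [opCLM_coe hK f] with x hx
    rw [hx]
    show conj (∫ y, (K x y : ℂ) * f y ∂μI) * g x = _
    rw [← integral_conj, ← integral_mul_const]
    refine integral_congr_ae (Filter.Eventually.of_forall fun y => ?_)
    simp only [map_mul, Complex.conj_ofReal]
  have h2 : ∫ x, conj (f x) * (opCLM hK g) x ∂μI
      = ∫ x, ∫ y, (K x y : ℂ) * conj (f x) * g y ∂μI ∂μI := by
    refine integral_congr_ae ?_
    filter_upwards [opCLM_coe hK g] with x hx
    rw [hx]
    show conj (f x) * (∫ y, (K x y : ℂ) * g y ∂μI) = _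
    rw [← integral_const_mul]
    refine integral_congr_ae (Filter.Eventually.of_forall fun y => ?_)
    ring
  rw [h1, h2]
  -- Fubini on the LHS
  have hint : Integrable (Function.uncurry fun x y => (K x y : ℂ) * conj (f y) * g x)
      (μI.prod μI) := by
    refine integrable_prod_bound ?_ hg.norm (hf.norm.const_mul hK.C) (fun p => ?_)
    · have hKm : AEStronglyMeasurable (fun p : ℝ × ℝ => ((K p.1 p.2 : ℂ)))
          (μI.prod μI) := (Complex.measurable_ofReal.comp hK.meas).aestronglyMeasurable
      exact (hKm.mul ((Complex.continuous_conj.comp_aestronglyMeasurable (Lp.aestronglyMeasurable f)).comp_snd)).mul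
        ((Lp.aestronglyMeasurable g).comp_fst)
    · show ‖(K p.1 p.2 : ℂ) * conj (f p.2) * g p.1‖ ≤ ‖g p.1‖ * (hK.C * ‖f p.2‖)
      rw [norm_mul, norm_coe_mul, RCLike.norm_conj]
      calc |K p.1 p.2| * ‖f p.2‖ * ‖g p.1‖ ≤ hK.C * ‖f p.2‖ * ‖g p.1‖ :=
            mul_le_mul_of_nonneg_right
              (mul_le_mul_of_nonneg_right (hK.le_C _ _) (norm_nonneg _)) (norm_nonneg _)
        _ = ‖g p.1‖ * (hK.C * ‖f p.2‖) := by ring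
  rw [integral_integral_swap hint]
  refine integral_congr_ae (Filter.Eventually.of_forall fun x => ?_)
  refine integral_congr_ae (Filter.Eventually.of_forall fun y => ?_)
  show (K y x : ℂ) * conj (f x) * g y = (K x y : ℂ) * conj (f x) * g y
  rw [hsymm y x]

namespace IsKer

lemma kerMulK (hK : IsKer K) (hL : IsKer L) : IsKer (kerMul K L) := by
  constructor
  · have hm : Measurable fun q : (ℝ × ℝ) × ℝ => K q.1.1 q.2 * L q.2 q.1.2 := by
      refine Measurable.mul ?_ ?_
      · exact hK.meas.comp ((measurable_fst.comp measurable_fst).prodMk measurable_snd)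
      · exact hL.meas.comp (measurable_snd.prodMk (measurable_snd.comp measurable_fst))
    have h2 : StronglyMeasurable fun p : ℝ × ℝ => ∫ z, K p.1 z * L z p.2 ∂μI :=
      hm.stronglyMeasurable.integral_prod_right'
    exact h2.measurable
  · refine ⟨hK.C * hL.C, fun x y => ?_⟩
    have : ‖∫ z, K x z * L z y ∂μI‖ ≤ hK.C * hL.C * (μI Set.univ).toReal := by
      refine norm_integral_le_of_norm_le_const (Filter.Eventually.of_forall fun z => ?_)
      rw [Real.norm_eq_abs, abs_mul]
      exact mul_le_mul (hK.le_C x z) (hL.le_C z y) (abs_nonneg _) hK.C_nonneg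
    rw [← Real.norm_eq_abs]
    simpa [kerMul] using this

end IsKer

lemma ofReal_integralI (g : ℝ → ℝ) :
    ((∫ z, g z ∂μI : ℝ) : ℂ) = ∫ z, ((g z : ℝ) : ℂ) ∂μI := integral_ofReal.symm

lemma opCLM_kerMul (hK : IsKer K) (hL : IsKer L) :
    opCLM (hK.kerMulK hL) = opCLM hK * opCLM hL := by
  ext f
  refine (opCLM_coe _ f).trans (Filter.EventuallyEq.trans ?_
    (opCLM_coe hK (opCLM hL f)).symm)
  have hstep : opFun K (⇑(opCLM hL f)) =ᵐ[μI] fun x => ∫ z, (K x z : ℂ) * opFun L (⇑f) z ∂μI := by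
    refine Filter.Eventually.of_forall fun x => ?_
    refine integral_congr_ae ?_
    filter_upwards [opCLM_coe hL f] with z hz
    rw [hz]
  refine Filter.EventuallyEq.trans ?_ hstep.symm
  refine Filter.Eventually.of_forall fun x => ?_
  -- Fubini for fixed x
  have hint : Integrable (Function.uncurry fun y z => (K x z : ℂ) * (L z y : ℂ) * f y)
      (μI.prod μI) := by
    refine integrable_prod_bound ?_ (integrable_H f).norm
      ((integrable_const (μ := μI) (1:ℝ)).const_mul (hK.C * hL.C)) (fun p => ?_)
    · refine (AEStronglyMeasurable.mul ?_ ?_).mul ((Lp.aestronglyMeasurable f).comp_fst)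
      · exact ((Complex.measurable_ofReal.comp (hK.measL x)).comp
          measurable_snd).aestronglyMeasurable
      · exact (Complex.measurable_ofReal.comp (hL.meas.comp
          (measurable_snd.prodMk measurable_fst))).aestronglyMeasurable
    · show ‖(K x p.2 : ℂ) * (L p.2 p.1 : ℂ) * f p.1‖ ≤ ‖f p.1‖ * (hK.C * hL.C * 1)
      rw [norm_mul, norm_mul, Complex.norm_real, Complex.norm_real,
        Real.norm_eq_abs, Real.norm_eq_abs]
      calc |K x p.2| * |L p.2 p.1| * ‖f p.1‖ ≤ hK.C * hL.C * ‖f p.1‖ := by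
            refine mul_le_mul_of_nonneg_right ?_ (norm_nonneg _)
            exact mul_le_mul (hK.le_C _ _) (hL.le_C _ _) (abs_nonneg _) hK.C_nonneg
        _ = ‖f p.1‖ * (hK.C * hL.C * 1) := by ring
  show opFun (kerMul K L) (⇑f) x = _
  calc opFun (kerMul K L) (⇑f) x
      = ∫ y, (∫ z, (K x z : ℂ) * (L z y : ℂ) ∂μI) * f y ∂μI := by
        refine integral_congr_ae (Filter.Eventually.of_forall fun y => ?_)
        show ((kerMul K L x y : ℝ) : ℂ) * f y
            = (∫ z, (K x z : ℂ) * (L z y : ℂ) ∂μI) * f y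
        congr 1
        rw [kerMul]
        rw [show (∫ z in I01, K x z * L z y) = ∫ z, K x z * L z y ∂μI from rfl,
          ofReal_integralI]
        push_cast
        rfl
    _ = ∫ y, ∫ z, (K x z : ℂ) * (L z y : ℂ) * f y ∂μI ∂μI := by
        refine integral_congr_ae (Filter.Eventually.of_forall fun y => ?_)
        show (∫ z, (K x z : ℂ) * (L z y : ℂ) ∂μI) * f y
            = ∫ z, (K x z : ℂ) * (L z y : ℂ) * f y ∂μI
        rw [← integral_mul_const]
    _ = ∫ z, ∫ y, (K x z : ℂ) * (L z y : ℂ) * f y ∂μI ∂μI := integral_integral_swap hint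
    _ = ∫ z, (K x z : ℂ) * opFun L (⇑f) z ∂μI := by
        refine integral_congr_ae (Filter.Eventually.of_forall fun z => ?_)
        show ∫ y, (K x z : ℂ) * (L z y : ℂ) * f y ∂μI
            = (K x z : ℂ) * ∫ y, (L z y : ℂ) * f y ∂μI
        rw [← integral_const_mul]
        exact integral_congr_ae (Filter.Eventually.of_forall fun y => mul_assoc _ _ _)

end St3

namespace St3

variable {K L : ℝ → ℝ → ℝ}

lemma IsKer.kerPowK (hK : IsKer K) : ∀ i, IsKer (kerPow K i)
  | 0 => hK
  | (i + 1) => (hK.kerPowK i).kerMulK hK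

lemma opCLM_kerPow (hK : IsKer K) : ∀ i, opCLM (hK.kerPowK i) = (opCLM hK) ^ (i + 1)
  | 0 => (pow_one _).symm
  | (i + 1) => by
    have h : opCLM (hK.kerPowK (i + 1)) = opCLM ((hK.kerPowK i).kerMulK hK) := rfl
    rw [h, opCLM_kerMul (hK.kerPowK i) hK, opCLM_kerPow hK i]
    exact (pow_succ _ _).symm

lemma IsKer.subK (hK : IsKer K) (hL : IsKer L) : IsKer (fun x y => K x y - L x y) := by
  constructor
  · show Measurable fun p : ℝ × ℝ => Function.uncurry K p - Function.uncurry L p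
    exact hK.meas.sub hL.meas
  · exact ⟨hK.C + hL.C, fun x y => le_trans (abs_sub _ _)
      (add_le_add (hK.le_C x y) (hL.le_C x y))⟩

lemma opCLM_sub (hK : IsKer K) (hL : IsKer L) :
    opCLM (hK.subK hL) = opCLM hK - opCLM hL := by
  ext f
  have h0 : (opCLM hK - opCLM hL) f = opCLM hK f - opCLM hL f := rfl
  rw [h0]
  refine (opCLM_coe _ f).trans (Filter.EventuallyEq.trans ?_
    (Lp.coeFn_sub (opCLM hK f) (opCLM hL f)).symm)
  filter_upwards [opCLM_coe hK f, opCLM_coe hL f] with x h1 h2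
  show opFun (fun x y => K x y - L x y) (⇑f) x = ((opCLM hK f) x - (opCLM hL f) x)
  rw [h1, h2]
  have hstep : ∀ y : ℝ, ((K x y - L x y : ℝ) : ℂ) * f y
      = (K x y : ℂ) * f y - (L x y : ℂ) * f y := fun y => by push_cast; ring
  rw [opFun, integral_congr_ae (Filter.Eventually.of_forall hstep),
    integral_sub (integrable_kmul hK (integrable_H f) x)
      (integrable_kmul hL (integrable_H f) x)]
  rfl

lemma IsKer.kerPolyK (hK : IsKer K) (n : ℕ) (a : Fin n → ℝ) : IsKer (kerPoly n a K) := by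
  constructor
  · show Measurable fun p : ℝ × ℝ => ∑ i, a i * kerPow K i p.1 p.2
    refine Finset.measurable_sum Finset.univ (fun i _ => ?_)
    exact measurable_const.mul ((hK.kerPowK i).meas)
  · refine ⟨∑ i, |a i| * (hK.kerPowK i).C, fun x y => ?_⟩
    refine le_trans (Finset.abs_sum_le_sum_abs _ _) (Finset.sum_le_sum fun i _ => ?_)
    rw [abs_mul]
    exact mul_le_mul_of_nonneg_left ((hK.kerPowK i).le_C x y) (abs_nonneg _)

lemma Lp_coeFn_sum {ι : Type*} (s : Finset ι) (g : ι → H) :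
    ⇑(∑ i ∈ s, g i) =ᵐ[μI] fun x => ∑ i ∈ s, g i x := by
  classical
  induction s using Finset.induction_on with
  | empty =>
    simp only [Finset.sum_empty]
    exact Lp.coeFn_zero ℂ 2 μI
  | insert _ _ ha ih =>
    rename_i b s
    rw [Finset.sum_insert ha]
    filter_upwards [Lp.coeFn_add (g b) (∑ i ∈ s, g i), ih] with x h1 h2
    rw [h1, Pi.add_apply, h2, Finset.sum_insert ha]

lemma opCLM_kerPoly_aux (hK : IsKer K) (n : ℕ) (a : Fin n → ℝ) :
    opCLM (hK.kerPolyK n a) = ∑ i, a i • opCLM (hK.kerPowK i) := by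
  ext f
  have h0 : (∑ i, a i • opCLM (hK.kerPowK i)) f = ∑ i, a i • (opCLM (hK.kerPowK i) f) := by
    simp
  rw [h0]
  refine (opCLM_coe _ f).trans ?_
  have hA : ∀ x : ℝ, opFun (kerPoly n a K) (⇑f) x
      = ∑ i, (a i : ℂ) * opFun (kerPow K i) (⇑f) x := by
    intro x
    have hs1 : opFun (kerPoly n a K) (⇑f) x
        = ∫ y, ∑ i, (a i : ℂ) * ((kerPow K i x y : ℂ) * f y) ∂μI := by
      refine integral_congr_ae (Filter.Eventually.of_forall fun y => ?_)
      show ((kerPoly n a K x y : ℝ) : ℂ) * f y = ∑ i, (a i : ℂ) * ((kerPow K i x y : ℂ) * f y)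
      rw [kerPoly]
      push_cast
      rw [Finset.sum_mul]
      exact Finset.sum_congr rfl fun i _ => mul_assoc _ _ _
    rw [hs1, integral_finset_sum (Finset.univ : Finset (Fin n))
      (fun i _ => (integrable_kmul (hK.kerPowK i) (integrable_H f) x).const_mul _)]
    exact Finset.sum_congr rfl fun i _ => integral_const_mul _ _
  have hall : ∀ᵐ x ∂μI, ∀ i, ⇑(opCLM (hK.kerPowK i) f) x = opFun (kerPow K i) (⇑f) x :=
    ae_all_iff.mpr fun i => opCLM_coe _ f
  have hsm : ∀ᵐ x ∂μI, ∀ i, ⇑(a i • opCLM (hK.kerPowK i) f) x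
      = (a i : ℂ) * ⇑(opCLM (hK.kerPowK i) f) x :=
    ae_all_iff.mpr fun i => (Lp.coeFn_smul (a i) (opCLM (hK.kerPowK i) f)).mono fun x hx => by
      rw [hx, Pi.smul_apply, Complex.real_smul]
  filter_upwards [hall, Lp_coeFn_sum Finset.univ (fun i => a i • opCLM (hK.kerPowK i) f), hsm]
    with x h1 h2 h3
  rw [hA x, h2]
  exact Finset.sum_congr rfl fun i _ => by rw [h3 i, h1 i]

lemma opCLM_kerPoly (hK : IsKer K) (n : ℕ) (a : Fin n → ℝ) :
    opCLM (hK.kerPolyK n a) = ∑ i, a i • (opCLM hK) ^ ((i : ℕ) + 1) := by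
  rw [opCLM_kerPoly_aux hK n a]
  exact Finset.sum_congr rfl fun i _ => by rw [opCLM_kerPow hK i]

/-- An integral operator which vanishes has a.e. vanishing kernel. -/
lemma kernel_ae_zero (hK : IsKer K) (h : opCLM hK = 0) :
    (fun p : ℝ × ℝ => K p.1 p.2) =ᵐ[μI.prod μI] 0 := by
  have hKm : AEStronglyMeasurable (fun p : ℝ × ℝ => K p.1 p.2) (μI.prod μI) :=
    hK.meas.aestronglyMeasurable
  have hInt : Integrable (fun p : ℝ × ℝ => K p.1 p.2) (μI.prod μI) := by
    refine Integrable.mono' (integrable_const hK.C) hKm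
      (Filter.Eventually.of_forall fun p => ?_)
    rw [Real.norm_eq_abs]; exact hK.le_C _ _
  have hrect : ∀ A B : Set ℝ, MeasurableSet A → MeasurableSet B →
      ∫ p in A ×ˢ B, K p.1 p.2 ∂(μI.prod μI) = 0 := by
    intro A B hA hB
    have hμB : μI B ≠ ⊤ := (measure_lt_top μI B).ne
    set g : H := indicatorConstLp 2 hB hμB (1 : ℂ) with hg
    have h1 : ⇑(opCLM hK g) =ᵐ[μI] 0 := by
      rw [h]
      exact Lp.coeFn_zero ℂ 2 μI
    have h2 : opFun K (⇑g) =ᵐ[μI] 0 := (opCLM_coe hK g).symm.trans h1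
    have h3 : ∀ᵐ x ∂μI, ∫ y in B, K x y ∂μI = 0 := by
      filter_upwards [h2] with x hx
      have hgx : (fun y => (K x y : ℂ) * g y)
          =ᵐ[μI] fun y => B.indicator (fun y' => (K x y' : ℂ)) y := by
        filter_upwards [indicatorConstLp_coeFn (p := 2) (hs := hB) (hμs := hμB) (c := (1:ℂ))]
          with y hy
        rw [hy]
        by_cases hyB : y ∈ B
        · simp [Set.indicator_of_mem hyB]
        · simp [Set.indicator_of_notMem hyB]
      have h4 : opFun K (⇑g) x = ∫ y in B, (K x y : ℂ) ∂μI := by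
        rw [opFun, integral_congr_ae hgx, integral_indicator hB]
      have h5 : ((∫ y in B, K x y ∂μI : ℝ) : ℂ) = 0 := by
        have h6 : ((∫ y in B, K x y ∂μI : ℝ) : ℂ) = ∫ y in B, ((K x y : ℝ) : ℂ) ∂μI :=
          integral_ofReal.symm
        rw [h6, ← h4, hx]
        rfl
      exact_mod_cast h5
    have h4 : ∫ x in A, (∫ y in B, K x y ∂μI) ∂μI = 0 := by
      rw [setIntegral_congr_ae hA (h3.mono fun x hx _ => hx)]
      simp
    have h5 : Integrable (fun p : ℝ × ℝ => K p.1 p.2) ((μI.restrict A).prod (μI.restrict B)) := by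
      rw [Measure.prod_restrict]
      exact hInt.integrableOn
    rw [← Measure.prod_restrict A B, integral_prod _ h5]
    exact h4
  have hall : ∀ S : Set (ℝ × ℝ), MeasurableSet S →
      ∫ p in S, K p.1 p.2 ∂(μI.prod μI) = 0 := by
    have huniv : ∫ p, K p.1 p.2 ∂(μI.prod μI) = 0 := by
      have := hrect Set.univ Set.univ MeasurableSet.univ MeasurableSet.univ
      simpa [Set.univ_prod_univ] using this
    intro S hS
    refine MeasurableSpace.induction_on_inter
      (C := fun S _ => ∫ p in S, K p.1 p.2 ∂(μI.prod μI) = 0)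
      generateFrom_prod.symm isPiSystem_prod (by simp) ?_ ?_ ?_ S hS
    · rintro t ⟨A, hA, B, hB, rfl⟩
      exact hrect A B hA hB
    · intro t ht h0
      have hadd := integral_add_compl ht hInt
      rw [h0, huniv] at hadd
      linarith
    · intro g hd hm h0
      rw [integral_iUnion hm hd hInt.integrableOn]
      simp [h0]
  have := Integrable.ae_eq_of_forall_setIntegral_eq (fun p : ℝ × ℝ => K p.1 p.2) 0 hInt
    (integrable_zero _ _ _) (fun s hs _ => by rw [hall s hs]; simp)
  exact this

end St3

namespace St3

/-- Truncation of a kernel to `[0,1]²`. -/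
def trunc (U : ℝ → ℝ → ℝ) : ℝ → ℝ → ℝ :=
  fun x y => if x ∈ I01 ∧ y ∈ I01 then U x y else 0

lemma trunc_isKer {U : ℝ → ℝ → ℝ} (hU : memW U) : IsKer (trunc U) := by
  obtain ⟨hm, hsym, C, hC⟩ := hU
  constructor
  · have he : Function.uncurry (trunc U) = (I01 ×ˢ I01).indicator (Function.uncurry U) := by
      funext p
      by_cases hp : p.1 ∈ I01 ∧ p.2 ∈ I01
      · rw [Set.indicator_of_mem (Set.mem_prod.mpr hp)]
        exact if_pos hp
      · rw [Set.indicator_of_notMem (fun hmem => hp ⟨hmem.1, hmem.2⟩)]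
        exact if_neg hp
    rw [he]
    exact hm.indicator (I01_meas.prod I01_meas)
  · refine ⟨max C 0, fun x y => ?_⟩
    by_cases hp : x ∈ I01 ∧ y ∈ I01
    · rw [trunc, if_pos hp]
      exact le_trans (hC x hp.1 y hp.2) (le_max_left _ _)
    · rw [trunc, if_neg hp]
      simp

lemma trunc_symm {U : ℝ → ℝ → ℝ} (hU : memW U) : ∀ x y, trunc U x y = trunc U y x := by
  intro x y
  rw [trunc, trunc]
  by_cases hp : x ∈ I01 ∧ y ∈ I01
  · rw [if_pos hp, if_pos ⟨hp.2, hp.1⟩]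
    exact hU.2.1 x hp.1 y hp.2
  · rw [if_neg hp, if_neg (fun h' => hp ⟨h'.2, h'.1⟩)]

lemma trunc_eqOn {U : ℝ → ℝ → ℝ} : ∀ x ∈ I01, ∀ y ∈ I01, trunc U x y = U x y :=
  fun x hx y hy => if_pos ⟨hx, hy⟩

lemma kerPow_trunc {U : ℝ → ℝ → ℝ} :
    ∀ i, ∀ x ∈ I01, ∀ y ∈ I01, kerPow (trunc U) i x y = kerPow U i x y
  | 0 => fun x hx y hy => trunc_eqOn x hx y hy
  | (i + 1) => fun x hx y hy => by
    show kerMul (kerPow (trunc U) i) (trunc U) x y = kerMul (kerPow U i) U x y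
    rw [kerMul, kerMul]
    refine setIntegral_congr_fun I01_meas (fun z hz => ?_)
    rw [kerPow_trunc i x hx z hz, trunc_eqOn z hz y hy]

lemma kerPoly_trunc {U : ℝ → ℝ → ℝ} (n : ℕ) (a : Fin n → ℝ) :
    ∀ x ∈ I01, ∀ y ∈ I01, kerPoly n a (trunc U) x y = kerPoly n a U x y := by
  intro x hx y hy
  rw [kerPoly, kerPoly]
  exact Finset.sum_congr rfl fun i _ => by rw [kerPow_trunc i x hx y hy]

lemma restrict_sq : (volume : Measure (ℝ × ℝ)).restrict (I01 ×ˢ I01) = μI.prod μI := by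
  rw [Measure.volume_eq_prod, ← Measure.prod_restrict]

/-- Injectivity of polynomials of selfadjoint elements in a C*-algebra, for a
polynomial inducing a bijection of `ℝ`. -/
lemma abstract_inj {A : Type*} [CStarAlgebra A] (n : ℕ) (a : Fin n → ℝ)
    (hbij : Function.Bijective fun t : ℝ => ∑ i, a i * t ^ ((i : ℕ) + 1))
    (T S : A) (hT : IsSelfAdjoint T) (hS : IsSelfAdjoint S)
    (h : ∑ i, a i • T ^ ((i : ℕ) + 1) = ∑ i, a i • S ^ ((i : ℕ) + 1)) : T = S := by
  have hqc : Continuous (fun t : ℝ => ∑ i, a i * t ^ ((i : ℕ) + 1)) := by fun_prop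
  set q : ℝ → ℝ := fun t : ℝ => ∑ i, a i * t ^ ((i : ℕ) + 1) with hq
  obtain ⟨g, hgc, hgq⟩ : ∃ g : ℝ → ℝ, Continuous g ∧ ∀ t, g (q t) = t := by
    rcases hqc.strictMono_of_inj hbij.1 with hm | hm
    · exact ⟨(hm.orderIsoOfSurjective q hbij.2).symm, OrderIso.continuous _,
        fun t => (hm.orderIsoOfSurjective q hbij.2).symm_apply_apply t⟩
    · have hm' : StrictMono (fun t => -(q t)) := fun x y hxy => neg_lt_neg (hm hxy)
      have hsurj : Function.Surjective (fun t => -(q t)) := fun y => by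
        obtain ⟨t, ht⟩ := hbij.2 (-y); exact ⟨t, by simp [ht]⟩
      exact ⟨fun s => (hm'.orderIsoOfSurjective _ hsurj).symm (-s),
        (OrderIso.continuous _).comp continuous_neg,
        fun t => (hm'.orderIsoOfSurjective _ hsurj).symm_apply_apply t⟩
  have key : ∀ (X : A), IsSelfAdjoint X → cfc q X = ∑ i, a i • X ^ ((i : ℕ) + 1) := by
    intro X hX
    have h1 : cfc q X = ∑ i : Fin n, cfc (fun t : ℝ => a i • t ^ ((i : ℕ) + 1)) X := by
      rw [← cfc_sum_univ _ X (fun i => by fun_prop)]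
      exact cfc_congr (fun t _ => by simp [smul_eq_mul, hq])
    rw [h1]
    refine Finset.sum_congr rfl (fun i _ => ?_)
    rw [cfc_smul (a i) (fun t : ℝ => t ^ ((i : ℕ) + 1)) X (by fun_prop), cfc_pow_id X]
  have h2 : cfc q T = cfc q S := by rw [key T hT, key S hS, h]
  calc T = cfc (g ∘ q) T := by rw [show g ∘ q = id from funext hgq, cfc_id ℝ T]
    _ = cfc g (cfc q T) := cfc_comp g q T hT (hgc.continuousOn) (hqc.continuousOn)
    _ = cfc g (cfc q S) := by rw [h2]
    _ = cfc (g ∘ q) S := (cfc_comp g q S hS (hgc.continuousOn) (hqc.continuousOn)).symm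
    _ = S := by rw [show g ∘ q = id from funext hgq, cfc_id ℝ S]

end St3

open St3 in
/-- if `p` is a real polynomial with zero constant term which is a
bijection of `ℝ`, then `U ↦ p(U)` (kernel-operator substitution) is injective on `𝒲`
up to a.e. equality on `[0,1]²`. -/
theorem statement3 (n : ℕ) (a : Fin n → ℝ)
    (hbij : Function.Bijective fun t : ℝ => ∑ i, a i * t ^ ((i : ℕ) + 1))
    (U₁ U₂ : ℝ → ℝ → ℝ) (h₁ : memW U₁) (h₂ : memW U₂)
    (heq : ∀ᵐ p : ℝ × ℝ ∂(volume.restrict (I01 ×ˢ I01)),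
      kerPoly n a U₁ p.1 p.2 = kerPoly n a U₂ p.1 p.2) :
    ∀ᵐ p : ℝ × ℝ ∂(volume.restrict (I01 ×ˢ I01)), U₁ p.1 p.2 = U₂ p.1 p.2 := by
  classical
  have hV₁ : IsKer (trunc U₁) := trunc_isKer h₁
  have hV₂ : IsKer (trunc U₂) := trunc_isKer h₂
  have hmem : ∀ᵐ p : ℝ × ℝ ∂(μI.prod μI), p ∈ I01 ×ˢ I01 := by
    rw [← restrict_sq]
    exact ae_restrict_mem (I01_meas.prod I01_meas)
  have heq2 : ∀ᵐ p : ℝ × ℝ ∂(μI.prod μI),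
      kerPoly n a U₁ p.1 p.2 = kerPoly n a U₂ p.1 p.2 := by
    rw [← restrict_sq]; exact heq
  have heq' : (fun p : ℝ × ℝ => kerPoly n a (trunc U₁) p.1 p.2)
      =ᵐ[μI.prod μI] fun p => kerPoly n a (trunc U₂) p.1 p.2 := by
    filter_upwards [heq2, hmem] with p hp hpm
    rw [kerPoly_trunc n a p.1 hpm.1 p.2 hpm.2, hp,
      ← kerPoly_trunc (U := U₂) n a p.1 hpm.1 p.2 hpm.2]
  have hopeq : opCLM (hV₁.kerPolyK n a) = opCLM (hV₂.kerPolyK n a) :=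
    opCLM_congr _ _ heq'
  rw [opCLM_kerPoly hV₁, opCLM_kerPoly hV₂] at hopeq
  have hTeq : opCLM hV₁ = opCLM hV₂ :=
    abstract_inj n a hbij _ _ (opCLM_isSelfAdjoint hV₁ (trunc_symm h₁))
      (opCLM_isSelfAdjoint hV₂ (trunc_symm h₂)) hopeq
  have hzero : opCLM (hV₁.subK hV₂) = 0 := by
    rw [opCLM_sub hV₁ hV₂, hTeq, sub_self]
  have hae := kernel_ae_zero _ hzero
  rw [restrict_sq]
  filter_upwards [hae, hmem] with p hp hpm
  have hsub : trunc U₁ p.1 p.2 - trunc U₂ p.1 p.2 = 0 := hp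
  rw [trunc_eqOn p.1 hpm.1 p.2 hpm.2, trunc_eqOn p.1 hpm.1 p.2 hpm.2] at hsub
  linarith
end
end

section
/- Let F be a finite bipartite graph on vertex set {1,…,n} whose edge set is partitioned into two sets E′ (blue edges) and E″ (red edges), and let W ∈ 𝒲. (a) If ∏_{ij∈E′} W(x_i,x_j) · ∏_{ij∈E″} (1 − W(x_i,x_j)) = 0 for almost every (x₁,…,x_n) ∈ [0,1]ⁿ, then W(x,y) ∈ {0,1} for almost every (x,y) ∈ [0,1]². (b) If moreover W ∈ 𝒲₀, then the single equation ∫_{[0,1]ⁿ} ∏_{ij∈E′} W(x_i,x_j) ∏_{ij∈E″} (1 − W(x_i,x_j)) dx₁⋯dx_n = 0 already implies W(x,y) ∈ {0,1} almost everywhere. -/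
open MeasureTheory
open scoped Classical

noncomputable section

open Set Metric Filter
open scoped ENNReal Topology

lemma map_pair_restrict_pi {n : ℕ} (J : Fin n → Set ℝ) (hJm : ∀ k, MeasurableSet (J k))
    (hJf : ∀ k, volume (J k) ≠ ⊤) {i j : Fin n} (hij : i ≠ j) (D : Set (ℝ × ℝ))
    (hD : MeasurableSet D) :
    (volume.restrict (Set.univ.pi J)) ((fun x : Fin n → ℝ => (x i, x j)) ⁻¹' D)
      = (∏ k ∈ (Finset.univ.erase i).erase j, volume (J k)) *
        ((volume.restrict (J i)).prod (volume.restrict (J j))) D := by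
  classical
  set c : ℝ≥0∞ := ∏ k ∈ (Finset.univ.erase i).erase j, volume (J k) with hc
  have hcne : c ≠ ⊤ := by
    rw [hc]
    exact (ENNReal.prod_lt_top (fun k _ => (hJf k).lt_top)).ne
  have hf : Measurable (fun x : Fin n → ℝ => (x i, x j)) :=
    (measurable_pi_apply i).prodMk (measurable_pi_apply j)
  haveI : IsFiniteMeasure (volume.restrict (J i)) := by
    constructor
    simp only [Measure.restrict_apply_univ]
    exact (hJf i).lt_top
  haveI : IsFiniteMeasure (volume.restrict (J j)) := by
    constructor
    simp only [Measure.restrict_apply_univ]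
    exact (hJf j).lt_top
  haveI : IsFiniteMeasure (c • volume.restrict (J i)) := by
    constructor
    simp only [Measure.smul_apply, smul_eq_mul, Measure.restrict_apply_univ]
    exact ENNReal.mul_lt_top hcne.lt_top (hJf i).lt_top
  have key : (c • volume.restrict (J i)).prod (volume.restrict (J j))
      = Measure.map (fun x : Fin n → ℝ => (x i, x j)) (volume.restrict (Set.univ.pi J)) := by
    refine Measure.prod_eq (fun s t hs ht => ?_)
    rw [Measure.map_apply hf (hs.prod ht)]
    have hpre : (fun x : Fin n → ℝ => (x i, x j)) ⁻¹' (s ×ˢ t) ∩ Set.univ.pi J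
        = Set.univ.pi (fun k => if k = i then J i ∩ s else if k = j then J j ∩ t else J k) := by
      ext x
      simp only [Set.mem_inter_iff, Set.mem_preimage, Set.mem_prod, Set.mem_pi, Set.mem_univ,
        forall_true_left, true_implies]
      constructor
      · rintro ⟨⟨hxs, hxt⟩, hx⟩ k
        by_cases hki : k = i
        · subst hki; simp [hxs, hx k]
        · by_cases hkj : k = j
          · subst hkj; simp [hki, hxt, hx k]
          · simp [hki, hkj, hx k]
      · intro h
        refine ⟨⟨?_, ?_⟩, fun k => ?_⟩
        · have := h i; simp at this; exact this.2
        · have := h j; simp [hij.symm] at this; exact this.2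
        · have := h k
          by_cases hki : k = i
          · subst hki; simp at this; exact this.1
          · by_cases hkj : k = j
            · subst hkj; simp [hki] at this; exact this.1
            · simpa [hki, hkj] using this
    rw [Measure.restrict_apply (hf (hs.prod ht)), hpre, volume_pi_pi]
    have hmem_i : i ∈ Finset.univ := Finset.mem_univ i
    have hmem_j : j ∈ Finset.univ.erase i := Finset.mem_erase.2 ⟨hij.symm, Finset.mem_univ j⟩
    rw [← Finset.mul_prod_erase _ _ hmem_i, ← Finset.mul_prod_erase _ _ hmem_j]
    have h1 : ∀ k ∈ (Finset.univ.erase i).erase j,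
        volume (if k = i then J i ∩ s else if k = j then J j ∩ t else J k) = volume (J k) := by
      intro k hk
      have hkj : k ≠ j := (Finset.mem_erase.1 hk).1
      have hki : k ≠ i := (Finset.mem_erase.1 (Finset.mem_erase.1 hk).2).1
      simp [hki, hkj]
    rw [Finset.prod_congr rfl h1]
    simp only [if_pos rfl, if_neg hij.symm, if_true]
    rw [Measure.smul_apply, Measure.restrict_apply hs, Measure.restrict_apply ht]
    simp only [smul_eq_mul, ← hc]
    rw [Set.inter_comm s, Set.inter_comm t]
    ring
  have : (volume.restrict (Set.univ.pi J)) ((fun x : Fin n → ℝ => (x i, x j)) ⁻¹' D)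
      = Measure.map (fun x : Fin n → ℝ => (x i, x j)) (volume.restrict (Set.univ.pi J)) D := by
    rw [Measure.map_apply hf hD]
  rw [this, ← key, Measure.prod_apply hD, Measure.prod_apply hD, lintegral_smul_measure, smul_eq_mul]

lemma exists_dense_ball (A : Set (ℝ × ℝ)) (hpos : volume A ≠ 0)
    (ε : ℝ≥0∞) (hε0 : ε ≠ 0) :
    ∃ (q : ℝ × ℝ) (r : ℝ), 0 < r ∧
      (1 - ε) * volume (closedBall q r) ≤ volume (A ∩ closedBall q r) := by
  have hres : volume.restrict A ≠ 0 := by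
    intro h
    apply hpos
    have := congrArg (fun μ : Measure (ℝ × ℝ) => μ Set.univ) h
    simpa [Measure.restrict_apply_univ] using this
  haveI : (ae (volume.restrict A)).NeBot := ae_neBot.2 hres
  have hae := Besicovitch.ae_tendsto_measure_inter_div (volume : Measure (ℝ × ℝ)) A
  obtain ⟨q, hq⟩ := hae.exists
  have hlt : (1 : ℝ≥0∞) - ε < 1 := ENNReal.sub_lt_self ENNReal.one_ne_top one_ne_zero hε0
  have hmem : Set.Ioi ((1 : ℝ≥0∞) - ε) ∈ 𝓝 (1 : ℝ≥0∞) := isOpen_Ioi.mem_nhds hlt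
  have hev := (hq.eventually hmem).and self_mem_nhdsWithin
  obtain ⟨r, hr1, hr2⟩ := hev.exists
  refine ⟨q, r, hr2, ?_⟩
  have hb0 : volume (closedBall q r) ≠ 0 := (measure_closedBall_pos _ q hr2).ne'
  have hbt : volume (closedBall q r) ≠ ⊤ := measure_closedBall_lt_top.ne
  have := (ENNReal.lt_div_iff_mul_lt (Or.inl hb0) (Or.inl hbt)).1 hr1
  exact this.le

lemma I01_measurable : MeasurableSet I01 := measurableSet_Icc

lemma volume_I01 : volume I01 = 1 := by
  simp [I01, Real.volume_Icc]

lemma cube_measurable (n : ℕ) : MeasurableSet (cube n) :=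
  MeasurableSet.univ_pi fun _ => I01_measurable

theorem partA (n : ℕ) (B R : SimpleGraph (Fin n))
    (hbip : ∃ f : Fin n → Bool, ∀ i j, B.Adj i j ∨ R.Adj i j → f i ≠ f j)
    (W : ℝ → ℝ → ℝ) (hW : memW W)
    (h0 : ∀ᵐ x ∂(volume.restrict (cube n)),
        (∏ p ∈ Finset.univ.filter (fun p : Fin n × Fin n => p.1 < p.2 ∧ B.Adj p.1 p.2),
            W (x p.1) (x p.2)) *
        (∏ p ∈ Finset.univ.filter (fun p : Fin n × Fin n => p.1 < p.2 ∧ R.Adj p.1 p.2),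
            (1 - W (x p.1) (x p.2))) = 0) :
    ∀ᵐ q : ℝ × ℝ ∂(volume.restrict (I01 ×ˢ I01)), W q.1 q.2 = 0 ∨ W q.1 q.2 = 1 := by
  classical
  by_contra hC
  obtain ⟨f, hf⟩ := hbip
  set A : Set (ℝ × ℝ) := {q | W q.1 q.2 ≠ 0 ∧ W q.1 q.2 ≠ 1} ∩ (I01 ×ˢ I01) with hA
  have hAm : MeasurableSet A := by
    refine MeasurableSet.inter ?_ (I01_measurable.prod I01_measurable)
    have h1 : MeasurableSet {q : ℝ × ℝ | Function.uncurry W q = 0} :=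
      hW.1 (measurableSet_singleton 0)
    have h2 : MeasurableSet {q : ℝ × ℝ | Function.uncurry W q = 1} :=
      hW.1 (measurableSet_singleton 1)
    exact (h1.compl).inter (h2.compl)
  have hApos : volume A ≠ 0 := by
    rw [ae_iff] at hC
    intro h
    apply hC
    rw [Measure.restrict_apply' (I01_measurable.prod I01_measurable)]
    convert h using 2
    rw [hA]
    ext q
    simp only [Set.mem_inter_iff, Set.mem_setOf_eq, not_or]
  -- swap invariance of A
  have hswap : Prod.swap ⁻¹' A = A := by
    ext q
    simp only [hA, Set.mem_preimage, Set.mem_inter_iff, Set.mem_setOf_eq, Prod.fst_swap,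
      Prod.snd_swap, Set.mem_prod]
    constructor
    · rintro ⟨⟨h1, h2⟩, h3, h4⟩
      rw [hW.2.1 _ h3 _ h4] at h1 h2
      exact ⟨⟨h1, h2⟩, h4, h3⟩
    · rintro ⟨⟨h1, h2⟩, h3, h4⟩
      rw [hW.2.1 _ h3 _ h4] at h1 h2
      exact ⟨⟨h1, h2⟩, h4, h3⟩
  set Eb : Finset (Fin n × Fin n) :=
    Finset.univ.filter (fun p : Fin n × Fin n => p.1 < p.2 ∧ B.Adj p.1 p.2) with hEb
  set Er : Finset (Fin n × Fin n) :=
    Finset.univ.filter (fun p : Fin n × Fin n => p.1 < p.2 ∧ R.Adj p.1 p.2) with hEr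
  set ES : Finset (Fin n × Fin n) := Eb ∪ Er with hES
  set m : ℕ := ES.card with hm
  set ε : ℝ≥0∞ := ((2 * m + 2 : ℕ) : ℝ≥0∞)⁻¹ with hε
  have hε0 : ε ≠ 0 := ENNReal.inv_ne_zero.2 (ENNReal.natCast_ne_top _)
  have hεhalf : ε ≤ 2⁻¹ := by
    rw [hε]
    have h2 : ((2 : ℕ) : ℝ≥0∞) ≤ ((2 * m + 2 : ℕ) : ℝ≥0∞) := Nat.cast_le.2 (by omega)
    have := ENNReal.inv_le_inv' h2
    simpa using this
  have hε1 : ε ≤ 1 := hεhalf.trans (ENNReal.inv_le_one.2 one_le_two)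
  obtain ⟨q, r, hr, hdens⟩ := exists_dense_ball A hApos ε hε0
  set t : ℝ≥0∞ := volume (closedBall q r) with ht
  have ht0 : t ≠ 0 := (measure_closedBall_pos _ q hr).ne'
  have htt : t ≠ ⊤ := measure_closedBall_lt_top.ne
  set J1 : Set ℝ := closedBall q.1 r ∩ I01 with hJ1
  set J2 : Set ℝ := closedBall q.2 r ∩ I01 with hJ2
  set J : Fin n → Set ℝ := fun k => if f k then J2 else J1 with hJdef
  have hJm : ∀ k, MeasurableSet (J k) := by
    intro k
    rw [hJdef]
    by_cases h : f k <;> simp [h, hJ1, hJ2, measurableSet_closedBall.inter I01_measurable]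
  have hJle : ∀ k, volume (J k) ≤ 1 := by
    intro k
    have h1 : volume J1 ≤ 1 := by
      rw [← volume_I01]; exact measure_mono Set.inter_subset_right
    have h2 : volume J2 ≤ 1 := by
      rw [← volume_I01]; exact measure_mono Set.inter_subset_right
    rw [hJdef]; by_cases h : f k <;> simp [h, h1, h2]
  have hJf : ∀ k, volume (J k) ≠ ⊤ := fun k => ((hJle k).trans_lt ENNReal.one_lt_top).ne
  have hJsubI : ∀ k, J k ⊆ I01 := by
    intro k
    rw [hJdef]
    by_cases h : f k <;> simp [h, hJ1, hJ2, Set.inter_subset_right]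
  have hball : closedBall q r = closedBall q.1 r ×ˢ closedBall q.2 r := by
    rw [closedBall_prod_same]
  have hsubJ : A ∩ closedBall q r ⊆ J1 ×ˢ J2 := by
    rintro ⟨u, v⟩ ⟨hqa, hqb⟩
    have hI : (u, v) ∈ I01 ×ˢ I01 := hqa.2
    rw [hball] at hqb
    exact ⟨⟨hqb.1, hI.1⟩, ⟨hqb.2, hI.2⟩⟩
  have hvolprod : ∀ s u : Set ℝ, volume (s ×ˢ u) = volume s * volume u := by
    intro s u
    rw [Measure.volume_eq_prod, Measure.prod_prod]
  have hJ12 : 2⁻¹ * t ≤ volume J1 * volume J2 := by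
    have h1 : (1 - ε) * t ≤ volume (A ∩ closedBall q r) := hdens
    have h2 : volume (A ∩ closedBall q r) ≤ volume J1 * volume J2 := by
      rw [← hvolprod]; exact measure_mono hsubJ
    refine le_trans (le_trans ?_ h1) h2
    apply mul_le_mul_left
    have : (1 : ℝ≥0∞) - 2⁻¹ ≤ 1 - ε := tsub_le_tsub_left hεhalf 1
    calc (2 : ℝ≥0∞)⁻¹ = 1 - 2⁻¹ := ENNReal.one_sub_inv_two.symm
      _ ≤ 1 - ε := this
  have hJ10 : volume J1 ≠ 0 := by
    intro h
    have h' := hJ12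
    rw [h, zero_mul] at h'
    have h'' : (2 : ℝ≥0∞)⁻¹ * t = 0 := le_antisymm h' zero_le
    rcases mul_eq_zero.1 h'' with h3 | h3
    · exact (ENNReal.inv_ne_zero.2 ENNReal.ofNat_ne_top) h3
    · exact ht0 h3
  have hJ20 : volume J2 ≠ 0 := by
    intro h
    have h' := hJ12
    rw [h, mul_zero] at h'
    have h'' : (2 : ℝ≥0∞)⁻¹ * t = 0 := le_antisymm h' zero_le
    rcases mul_eq_zero.1 h'' with h3 | h3
    · exact (ENNReal.inv_ne_zero.2 ENNReal.ofNat_ne_top) h3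
    · exact ht0 h3
  have htle : t ≤ 2 * (volume J1 * volume J2) := by
    calc t = 2 * (2⁻¹ * t) := by
          rw [← mul_assoc, ENNReal.mul_inv_cancel two_ne_zero ENNReal.ofNat_ne_top, one_mul]
      _ ≤ 2 * (volume J1 * volume J2) := mul_le_mul_right hJ12 2
  have hdiff : volume (closedBall q r \ A) ≤ ε * t := by
    have heq : volume (closedBall q r ∩ A) + volume (closedBall q r \ A) = t :=
      measure_inter_add_diff _ hAm
    have h1 : (1 - ε) * t + volume (closedBall q r \ A) ≤ t := by
      have := add_le_add_left (show (1 - ε) * t ≤ volume (closedBall q r ∩ A) by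
        rw [Set.inter_comm]; exact hdens) (volume (closedBall q r \ A))
      rw [heq] at this
      exact this
    have h2 : volume (closedBall q r \ A) ≤ t - (1 - ε) * t :=
      ENNReal.le_sub_of_add_le_left
        (ENNReal.mul_ne_top (tsub_le_self.trans_lt ENNReal.one_lt_top).ne htt) h1
    refine h2.trans ?_
    have h3 : (1 - (1 - ε)) * t = 1 * t - (1 - ε) * t := ENNReal.sub_mul (fun _ _ => htt)
    rw [ENNReal.sub_sub_cancel ENNReal.one_ne_top hε1, one_mul] at h3
    exact h3.ge
  set P : ℝ≥0∞ := ∏ k, volume (J k) with hP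
  have hP0 : P ≠ 0 := by
    rw [hP, Finset.prod_ne_zero_iff]
    intro k _
    rw [hJdef]
    by_cases h : f k <;> simp [h, hJ10, hJ20]
  have hPt : P ≠ ⊤ := (ENNReal.prod_lt_top fun k _ => (hJf k).lt_top).ne
  set G : Set (Fin n → ℝ) := Set.univ.pi J with hG
  have hGm : MeasurableSet G := MeasurableSet.univ_pi hJm
  have hGvol : volume G = P := volume_pi_pi J
  have hGsub : G ⊆ cube n := fun x hx k _ => hJsubI k (hx k (Set.mem_univ k))
  set Bad : Fin n × Fin n → Set (Fin n → ℝ) :=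
    fun p => G ∩ ((fun x : Fin n → ℝ => (x p.1, x p.2)) ⁻¹' Aᶜ) with hBad
  -- bound on each bad set
  have hbadvol : ∀ p ∈ ES, volume (Bad p) ≤ 2 * ε * P := by
    intro p hp
    have hlt : p.1 < p.2 ∧ (B.Adj p.1 p.2 ∨ R.Adj p.1 p.2) := by
      rw [hES, Finset.mem_union, hEb, hEr] at hp
      rcases hp with hp | hp <;> simp only [Finset.mem_filter] at hp
      · exact ⟨hp.2.1, Or.inl hp.2.2⟩
      · exact ⟨hp.2.1, Or.inr hp.2.2⟩
    have hne : p.1 ≠ p.2 := hlt.1.ne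
    have hfne : f p.1 ≠ f p.2 := hf _ _ hlt.2
    have h1 : volume (Bad p) = (volume.restrict (Set.univ.pi J))
        ((fun x : Fin n → ℝ => (x p.1, x p.2)) ⁻¹' Aᶜ) := by
      rw [Measure.restrict_apply' hGm, hBad, Set.inter_comm]
    rw [h1, map_pair_restrict_pi J hJm hJf hne Aᶜ hAm.compl]
    have h2 : ((volume.restrict (J p.1)).prod (volume.restrict (J p.2))) Aᶜ
        = volume ((J p.1 ×ˢ J p.2) \ A) := by
      rw [Measure.prod_restrict, ← Measure.volume_eq_prod,
        Measure.restrict_apply' ((hJm p.1).prod (hJm p.2))]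
      rw [Set.inter_comm, Set.diff_eq]
    rw [h2]
    have hJJ : volume ((J p.1 ×ˢ J p.2) \ A) ≤ ε * t := by
      have hcb : (J1 ×ˢ J2) \ A ⊆ closedBall q r \ A := by
        apply Set.diff_subset_diff_left
        rw [hball]
        exact Set.prod_mono Set.inter_subset_left Set.inter_subset_left
      by_cases hfp : f p.1
      · -- J p.1 = J2, J p.2 = J1, use swap
        have hfp2 : ¬ f p.2 := fun h => hfne (by rw [hfp, h])
        have hJeq : J p.1 = J2 ∧ J p.2 = J1 := by
          constructor <;> simp [hJdef, hfp, hfp2]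
        rw [hJeq.1, hJeq.2]
        have hswapset : Prod.swap ⁻¹' ((J2 ×ˢ J1) \ A) = (J1 ×ˢ J2) \ A := by
          rw [Set.preimage_diff, hswap]
          congr 1
          ext x
          simp [Set.mem_prod, and_comm]
        have hmp : volume ((J2 ×ˢ J1) \ A) = volume ((J1 ×ˢ J2) \ A) := by
          have hmeas : MeasurableSet ((J2 ×ˢ J1) \ A) := by
            exact (((measurableSet_closedBall.inter I01_measurable)).prod
              ((measurableSet_closedBall.inter I01_measurable))).diff hAm
          have := (Measure.measurePreserving_swap (μ := (volume : Measure ℝ))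
            (ν := (volume : Measure ℝ))).measure_preimage hmeas.nullMeasurableSet
          rw [hswapset] at this
          rw [Measure.volume_eq_prod, ← this, ← Measure.volume_eq_prod]
        rw [hmp]
        exact (measure_mono hcb).trans hdiff
      · have hfp2 : f p.2 := by
          cases h2 : f p.2
          · exact absurd (by rw [h2]; cases h1 : f p.1; rfl; exact absurd h1 hfp) hfne
          · rfl
        have hJeq : J p.1 = J1 ∧ J p.2 = J2 := by
          constructor <;> simp [hJdef, hfp, hfp2]
        rw [hJeq.1, hJeq.2]
        exact (measure_mono hcb).trans hdiff
    have hcp : (∏ k ∈ (Finset.univ.erase p.1).erase p.2, volume (J k)) *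
        (volume (J p.1) * volume (J p.2)) = P := by
      rw [hP, ← Finset.mul_prod_erase _ _ (Finset.mem_univ p.1),
        ← Finset.mul_prod_erase _ _ (Finset.mem_erase.2 ⟨hne.symm, Finset.mem_univ p.2⟩)]
      ring
    have hJJ12 : volume (J p.1) * volume (J p.2) = volume J1 * volume J2 := by
      by_cases hfp : f p.1
      · have hfp2 : ¬ f p.2 := fun h => hfne (by rw [hfp, h])
        simp [hJdef, hfp, hfp2, mul_comm]
      · have hfp2 : f p.2 := by
          cases h2 : f p.2
          · exact absurd (by rw [h2]; cases h1 : f p.1; rfl; exact absurd h1 hfp) hfne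
          · rfl
        simp [hJdef, hfp, hfp2]
    calc (∏ k ∈ (Finset.univ.erase p.1).erase p.2, volume (J k)) * volume ((J p.1 ×ˢ J p.2) \ A)
        ≤ (∏ k ∈ (Finset.univ.erase p.1).erase p.2, volume (J k)) * (ε * t) :=
          mul_le_mul_right hJJ _
      _ = ε * ((∏ k ∈ (Finset.univ.erase p.1).erase p.2, volume (J k)) * t) := by ring
      _ ≤ ε * ((∏ k ∈ (Finset.univ.erase p.1).erase p.2, volume (J k)) *
            (2 * (volume J1 * volume J2))) := by
          exact mul_le_mul_right (mul_le_mul_right htle _) ε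
      _ = 2 * ε * ((∏ k ∈ (Finset.univ.erase p.1).erase p.2, volume (J k)) *
            (volume (J p.1) * volume (J p.2))) := by rw [hJJ12]; ring
      _ = 2 * ε * P := by rw [hcp]
  -- total bad measure
  have htotal : volume (⋃ p ∈ ES, Bad p) ≤ (m : ℝ≥0∞) * (2 * ε * P) := by
    refine (measure_biUnion_finset_le ES Bad).trans ?_
    calc ∑ p ∈ ES, volume (Bad p) ≤ ∑ _p ∈ ES, 2 * ε * P := Finset.sum_le_sum hbadvol
      _ = (m : ℝ≥0∞) * (2 * ε * P) := by rw [Finset.sum_const, hm, nsmul_eq_mul]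
  have hfrac : (m : ℝ≥0∞) * (2 * ε) < 1 := by
    rw [hε]
    have h1 : (m : ℝ≥0∞) * (2 * ((2 * m + 2 : ℕ) : ℝ≥0∞)⁻¹)
        = ((2 * m : ℕ) : ℝ≥0∞) / ((2 * m + 2 : ℕ) : ℝ≥0∞) := by
      rw [div_eq_mul_inv]
      push_cast
      ring
    rw [h1]
    have hN0 : ((2 * m + 2 : ℕ) : ℝ≥0∞) ≠ 0 := Nat.cast_ne_zero.2 (by omega)
    rw [ENNReal.div_lt_iff (Or.inl hN0) (Or.inl (ENNReal.natCast_ne_top _)), one_mul]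
    exact Nat.cast_lt.2 (by omega)
  have htotal2 : volume (⋃ p ∈ ES, Bad p) < P := by
    refine htotal.trans_lt ?_
    calc (m : ℝ≥0∞) * (2 * ε * P) = ((m : ℝ≥0∞) * (2 * ε)) * P := by ring
      _ < 1 * P := (ENNReal.mul_lt_mul_iff_left hP0 hPt).2 hfrac
      _ = P := one_mul P
  -- the good set has measure zero by h0, contradiction
  set G' : Set (Fin n → ℝ) := G \ ⋃ p ∈ ES, Bad p with hG'
  have hG'zero : volume G' = 0 := by
    rw [ae_iff] at h0
    rw [Measure.restrict_apply' (cube_measurable n)] at h0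
    refine measure_mono_null ?_ h0
    rintro x ⟨hxG, hxB⟩
    refine ⟨?_, hGsub hxG⟩
    simp only [Set.mem_setOf_eq]
    intro hzero
    rcases mul_eq_zero.1 hzero with hz | hz
    · rw [Finset.prod_eq_zero_iff] at hz
      obtain ⟨p, hp, hpz⟩ := hz
      have hpa : (x p.1, x p.2) ∈ A := by
        have hpe : p ∈ ES := by rw [hES, Finset.mem_union]; exact Or.inl hp
        by_contra hna
        exact hxB (Set.mem_biUnion hpe ⟨hxG, hna⟩)
      exact hpa.1.1 hpz
    · rw [Finset.prod_eq_zero_iff] at hz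
      obtain ⟨p, hp, hpz⟩ := hz
      have hpa : (x p.1, x p.2) ∈ A := by
        have hpe : p ∈ ES := by rw [hES, Finset.mem_union]; exact Or.inr hp
        by_contra hna
        exact hxB (Set.mem_biUnion hpe ⟨hxG, hna⟩)
      exact hpa.1.2 (by linarith [sub_eq_zero.1 hpz])
  have hcontr : P ≤ volume (⋃ p ∈ ES, Bad p) := by
    calc P = volume G := hGvol.symm
      _ ≤ volume (G' ∪ ⋃ p ∈ ES, Bad p) := measure_mono (fun x hx => by
          by_cases hxb : x ∈ ⋃ p ∈ ES, Bad p
          · exact Or.inr hxb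
          · exact Or.inl ⟨hx, hxb⟩)
      _ ≤ volume G' + volume (⋃ p ∈ ES, Bad p) := measure_union_le _ _
      _ = volume (⋃ p ∈ ES, Bad p) := by rw [hG'zero, zero_add]
  exact absurd (hcontr.trans_lt htotal2) (lt_irrefl P)

theorem partB (n : ℕ) (W : ℝ → ℝ → ℝ) (hW0 : memW0 W)
    (B R : SimpleGraph (Fin n))
    (hint : (∫ x in cube n,
        (∏ p ∈ Finset.univ.filter (fun p : Fin n × Fin n => p.1 < p.2 ∧ B.Adj p.1 p.2),
            W (x p.1) (x p.2)) *
        (∏ p ∈ Finset.univ.filter (fun p : Fin n × Fin n => p.1 < p.2 ∧ R.Adj p.1 p.2),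
            (1 - W (x p.1) (x p.2)))) = 0) :
    ∀ᵐ x ∂(volume.restrict (cube n)),
        (∏ p ∈ Finset.univ.filter (fun p : Fin n × Fin n => p.1 < p.2 ∧ B.Adj p.1 p.2),
            W (x p.1) (x p.2)) *
        (∏ p ∈ Finset.univ.filter (fun p : Fin n × Fin n => p.1 < p.2 ∧ R.Adj p.1 p.2),
            (1 - W (x p.1) (x p.2))) = 0 := by
  classical
  set g : (Fin n → ℝ) → ℝ := fun x =>
    (∏ p ∈ Finset.univ.filter (fun p : Fin n × Fin n => p.1 < p.2 ∧ B.Adj p.1 p.2),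
        W (x p.1) (x p.2)) *
    (∏ p ∈ Finset.univ.filter (fun p : Fin n × Fin n => p.1 < p.2 ∧ R.Adj p.1 p.2),
        (1 - W (x p.1) (x p.2))) with hg
  have hgm : Measurable g := by
    apply Measurable.mul
    · refine Finset.measurable_prod _ fun p _ => ?_
      have : Measurable fun x : Fin n → ℝ => Function.uncurry W (x p.1, x p.2) :=
        hW0.1.comp ((measurable_pi_apply p.1).prodMk (measurable_pi_apply p.2))
      simpa [Function.uncurry] using this
    · refine Finset.measurable_prod _ fun p _ => ?_
      have : Measurable fun x : Fin n → ℝ => Function.uncurry W (x p.1, x p.2) :=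
        hW0.1.comp ((measurable_pi_apply p.1).prodMk (measurable_pi_apply p.2))
      exact measurable_const.sub (by simpa [Function.uncurry] using this)
  have hcubevol : volume (cube n) = 1 := by
    rw [cube, volume_pi_pi]
    simp [volume_I01]
  haveI : IsFiniteMeasure (volume.restrict (cube n)) := by
    constructor
    rw [Measure.restrict_apply_univ, hcubevol]
    exact ENNReal.one_lt_top
  have hbounds : ∀ x ∈ cube n, 0 ≤ g x ∧ g x ≤ 1 := by
    intro x hx
    have hxk : ∀ k, x k ∈ I01 := fun k => hx k (Set.mem_univ k)
    have hWb : ∀ i j : Fin n, W (x i) (x j) ∈ Set.Icc (0:ℝ) 1 :=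
      fun i j => hW0.2.2 _ (hxk i) _ (hxk j)
    have h1 : 0 ≤ ∏ p ∈ Finset.univ.filter
        (fun p : Fin n × Fin n => p.1 < p.2 ∧ B.Adj p.1 p.2), W (x p.1) (x p.2) :=
      Finset.prod_nonneg fun p _ => (hWb p.1 p.2).1
    have h2 : ∏ p ∈ Finset.univ.filter
        (fun p : Fin n × Fin n => p.1 < p.2 ∧ B.Adj p.1 p.2), W (x p.1) (x p.2) ≤ 1 :=
      Finset.prod_le_one (fun p _ => (hWb p.1 p.2).1) (fun p _ => (hWb p.1 p.2).2)
    have h3 : 0 ≤ ∏ p ∈ Finset.univ.filter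
        (fun p : Fin n × Fin n => p.1 < p.2 ∧ R.Adj p.1 p.2), (1 - W (x p.1) (x p.2)) :=
      Finset.prod_nonneg fun p _ => by linarith [(hWb p.1 p.2).2]
    have h4 : ∏ p ∈ Finset.univ.filter
        (fun p : Fin n × Fin n => p.1 < p.2 ∧ R.Adj p.1 p.2), (1 - W (x p.1) (x p.2)) ≤ 1 :=
      Finset.prod_le_one (fun p _ => by linarith [(hWb p.1 p.2).2])
        (fun p _ => by linarith [(hWb p.1 p.2).1])
    exact ⟨mul_nonneg h1 h3, mul_le_one₀ h2 h3 h4⟩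
  have hnn : 0 ≤ᵐ[volume.restrict (cube n)] g := by
    filter_upwards [ae_restrict_mem (cube_measurable n)] with x hx
    exact (hbounds x hx).1
  have hbd : ∀ᵐ x ∂(volume.restrict (cube n)), ‖g x‖ ≤ 1 := by
    filter_upwards [ae_restrict_mem (cube_measurable n)] with x hx
    rw [Real.norm_eq_abs, abs_of_nonneg (hbounds x hx).1]
    exact (hbounds x hx).2
  have hgi : Integrable g (volume.restrict (cube n)) :=
    Integrable.mono' (integrable_const 1) hgm.aestronglyMeasurable hbd
  have hzero : g =ᵐ[volume.restrict (cube n)] 0 :=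
    (integral_eq_zero_iff_of_nonneg_ae hnn hgi).1 hint
  filter_upwards [hzero] with x hx
  exact hx

/-- let `F` be a bipartite graph on `n` vertices with edges 2-colored by
two (disjoint) graphs `B` (blue) and `R` (red), and let `W ∈ 𝒲`.
(a) If `∏_{ij∈B} W(x_i,x_j) ∏_{ij∈R} (1 − W(x_i,x_j)) = 0` for a.e. `x ∈ [0,1]ⁿ`,
then `W ∈ {0,1}` a.e. on `[0,1]²`.
(b) If moreover `W ∈ 𝒲₀`, the vanishing of the integral of this product already
implies `W ∈ {0,1}` a.e. -/
theorem statement5 (n : ℕ) (B R : SimpleGraph (Fin n))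
    (hdisj : ∀ i j, ¬ (B.Adj i j ∧ R.Adj i j))
    (hbip : ∃ f : Fin n → Bool, ∀ i j, B.Adj i j ∨ R.Adj i j → f i ≠ f j)
    (W : ℝ → ℝ → ℝ) (hW : memW W) :
    ((∀ᵐ x ∂(volume.restrict (cube n)),
        (∏ p ∈ Finset.univ.filter (fun p : Fin n × Fin n => p.1 < p.2 ∧ B.Adj p.1 p.2),
            W (x p.1) (x p.2)) *
        (∏ p ∈ Finset.univ.filter (fun p : Fin n × Fin n => p.1 < p.2 ∧ R.Adj p.1 p.2),
            (1 - W (x p.1) (x p.2))) = 0) →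
      ∀ᵐ q : ℝ × ℝ ∂(volume.restrict (I01 ×ˢ I01)), W q.1 q.2 = 0 ∨ W q.1 q.2 = 1) ∧
    (memW0 W →
      (∫ x in cube n,
        (∏ p ∈ Finset.univ.filter (fun p : Fin n × Fin n => p.1 < p.2 ∧ B.Adj p.1 p.2),
            W (x p.1) (x p.2)) *
        (∏ p ∈ Finset.univ.filter (fun p : Fin n × Fin n => p.1 < p.2 ∧ R.Adj p.1 p.2),
            (1 - W (x p.1) (x p.2)))) = 0 →
      ∀ᵐ q : ℝ × ℝ ∂(volume.restrict (I01 ×ˢ I01)), W q.1 q.2 = 0 ∨ W q.1 q.2 = 1) := by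
  constructor
  · exact partA n B R hbip W hW
  · intro hW0 hint
    exact partA n B R hbip W hW (partB n W hW0 B R hint)
end
end

section
/- Let G be a finite simple graph on n vertices that contains no induced path on four vertices, let d ∈ [0,1] and ε ≥ 0, and suppose that |deg(v)/n − d| ≤ ε for every vertex v of G. If G is disconnected, then every connected component of G has at most n(2/3 + (4/3)ε) vertices. -/
open MeasureTheory
open scoped Classical

noncomputable section

lemma crossing {V : Type*} {G : SimpleGraph V} (P : V → Prop) :
    ∀ {a b : V}, G.Walk a b → P a → ¬ P b →
      ∃ x y, G.Adj x y ∧ P x ∧ ¬ P y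
  | _, _, .nil, ha, hb => absurd ha hb
  | _, _, @SimpleGraph.Walk.cons _ _ _ c _ h q, ha, hb => by
    by_cases hc : P c
    · exact crossing P q hc hb
    · exact ⟨_, _, h, ha, hc⟩

lemma dom_edge {n : ℕ} {G : SimpleGraph (Fin n)}
    (hP4 : ¬ ∃ a b c d : Fin n, a ≠ b ∧ a ≠ c ∧ a ≠ d ∧ b ≠ c ∧ b ≠ d ∧ c ≠ d ∧
      G.Adj a b ∧ G.Adj b c ∧ G.Adj c d ∧ ¬ G.Adj a c ∧ ¬ G.Adj b d ∧ ¬ G.Adj a d)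
    (c : G.ConnectedComponent) {u0 v0 : Fin n} (h0 : G.Adj u0 v0) (hu0 : u0 ∈ c.supp) :
    ∃ u v, G.Adj u v ∧ ∀ w ∈ c.supp, G.Adj u w ∨ G.Adj v w := by
  classical
  set s : Finset (Fin n × Fin n) :=
    Finset.univ.filter (fun p => G.Adj p.1 p.2 ∧ p.1 ∈ c.supp) with hs
  have hne : s.Nonempty := ⟨(u0, v0), by simp [hs]; exact ⟨h0, hu0⟩⟩
  obtain ⟨p, hp, hmax⟩ := s.exists_max_image
      (fun p => (G.neighborFinset p.1 ∪ G.neighborFinset p.2).card) hne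
  simp only [hs, Finset.mem_filter] at hp
  obtain ⟨-, hadj, hmem⟩ := hp
  set u := p.1 with hu; set v := p.2 with hv
  refine ⟨u, v, hadj, ?_⟩
  by_contra hcov
  push_neg at hcov
  obtain ⟨w, hw, hwu, hwv⟩ := hcov
  have hreach : G.Reachable u w := by
    rw [SimpleGraph.ConnectedComponent.mem_supp_iff] at hw hmem
    exact SimpleGraph.ConnectedComponent.exact (hmem.trans hw.symm)
  obtain ⟨x, w', hxw', hPx, hPw'⟩ :=
    crossing (fun y => G.Adj u y ∨ G.Adj v y) hreach.some (Or.inr hadj.symm)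
      (by tauto)
  push_neg at hPw'
  obtain ⟨hw'u, hw'v⟩ := hPw'
  have hne_uw' : u ≠ w' := by rintro rfl; exact hw'v hadj.symm
  have hne_vw' : v ≠ w' := by rintro rfl; exact hw'u hadj
  have hne_xw' : x ≠ w' := hxw'.ne
  by_cases hxu : G.Adj u x <;> by_cases hxv : G.Adj v x
  · -- case C : x adjacent to both u and v
    have hclaim : ∀ y, G.Adj v y → ¬ G.Adj u y → G.Adj x y := by
      intro y hvy huy
      by_cases hyw : G.Adj y w'
      · -- P4 : u - v - y - w'
        have h1 : u ≠ y := by rintro rfl; exact hw'u hyw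
        exact absurd ⟨u, v, y, w', hadj.ne, h1, hne_uw', hvy.ne, hne_vw', hyw.ne,
          hadj, hvy, hyw, huy, hw'v, hw'u⟩ hP4
      · by_contra hxy
        -- P4 : w' - x - v - y
        have h1 : w' ≠ y := by rintro rfl; exact hw'v hvy
        have h2 : x ≠ y := by rintro rfl; exact huy hxu
        exact absurd ⟨w', x, v, y, hne_xw'.symm, hne_vw'.symm, h1, hxv.ne', h2, hvy.ne,
          hxw'.symm, hxv.symm, hvy, fun h => hw'v h.symm, hxy, fun h => hyw h.symm⟩ hP4
    have hsub : G.neighborFinset u ∪ G.neighborFinset v ⊆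
        G.neighborFinset u ∪ G.neighborFinset x := by
      intro y hy
      rcases Finset.mem_union.1 hy with hy | hy
      · exact Finset.mem_union_left _ hy
      · rw [SimpleGraph.mem_neighborFinset] at hy
        by_cases huy : G.Adj u y
        · exact Finset.mem_union_left _ ((SimpleGraph.mem_neighborFinset _ _ _).2 huy)
        · exact Finset.mem_union_right _
            ((SimpleGraph.mem_neighborFinset _ _ _).2 (hclaim y hy huy))
    have hss : G.neighborFinset u ∪ G.neighborFinset v ⊂
        G.neighborFinset u ∪ G.neighborFinset x := by
      rw [Finset.ssubset_iff_of_subset hsub]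
      exact ⟨w', Finset.mem_union_right _ ((SimpleGraph.mem_neighborFinset _ _ _).2 hxw'),
        by simp [SimpleGraph.mem_neighborFinset, hw'u, hw'v]⟩
    have h1 := hmax (u, x) (by simp [hs]; exact ⟨hxu, hmem⟩)
    have h2 := Finset.card_lt_card hss
    simp only at h1
    omega
  · -- x adj u only: P4 : v - u - x - w'
    have h1 : v ≠ x := by rintro rfl; exact hw'v hxw'
    exact absurd ⟨v, u, x, w', hadj.ne', h1, hne_vw', hxu.ne, hne_uw', hne_xw',
      hadj.symm, hxu, hxw', hxv, hw'u, hw'v⟩ hP4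
  · -- x adj v only: P4 : u - v - x - w'
    have h1 : u ≠ x := by rintro rfl; exact hw'u hxw'
    exact absurd ⟨u, v, x, w', hadj.ne, h1, hne_uw', hxv.ne, hne_vw', hne_xw',
      hadj, hxv, hxw', hxu, hw'v, hw'u⟩ hP4
  · exact absurd hPx (by tauto)

/-- if `G` is a disconnected cograph (no induced path on four vertices)
on `n` vertices in which every degree satisfies `|deg(v)/n − d| ≤ ε`, then every
connected component of `G` has at most `n(2/3 + (4/3)ε)` vertices. -/
theorem statement11 (n : ℕ) (G : SimpleGraph (Fin n))
    (hP4 : ¬ ∃ a b c d : Fin n, a ≠ b ∧ a ≠ c ∧ a ≠ d ∧ b ≠ c ∧ b ≠ d ∧ c ≠ d ∧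
      G.Adj a b ∧ G.Adj b c ∧ G.Adj c d ∧ ¬ G.Adj a c ∧ ¬ G.Adj b d ∧ ¬ G.Adj a d)
    (d ε : ℝ) (hd : d ∈ Set.Icc (0 : ℝ) 1) (hε : 0 ≤ ε)
    (hdeg : ∀ v : Fin n, |(G.degree v : ℝ) / n - d| ≤ ε)
    (hdisc : ¬ G.Connected) :
    ∀ c : G.ConnectedComponent, (Nat.card c.supp : ℝ) ≤ n * (2/3 + 4/3 * ε) := by
  intro c
  classical
  obtain ⟨v1, hv1⟩ : ∃ v, v ∈ c.supp := by
    obtain ⟨v, hv⟩ := Quot.exists_rep c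
    exact ⟨v, by rw [SimpleGraph.ConnectedComponent.mem_supp_iff]; exact hv⟩
  haveI : Nonempty (Fin n) := ⟨v1⟩
  have hn0 : n ≠ 0 := by rintro rfl; exact v1.elim0
  have hn1 : n ≠ 1 := by
    rintro rfl
    exact hdisc ⟨fun a b => by rw [Subsingleton.elim a b]⟩
  have hn2 : 2 ≤ n := by omega
  have hnR : (0 : ℝ) < n := by positivity
  set m := c.supp.toFinset.card with hm
  have hcard : Nat.card c.supp = m := Nat.card_eq_card_toFinset _
  rw [hcard]
  -- vertex outside the component
  obtain ⟨z, hz⟩ : ∃ z, z ∉ c.supp := by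
    by_contra h
    push_neg at h
    refine hdisc ⟨fun a b => SimpleGraph.ConnectedComponent.exact ?_⟩
    simp only [SimpleGraph.ConnectedComponent.mem_supp_iff] at h
    exact (h a).trans (h b).symm
  have hmn : m ≤ n := by
    have := Finset.card_le_univ c.supp.toFinset
    rwa [Fintype.card_fin] at this
  -- degree of z is at most n - m
  have hdz : G.degree z ≤ n - m := by
    have hzsub : G.neighborFinset z ⊆ Finset.univ \ c.supp.toFinset := by
      intro y hy
      rw [SimpleGraph.mem_neighborFinset] at hy
      simp only [Finset.mem_sdiff, Finset.mem_univ, true_and, Set.mem_toFinset]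
      intro hyc
      rw [SimpleGraph.ConnectedComponent.mem_supp_iff] at hyc
      exact hz (by
        rw [SimpleGraph.ConnectedComponent.mem_supp_iff, ← hyc]
        exact SimpleGraph.ConnectedComponent.sound hy.reachable)
    calc G.degree z ≤ (Finset.univ \ c.supp.toFinset).card := Finset.card_le_card hzsub
      _ = n - m := by
          rw [Finset.card_sdiff_of_subset (Finset.subset_univ _)]
          simp [hm]
  -- real bound 1 : m ≤ n(1 - d + ε)
  have hb1 : (m : ℝ) ≤ n * (1 - d + ε) := by
    have h1 := abs_le.1 (hdeg z)
    have h2 : (G.degree z : ℝ) ≤ (n : ℝ) - m := by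
      have := (Nat.cast_le (α := ℝ)).2 hdz
      rwa [Nat.cast_sub hmn] at this
    have h3 : (d - ε) * n ≤ (G.degree z : ℝ) := by
      have h4 : d - ε ≤ (G.degree z : ℝ) / n := by linarith [h1.1]
      exact (le_div_iff₀ hnR).1 h4
    nlinarith
  by_cases hm2 : 2 ≤ m
  · -- there is an edge inside the component
    obtain ⟨a, ha, b, hb, hab⟩ := Finset.one_lt_card.1 hm2
    rw [Set.mem_toFinset] at ha hb
    have hreach : G.Reachable a b := by
      rw [SimpleGraph.ConnectedComponent.mem_supp_iff] at ha hb
      exact SimpleGraph.ConnectedComponent.exact (ha.trans hb.symm)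
    obtain ⟨a', hadj0⟩ : ∃ a', G.Adj a a' := by
      obtain ⟨p⟩ := hreach
      cases p with
      | nil => exact absurd rfl hab
      | cons h q => exact ⟨_, h⟩
    obtain ⟨u, v, huv, hcov⟩ := dom_edge hP4 c hadj0 ha
    have hsub : c.supp.toFinset ⊆ G.neighborFinset u ∪ G.neighborFinset v := by
      intro w hw
      rw [Set.mem_toFinset] at hw
      rcases hcov w hw with h | h
      · exact Finset.mem_union_left _ ((SimpleGraph.mem_neighborFinset _ _ _).2 h)
      · exact Finset.mem_union_right _ ((SimpleGraph.mem_neighborFinset _ _ _).2 h)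
    have hmdeg : m ≤ G.degree u + G.degree v := by
      calc m ≤ (G.neighborFinset u ∪ G.neighborFinset v).card := Finset.card_le_card hsub
        _ ≤ _ := Finset.card_union_le _ _
    have hdu : (G.degree u : ℝ) ≤ n * (d + ε) := by
      have h5 : (G.degree u : ℝ) / n ≤ d + ε := by linarith [(abs_le.1 (hdeg u)).2]
      have := (div_le_iff₀ hnR).1 h5
      linarith
    have hdv : (G.degree v : ℝ) ≤ n * (d + ε) := by
      have h5 : (G.degree v : ℝ) / n ≤ d + ε := by linarith [(abs_le.1 (hdeg v)).2]
      have := (div_le_iff₀ hnR).1 h5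
      linarith
    have hb2 : (m : ℝ) ≤ 2 * n * (d + ε) := by
      have : (m : ℝ) ≤ (G.degree u : ℝ) + (G.degree v : ℝ) := by
        exact_mod_cast hmdeg
      linarith
    nlinarith
  · have : (m : ℝ) ≤ 1 := by
      have : m ≤ 1 := by omega
      exact_mod_cast this
    have : (2 : ℝ) ≤ n := by exact_mod_cast hn2
    nlinarith
end
end

section
/- Let T be a locally finite rooted tree (every vertex has finitely many children) in which every vertex other than the root either is a leaf or has at least two children. Then there exists exactly one pair of functions f, c : V(T) → [0,∞) satisfying: f(r) = 1 for the root r; f(u) = Σ_{v child of u} f(v) for every non-leaf vertex u; c(u) + c(v) = f(v) whenever v is a child of u; and c(u) = 0 for every leaf u. (Such pairs (f,c) encode exactly the regular complement-reducible graphons on the path space of T, so this expresses that every locally finite rooted tree carries a unique regular CR-graphon.) -/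
open MeasureTheory
open scoped Classical

noncomputable section

/-- In a rooted tree `(T, r)`, `v` is a child of `u` if they are adjacent and `v` is
one step farther from the root. -/
def childRel {V : Type} (T : SimpleGraph V) (r : V) (u v : V) : Prop :=
  T.Adj u v ∧ T.dist r v = T.dist r u + 1


section AuxCR

open scoped ENNReal

/-- inverse bounds -/
lemma invb {a : ℝ} (h0 : 0 ≤ a) (h2 : a ≤ 1/2) : 1 ≤ (1-a)⁻¹ ∧ (1-a)⁻¹ ≤ 2 := by
  have hpos : (0:ℝ) < 1 - a := by linarith
  constructor
  · rw [le_inv_comm₀ one_pos hpos]; linarith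
  · rw [inv_le_comm₀ hpos (by norm_num)]; linarith

lemma contract {V : Type} (s : Finset V) (hcard : 2 ≤ s.card)
    (p q : V → ℝ) (X Y δ : ℝ) (hδ : 0 ≤ δ)
    (hp0 : ∀ w ∈ s, 0 ≤ p w) (hp2 : ∀ w ∈ s, p w ≤ 1/2)
    (hq0 : ∀ w ∈ s, 0 ≤ q w) (hq2 : ∀ w ∈ s, q w ≤ 1/2)
    (hd : ∀ w ∈ s, |p w - q w| ≤ δ)
    (hX : X * ∑ w ∈ s, (1 - p w)⁻¹ = 1)
    (hY : Y * ∑ w ∈ s, (1 - q w)⁻¹ = 1) :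
    |X - Y| ≤ 2/3 * δ := by
  set P : V → ℝ := fun w => (1 - p w)⁻¹ with hP
  set Q : V → ℝ := fun w => (1 - q w)⁻¹ with hQ
  have hPb : ∀ w ∈ s, 1 ≤ P w ∧ P w ≤ 2 := fun w hw => invb (hp0 w hw) (hp2 w hw)
  have hQb : ∀ w ∈ s, 1 ≤ Q w ∧ Q w ≤ 2 := fun w hw => invb (hq0 w hw) (hq2 w hw)
  set SP := ∑ w ∈ s, P w with hSP
  set SQ := ∑ w ∈ s, Q w with hSQ
  have hSPc : (s.card : ℝ) ≤ SP := by
    have := Finset.card_nsmul_le_sum s P 1 (fun w hw => (hPb w hw).1)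
    simpa using this
  have hSQc : (s.card : ℝ) ≤ SQ := by
    have := Finset.card_nsmul_le_sum s Q 1 (fun w hw => (hQb w hw).1)
    simpa using this
  have hc2 : (2:ℝ) ≤ (s.card : ℝ) := by exact_mod_cast hcard
  have hSPpos : 0 < SP := by linarith
  have hSQpos : 0 < SQ := by linarith
  have hXv : X = SP⁻¹ := eq_inv_of_mul_eq_one_left hX
  have hYv : Y = SQ⁻¹ := eq_inv_of_mul_eq_one_left hY
  have hX0 : 0 < X := by rw [hXv]; positivity
  have hY0 : 0 < Y := by rw [hYv]; positivity
  -- SP ≥ P w + 1 for each w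
  have hkey : ∀ w ∈ s, X * P w ≤ 2/3 := by
    intro w hw
    have h1 : SP - P w = ∑ u ∈ s.erase w, P u := by
      rw [hSP, ← Finset.add_sum_erase s P hw]; ring
    have h2 : (1:ℝ) ≤ ∑ u ∈ s.erase w, P u := by
      have hce : 1 ≤ (s.erase w).card := by
        rw [Finset.card_erase_of_mem hw]; omega
      have := Finset.card_nsmul_le_sum (s.erase w) P 1
        (fun u hu => (hPb u (Finset.mem_of_mem_erase hu)).1)
      simp only [nsmul_eq_mul, mul_one] at this
      calc (1:ℝ) ≤ ((s.erase w).card : ℝ) := by exact_mod_cast hce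
        _ ≤ _ := this
    have h3 : P w + 1 ≤ SP := by linarith
    have h4 : P w ≤ 2 := (hPb w hw).2
    rw [hXv, inv_mul_le_iff₀ hSPpos]
    linarith
  -- main computation
  have hdiffterm : ∀ w ∈ s, |Q w - P w| ≤ δ * (P w * Q w) := by
    intro w hw
    have hp' : (0:ℝ) < 1 - p w := by have := hp2 w hw; linarith
    have hq' : (0:ℝ) < 1 - q w := by have := hq2 w hw; linarith
    have hid : Q w - P w = (q w - p w) * (P w * Q w) := by
      show (1 - q w)⁻¹ - (1 - p w)⁻¹ = _
      rw [inv_sub_inv (ne_of_gt hq') (ne_of_gt hp'), div_eq_mul_inv, mul_inv]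
      ring
    rw [hid, abs_mul]
    have hPQ0 : 0 ≤ P w * Q w := by positivity
    rw [abs_of_nonneg hPQ0]
    apply mul_le_mul_of_nonneg_right _ hPQ0
    rw [abs_sub_comm]; exact hd w hw
  have hsub : |X - Y| = X * Y * |SQ - SP| := by
    have : X - Y = X * Y * (SQ - SP) := by
      calc X - Y = X * (Y * SQ) - (X * SP) * Y := by rw [hY, hX]; ring
        _ = X * Y * (SQ - SP) := by ring
    rw [this, abs_mul, abs_of_nonneg (by positivity : (0:ℝ) ≤ X * Y)]
  rw [hsub]
  have h5 : |SQ - SP| ≤ ∑ w ∈ s, δ * (P w * Q w) := by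
    have : SQ - SP = ∑ w ∈ s, (Q w - P w) := by rw [hSQ, hSP, Finset.sum_sub_distrib]
    rw [this]
    exact (Finset.abs_sum_le_sum_abs _ _).trans (Finset.sum_le_sum hdiffterm)
  have h6 : X * Y * ∑ w ∈ s, δ * (P w * Q w) ≤ 2/3 * δ := by
    rw [Finset.mul_sum]
    have h7 : ∀ w ∈ s, X * Y * (δ * (P w * Q w)) ≤ 2/3 * (δ * (Y * Q w)) := by
      intro w hw
      have h8 : X * Y * (δ * (P w * Q w)) = (X * P w) * (δ * (Y * Q w)) := by ring
      rw [h8]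
      apply mul_le_mul_of_nonneg_right (hkey w hw)
      have := (hQb w hw).1
      positivity
    calc ∑ w ∈ s, X * Y * (δ * (P w * Q w)) ≤ ∑ w ∈ s, 2/3 * (δ * (Y * Q w)) :=
          Finset.sum_le_sum h7
      _ = 2/3 * δ * (Y * SQ) := by
          rw [hSQ, Finset.mul_sum, Finset.mul_sum]
          exact Finset.sum_congr rfl (fun w _ => by ring)
      _ = 2/3 * δ := by rw [hYv, inv_mul_cancel₀ (ne_of_gt hSQpos), mul_one]
  calc X * Y * |SQ - SP| ≤ X * Y * ∑ w ∈ s, δ * (P w * Q w) := by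
        apply mul_le_mul_of_nonneg_left h5 (by positivity)
    _ ≤ 2/3 * δ := h6

lemma pair_unique {V : Type} (r : V) (ch : V → Finset V)
    (hner : ∀ u w, w ∈ ch u → w ≠ r)
    (hb : ∀ v, v ≠ r → ch v = ∅ ∨ 2 ≤ (ch v).card)
    (x y p q : V → ℝ)
    (hp0 : ∀ w, w ≠ r → 0 ≤ p w) (hp2 : ∀ w, w ≠ r → p w ≤ 1/2)
    (hq0 : ∀ w, w ≠ r → 0 ≤ q w) (hq2 : ∀ w, w ≠ r → q w ≤ 1/2)
    (hdiff : ∀ w, |p w - q w| = |x w - y w|)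
    (hbound : ∀ w, w ≠ r → |x w - y w| ≤ 1)
    (hleaf : ∀ v, ch v = ∅ → x v = y v)
    (hxeq : ∀ v, ch v ≠ ∅ → x v * ∑ w ∈ ch v, (1 - p w)⁻¹ = 1)
    (hyeq : ∀ v, ch v ≠ ∅ → y v * ∑ w ∈ ch v, (1 - q w)⁻¹ = 1) :
    x = y := by
  have key : ∀ n : ℕ, ∀ v, v ≠ r → |x v - y v| ≤ (2/3) ^ n := by
    intro n
    induction n with
    | zero => intro v hv; simpa using hbound v hv
    | succ n ih =>
      intro v hv
      by_cases hch : ch v = ∅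
      · rw [hleaf v hch]; simp
        positivity
      · rcases hb v hv with h | hcard
        · exact absurd h hch
        have hc := contract (ch v) hcard p q (x v) (y v) ((2/3)^n) (by positivity)
          (fun w hw => hp0 w (hner v w hw)) (fun w hw => hp2 w (hner v w hw))
          (fun w hw => hq0 w (hner v w hw)) (fun w hw => hq2 w (hner v w hw))
          (fun w hw => (hdiff w).le.trans (ih w (hner v w hw)))
          (hxeq v hch) (hyeq v hch)
        calc |x v - y v| ≤ 2/3 * (2/3)^n := hc
          _ = (2/3)^(n+1) := by ring
  have hxy : ∀ v, v ≠ r → x v = y v := by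
    intro v hv
    by_contra hne
    have habs : 0 < |x v - y v| := abs_pos.mpr (sub_ne_zero.mpr hne)
    obtain ⟨n, hn⟩ := exists_pow_lt_of_lt_one habs (by norm_num : (2:ℝ)/3 < 1)
    exact absurd (key n v hv) (not_le.mpr hn)
  funext v
  by_cases hv : v = r
  · subst hv
    by_cases hch : ch v = ∅
    · exact hleaf v hch
    · have hpq : ∀ w ∈ ch v, p w = q w := by
        intro w hw
        have h0 : |x w - y w| = 0 := by rw [hxy w (hner v w hw)]; simp
        have := hdiff w
        rw [h0] at this
        exact sub_eq_zero.mp (abs_eq_zero.mp this)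
      have hsum : ∑ w ∈ ch v, (1 - p w)⁻¹ = ∑ w ∈ ch v, (1 - q w)⁻¹ :=
        Finset.sum_congr rfl (fun w hw => by rw [hpq w hw])
      have hx1 := hxeq v hch
      have hy1 := hyeq v hch
      rw [hsum] at hx1
      have hS : ∑ w ∈ ch v, (1 - q w)⁻¹ ≠ 0 := by
        intro h0
        rw [h0, mul_zero] at hy1
        norm_num at hy1
      exact mul_right_cancel₀ hS (hx1.trans hy1.symm)
  · exact hxy v hv

lemma exists_sol {V : Type} (r : V) (ch : V → Finset V)
    (hner : ∀ u w, w ∈ ch u → w ≠ r)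
    (hb : ∀ v, v ≠ r → ch v = ∅ ∨ 2 ≤ (ch v).card) :
    ∃ x : V → ℝ, (∀ v, 0 ≤ x v) ∧ (∀ v, v ≠ r → x v ≤ 1/2) ∧
      (∀ v, ch v = ∅ → x v = 0) ∧
      (∀ v, ch v ≠ ∅ → 0 < x v ∧ x v * ∑ w ∈ ch v, (1 - x w)⁻¹ = 1) := by
  classical
  set Φ : (V → ℝ≥0∞) → (V → ℝ≥0∞) := fun z v =>
    if ch v = ∅ then 0 else (∑ w ∈ ch v, (1 - min (z w) 2⁻¹)⁻¹)⁻¹ with hΦdef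
  have hanti : ∀ z y : V → ℝ≥0∞, z ≤ y → Φ y ≤ Φ z := by
    intro z y hzy v
    simp only [hΦdef]
    split
    · exact le_refl _
    · apply ENNReal.inv_le_inv'
      apply Finset.sum_le_sum
      intro w _
      apply ENNReal.inv_le_inv'
      exact tsub_le_tsub_left (min_le_min (hzy w) le_rfl) 1
  set Ψ : (V → ℝ≥0∞) →o (V → ℝ≥0∞) :=
    ⟨fun z => Φ (Φ z), fun z y h => hanti _ _ (hanti _ _ h)⟩ with hΨdef
  set a : V → ℝ≥0∞ := Ψ.lfp with hadef
  have haΨ : Φ (Φ a) = a := Ψ.map_lfp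
  set b : V → ℝ≥0∞ := Φ a with hbdef
  have hba : Φ b = a := haΨ
  have hterm1 : ∀ (z : V → ℝ≥0∞) (w : V), 1 ≤ (1 - min (z w) 2⁻¹)⁻¹ :=
    fun z w => ENNReal.one_le_inv.2 tsub_le_self
  have hterm2 : ∀ (z : V → ℝ≥0∞) (w : V), (1 - min (z w) 2⁻¹)⁻¹ ≤ 2 := by
    intro z w
    have h1 : (2:ℝ≥0∞)⁻¹ ≤ 1 - min (z w) 2⁻¹ := by
      apply ENNReal.le_sub_of_add_le_left
        (ne_top_of_le_ne_top (by simp) (min_le_right (z w) 2⁻¹))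
      calc min (z w) 2⁻¹ + 2⁻¹ ≤ 2⁻¹ + 2⁻¹ := add_le_add_left (min_le_right _ _) _
        _ = 1 := ENNReal.inv_two_add_inv_two
    calc (1 - min (z w) 2⁻¹)⁻¹ ≤ ((2:ℝ≥0∞)⁻¹)⁻¹ := ENNReal.inv_le_inv' h1
      _ = 2 := inv_inv _
  have hsum_lb : ∀ (z : V → ℝ≥0∞) (v : V),
      ((ch v).card : ℝ≥0∞) ≤ ∑ w ∈ ch v, (1 - min (z w) 2⁻¹)⁻¹ := by
    intro z v
    calc ((ch v).card : ℝ≥0∞) = ∑ _w ∈ ch v, 1 := by simp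
      _ ≤ _ := Finset.sum_le_sum (fun w _ => hterm1 z w)
  have hsum_ub : ∀ (z : V → ℝ≥0∞) (v : V),
      ∑ w ∈ ch v, (1 - min (z w) 2⁻¹)⁻¹ ≤ 2 * (ch v).card := by
    intro z v
    calc ∑ w ∈ ch v, (1 - min (z w) 2⁻¹)⁻¹ ≤ ∑ _w ∈ ch v, 2 :=
        Finset.sum_le_sum (fun w _ => hterm2 z w)
      _ = 2 * (ch v).card := by simp [mul_comm]
  have hsum_ne_top : ∀ (z : V → ℝ≥0∞) (v : V),
      ∑ w ∈ ch v, (1 - min (z w) 2⁻¹)⁻¹ ≠ ∞ := by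
    intro z v
    apply ne_top_of_le_ne_top _ (hsum_ub z v)
    exact ENNReal.mul_ne_top (by simp) (ENNReal.natCast_ne_top _)
  have hsum_ne_zero : ∀ (z : V → ℝ≥0∞) (v : V), ch v ≠ ∅ →
      ∑ w ∈ ch v, (1 - min (z w) 2⁻¹)⁻¹ ≠ 0 := by
    intro z v hv h0
    have h1 : (1:ℝ≥0∞) ≤ ((ch v).card : ℝ≥0∞) := by
      have : 1 ≤ (ch v).card := Finset.card_pos.2 (Finset.nonempty_of_ne_empty hv)
      exact_mod_cast this
    have h2 := h1.trans (hsum_lb z v)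
    rw [h0] at h2
    simp at h2
  have hΦleaf : ∀ (z : V → ℝ≥0∞) (v : V), ch v = ∅ → Φ z v = 0 := by
    intro z v h; simp only [hΦdef, if_pos h]
  have hΦval : ∀ (z : V → ℝ≥0∞) (v : V), ch v ≠ ∅ →
      Φ z v = (∑ w ∈ ch v, (1 - min (z w) 2⁻¹)⁻¹)⁻¹ := by
    intro z v h; simp only [hΦdef, if_neg h]
  have hΦ_le_one : ∀ (z : V → ℝ≥0∞) (v : V), Φ z v ≤ 1 := by
    intro z v
    by_cases h : ch v = ∅
    · rw [hΦleaf z v h]; exact zero_le_one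
    · rw [hΦval z v h]
      have h1 : (1:ℝ≥0∞) ≤ ∑ w ∈ ch v, (1 - min (z w) 2⁻¹)⁻¹ := by
        refine le_trans ?_ (hsum_lb z v)
        have : 1 ≤ (ch v).card := Finset.card_pos.2 (Finset.nonempty_of_ne_empty h)
        exact_mod_cast this
      calc _ ≤ ((1:ℝ≥0∞))⁻¹ := ENNReal.inv_le_inv' h1
        _ = 1 := inv_one
  have hΦ_half : ∀ (z : V → ℝ≥0∞) (v : V), v ≠ r → Φ z v ≤ 2⁻¹ := by
    intro z v hv
    by_cases h : ch v = ∅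
    · rw [hΦleaf z v h]; exact zero_le
    · rcases hb v hv with h' | hcard
      · exact absurd h' h
      rw [hΦval z v h]
      apply ENNReal.inv_le_inv'
      refine le_trans ?_ (hsum_lb z v)
      exact_mod_cast hcard
  have hΦ_ne_top : ∀ (z : V → ℝ≥0∞) (v : V), Φ z v ≠ ∞ :=
    fun z v => ne_top_of_le_ne_top ENNReal.one_ne_top (hΦ_le_one z v)
  have hΦ_ne_zero : ∀ (z : V → ℝ≥0∞) (v : V), ch v ≠ ∅ → Φ z v ≠ 0 := by
    intro z v h
    rw [hΦval z v h]
    exact ENNReal.inv_ne_zero.2 (hsum_ne_top z v)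
  have ha_eq : ∀ v, a v = Φ b v := fun v => (congrFun hba v).symm
  have hb_eq : ∀ v, b v = Φ a v := fun v => congrFun hbdef v
  have ha_half : ∀ v, v ≠ r → a v ≤ 2⁻¹ := by
    intro v hv; rw [ha_eq v]; exact hΦ_half b v hv
  have hb_half : ∀ v, v ≠ r → b v ≤ 2⁻¹ := by
    intro v hv; rw [hb_eq v]; exact hΦ_half a v hv
  have hmin_a : ∀ w, w ≠ r → min (a w) 2⁻¹ = a w :=
    fun w hw => min_eq_left (ha_half w hw)
  have hmin_b : ∀ w, w ≠ r → min (b w) 2⁻¹ = b w :=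
    fun w hw => min_eq_left (hb_half w hw)
  have hsum_amin : ∀ v, (∑ w ∈ ch v, (1 - min (a w) 2⁻¹)⁻¹) = ∑ w ∈ ch v, (1 - a w)⁻¹ :=
    fun v => Finset.sum_congr rfl (fun w hw => by rw [hmin_a w (hner v w hw)])
  have hsum_bmin : ∀ v, (∑ w ∈ ch v, (1 - min (b w) 2⁻¹)⁻¹) = ∑ w ∈ ch v, (1 - b w)⁻¹ :=
    fun v => Finset.sum_congr rfl (fun w hw => by rw [hmin_b w (hner v w hw)])
  have hEa : ∀ v, ch v ≠ ∅ → a v * ∑ w ∈ ch v, (1 - b w)⁻¹ = 1 := by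
    intro v h
    rw [ha_eq v, hΦval b v h, hsum_bmin v]
    have h0 : (∑ w ∈ ch v, (1 - b w)⁻¹) ≠ 0 := by rw [← hsum_bmin v]; exact hsum_ne_zero b v h
    have ht : (∑ w ∈ ch v, (1 - b w)⁻¹) ≠ ∞ := by rw [← hsum_bmin v]; exact hsum_ne_top b v
    exact ENNReal.inv_mul_cancel h0 ht
  have hEb : ∀ v, ch v ≠ ∅ → b v * ∑ w ∈ ch v, (1 - a w)⁻¹ = 1 := by
    intro v h
    rw [hb_eq v, hΦval a v h, hsum_amin v]
    have h0 : (∑ w ∈ ch v, (1 - a w)⁻¹) ≠ 0 := by rw [← hsum_amin v]; exact hsum_ne_zero a v h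
    have ht : (∑ w ∈ ch v, (1 - a w)⁻¹) ≠ ∞ := by rw [← hsum_amin v]; exact hsum_ne_top a v
    exact ENNReal.inv_mul_cancel h0 ht
  -- real versions
  set A : V → ℝ := fun v => (a v).toReal with hAdef
  set B : V → ℝ := fun v => (b v).toReal with hBdef
  have hA0 : ∀ v, 0 ≤ A v := fun v => ENNReal.toReal_nonneg
  have hB0 : ∀ v, 0 ≤ B v := fun v => ENNReal.toReal_nonneg
  have htoReal_half : ((2:ℝ≥0∞)⁻¹).toReal = 1/2 := by
    rw [ENNReal.toReal_inv]; norm_num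
  have hAhalf : ∀ v, v ≠ r → A v ≤ 1/2 := by
    intro v hv
    rw [← htoReal_half]
    exact ENNReal.toReal_mono (by simp) (ha_half v hv)
  have hBhalf : ∀ v, v ≠ r → B v ≤ 1/2 := by
    intro v hv
    rw [← htoReal_half]
    exact ENNReal.toReal_mono (by simp) (hb_half v hv)
  have ha_ne_top : ∀ v, a v ≠ ∞ := by
    intro v; rw [ha_eq v]; exact hΦ_ne_top b v
  have hb_ne_top : ∀ v, b v ≠ ∞ := by
    intro v; rw [hb_eq v]; exact hΦ_ne_top a v
  have hterm_b : ∀ v, ∀ w ∈ ch v, ((1 - b w)⁻¹ : ℝ≥0∞) ≠ ∞ := by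
    intro v w hw
    rw [← hmin_b w (hner v w hw)]
    exact ne_top_of_le_ne_top (by simp) (hterm2 b w)
  have hterm_a : ∀ v, ∀ w ∈ ch v, ((1 - a w)⁻¹ : ℝ≥0∞) ≠ ∞ := by
    intro v w hw
    rw [← hmin_a w (hner v w hw)]
    exact ne_top_of_le_ne_top (by simp) (hterm2 a w)
  have htermReal_b : ∀ v, ∀ w ∈ ch v, ((1 - b w)⁻¹ : ℝ≥0∞).toReal = (1 - B w)⁻¹ := by
    intro v w hw
    have h1 : b w ≤ 1 := le_trans (hb_half w (hner v w hw)) (by simp)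
    rw [ENNReal.toReal_inv, ENNReal.toReal_sub_of_le h1 ENNReal.one_ne_top, ENNReal.toReal_one]
  have htermReal_a : ∀ v, ∀ w ∈ ch v, ((1 - a w)⁻¹ : ℝ≥0∞).toReal = (1 - A w)⁻¹ := by
    intro v w hw
    have h1 : a w ≤ 1 := le_trans (ha_half w (hner v w hw)) (by simp)
    rw [ENNReal.toReal_inv, ENNReal.toReal_sub_of_le h1 ENNReal.one_ne_top, ENNReal.toReal_one]
  have hrealEa : ∀ v, ch v ≠ ∅ → A v * ∑ w ∈ ch v, (1 - B w)⁻¹ = 1 := by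
    intro v h
    have h1 := congrArg ENNReal.toReal (hEa v h)
    rw [ENNReal.toReal_mul, ENNReal.toReal_one,
      ENNReal.toReal_sum (hterm_b v)] at h1
    calc A v * ∑ w ∈ ch v, (1 - B w)⁻¹
        = (a v).toReal * ∑ w ∈ ch v, ((1 - b w)⁻¹ : ℝ≥0∞).toReal := by
          congr 1
          exact Finset.sum_congr rfl (fun w hw => (htermReal_b v w hw).symm)
      _ = 1 := h1
  have hrealEb : ∀ v, ch v ≠ ∅ → B v * ∑ w ∈ ch v, (1 - A w)⁻¹ = 1 := by
    intro v h
    have h1 := congrArg ENNReal.toReal (hEb v h)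
    rw [ENNReal.toReal_mul, ENNReal.toReal_one,
      ENNReal.toReal_sum (hterm_a v)] at h1
    calc B v * ∑ w ∈ ch v, (1 - A w)⁻¹
        = (b v).toReal * ∑ w ∈ ch v, ((1 - a w)⁻¹ : ℝ≥0∞).toReal := by
          congr 1
          exact Finset.sum_congr rfl (fun w hw => (htermReal_a v w hw).symm)
      _ = 1 := h1
  have hALeaf : ∀ v, ch v = ∅ → A v = 0 := by
    intro v h
    have : a v = 0 := by rw [ha_eq v, hΦleaf b v h]
    simp [hAdef, this]
  have hBLeaf : ∀ v, ch v = ∅ → B v = 0 := by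
    intro v h
    have : b v = 0 := by rw [hb_eq v, hΦleaf a v h]
    simp [hBdef, this]
  have hAB : A = B := by
    apply pair_unique r ch hner hb A B B A (fun w _ => hB0 w) hBhalf (fun w _ => hA0 w) hAhalf
      (fun w => abs_sub_comm (B w) (A w))
      (fun w hw => by
        have h1 := hA0 w; have h2 := hAhalf w hw
        have h3 := hB0 w; have h4 := hBhalf w hw
        rw [abs_le]; constructor <;> linarith)
      (fun v h => by rw [hALeaf v h, hBLeaf v h])
      hrealEa hrealEb
  refine ⟨A, hA0, hAhalf, hALeaf, ?_⟩
  intro v h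
  constructor
  · have h1 : a v ≠ 0 := by rw [ha_eq v]; exact hΦ_ne_zero b v h
    exact ENNReal.toReal_pos h1 (ha_ne_top v)
  · have := hrealEa v h
    rw [hAB]
    rw [hAB] at this
    exact this

lemma child_ne_root {V : Type} {T : SimpleGraph V} {r u v : V}
    (h : childRel T r u v) : v ≠ r := by
  intro hv
  subst hv
  have := h.2
  rw [SimpleGraph.dist_self] at this
  omega

lemma parent_exists {V : Type} {T : SimpleGraph V} {r : V} (hconn : T.Connected)
    {v : V} (hv : v ≠ r) : ∃ u, childRel T r u v := by
  have hd0 : T.dist r v ≠ 0 := by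
    intro h
    exact hv (hconn.dist_eq_zero_iff.mp h).symm
  obtain ⟨n, hn⟩ : ∃ n, T.dist r v = n + 1 := ⟨T.dist r v - 1, by omega⟩
  obtain ⟨p, hp⟩ := hconn.exists_walk_length_eq_dist r v
  cases hrev : p.reverse with
  | nil =>
    have := congrArg SimpleGraph.Walk.length hrev
    rw [SimpleGraph.Walk.length_reverse, hp, hn] at this
    simp at this
  | cons hadj q =>
    rename_i u
    refine ⟨u, ⟨hadj.symm, ?_⟩⟩
    have hlen : q.length = n := by
      have := congrArg SimpleGraph.Walk.length hrev
      rw [SimpleGraph.Walk.length_reverse, hp, hn] at this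
      simpa using this.symm
    have hle : T.dist r u ≤ n := by
      have := SimpleGraph.dist_le q.reverse
      rwa [SimpleGraph.Walk.length_reverse, hlen] at this
    have hge : n ≤ T.dist r u := by
      have htri := hconn.dist_triangle (u := r) (v := u) (w := v)
      have huv : T.dist u v = 1 := SimpleGraph.dist_eq_one_iff_adj.2 hadj.symm
      omega
    omega

lemma parent_unique {V : Type} {T : SimpleGraph V} {r : V} (hconn : T.Connected)
    (hacyc : T.IsAcyclic) {u u' v : V}
    (h : childRel T r u v) (h' : childRel T r u' v) : u = u' := by
  obtain ⟨hadj, hdist⟩ := h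
  obtain ⟨hadj', hdist'⟩ := h'
  obtain ⟨p, hp⟩ := hconn.exists_walk_length_eq_dist r u
  obtain ⟨p', hp'⟩ := hconn.exists_walk_length_eq_dist r u'
  have hq : (p.concat hadj).length = T.dist r v := by
    rw [SimpleGraph.Walk.length_concat, hp]; omega
  have hq' : (p'.concat hadj').length = T.dist r v := by
    rw [SimpleGraph.Walk.length_concat, hp']; omega
  have hqp : (p.concat hadj).IsPath := SimpleGraph.Walk.isPath_of_length_eq_dist _ hq
  have hqp' : (p'.concat hadj').IsPath := SimpleGraph.Walk.isPath_of_length_eq_dist _ hq'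
  have hpaths := hacyc.path_unique ⟨p.concat hadj, hqp⟩ ⟨p'.concat hadj', hqp'⟩
  have hww : p.concat hadj = p'.concat hadj' := congrArg Subtype.val hpaths
  have hrev := congrArg SimpleGraph.Walk.reverse hww
  rw [SimpleGraph.Walk.reverse_concat, SimpleGraph.Walk.reverse_concat] at hrev
  have hgv := congrArg (fun w : T.Walk v r => w.getVert 1) hrev
  simpa [SimpleGraph.Walk.getVert_cons_succ] using hgv

noncomputable def parAux {V : Type} (T : SimpleGraph V) (r : V) : V → V :=
  fun v => if h : ∃ u, childRel T r u v then h.choose else v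

noncomputable def gAux {V : Type} (par : V → V) (x : V → ℝ) : ℕ → V → ℝ
  | 0, _ => 1
  | n+1, v => gAux par x n (par v) * x (par v) / (1 - x v)

end AuxCR

/-- let `T` be a locally finite rooted tree in which every vertex other
than the root is either a leaf or has at least two children.  Then there is exactly one
pair of nonnegative functions `(f, c)` on `V(T)` with `f(r) = 1`,
`f(u) = Σ_{v child of u} f(v)` for every non-leaf `u`, `c(u) + c(v) = f(v)` whenever
`v` is a child of `u`, and `c(u) = 0` for every leaf `u`.  (Such pairs encode exactly
the regular complement-reducible graphons on the path space of `T`.) -/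
theorem statement12 (V : Type) (T : SimpleGraph V) (r : V)
    (hconn : T.Connected) (hacyc : T.IsAcyclic)
    (hlf : ∀ u : V, {v | childRel T r u v}.Finite)
    (hbranch : ∀ v : V, v ≠ r →
      {w | childRel T r v w} = ∅ ∨ 2 ≤ {w | childRel T r v w}.ncard) :
    ∃! fc : (V → ℝ) × (V → ℝ),
      (∀ v, 0 ≤ fc.1 v) ∧ (∀ v, 0 ≤ fc.2 v) ∧
      fc.1 r = 1 ∧
      (∀ u, {v | childRel T r u v}.Nonempty →
        fc.1 u = ∑ᶠ v ∈ {v | childRel T r u v}, fc.1 v) ∧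
      (∀ u v, childRel T r u v → fc.2 u + fc.2 v = fc.1 v) ∧
      (∀ u, {v | childRel T r u v} = ∅ → fc.2 u = 0) := by
    classical
  set ch : V → Finset V := fun u => (hlf u).toFinset with hchdef
  have hchmem : ∀ u w, w ∈ ch u ↔ childRel T r u w := fun u w => (hlf u).mem_toFinset
  have hchempty : ∀ u, ch u = ∅ ↔ {v | childRel T r u v} = ∅ :=
    fun u => (hlf u).toFinset_eq_empty
  have hner : ∀ u w, w ∈ ch u → w ≠ r := fun u w hw => child_ne_root ((hchmem u w).1 hw)
  have hb : ∀ v, v ≠ r → ch v = ∅ ∨ 2 ≤ (ch v).card := by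
    intro v hv
    rcases hbranch v hv with h | h
    · exact Or.inl ((hchempty v).2 h)
    · right
      rwa [Set.ncard_eq_toFinset_card _ (hlf v)] at h
  have hfinsum : ∀ (g : V → ℝ) (u : V),
      (∑ᶠ w ∈ {w | childRel T r u w}, g w) = ∑ w ∈ ch u, g w := by
    intro g u
    rw [← Set.Finite.coe_toFinset (hlf u), finsum_mem_coe_finset]
  obtain ⟨x, hx0, hxhalf, hxleaf, hxeq⟩ := exists_sol r ch hner hb
  -- parent facts
  have hpar : ∀ v, v ≠ r → childRel T r (parAux T r v) v := by
    intro v hv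
    obtain ⟨u, hu⟩ := parent_exists hconn hv
    rw [parAux, dif_pos ⟨u, hu⟩]
    exact (⟨u, hu⟩ : ∃ u, childRel T r u v).choose_spec
  have hparu : ∀ u v, childRel T r u v → parAux T r v = u := by
    intro u v h
    exact parent_unique hconn hacyc (hpar v (child_ne_root h)) h
  have hroot0 : ∀ v, T.dist r v = 0 → v = r :=
    fun v h => (hconn.dist_eq_zero_iff.mp h).symm
  have hchne : ∀ u v, childRel T r u v → ch u ≠ ∅ := by
    intro u v h hemp
    have hm := (hchmem u v).2 h
    rw [hemp] at hm
    simp at hm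
  -- define f
  set f : V → ℝ := fun v => gAux (parAux T r) x (T.dist r v) v with hfdef
  have hfr : f r = 1 := by
    simp only [hfdef, SimpleGraph.dist_self]
    rfl
  have hcf : ∀ u v, childRel T r u v → f v = f u * x u / (1 - x v) := by
    intro u v h
    have hd : T.dist r v = T.dist r u + 1 := h.2
    have hp := hparu u v h
    simp only [hfdef, hd, gAux, hp]
  have hfpos : ∀ n v, T.dist r v = n → 0 < f v := by
    intro n
    induction n with
    | zero =>
      intro v h
      rw [hroot0 v h, hfr]; norm_num
    | succ n ih =>
      intro v h
      have hvr : v ≠ r := by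
        intro hv; rw [hv, SimpleGraph.dist_self] at h; omega
      have hcr := hpar v hvr
      have hdu : T.dist r (parAux T r v) = n := by have := hcr.2; omega
      have hfu := ih _ hdu
      have hxu := (hxeq _ (hchne _ v hcr)).1
      have h1 : (0:ℝ) < 1 - x v := by have := hxhalf v hvr; linarith
      rw [hcf _ v hcr]
      positivity
  have hfpos' : ∀ v, 0 < f v := fun v => hfpos _ v rfl
  have hsumf : ∀ u, ch u ≠ ∅ → ∑ w ∈ ch u, f w = f u := by
    intro u hu
    have hterm : ∀ w ∈ ch u, f w = f u * x u * (1 - x w)⁻¹ := by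
      intro w hw
      rw [hcf u w ((hchmem u w).1 hw), div_eq_mul_inv]
    rw [Finset.sum_congr rfl hterm, ← Finset.mul_sum]
    have hE := (hxeq u hu).2
    calc (f u * x u) * ∑ w ∈ ch u, (1 - x w)⁻¹
        = f u * (x u * ∑ w ∈ ch u, (1 - x w)⁻¹) := by ring
      _ = f u := by rw [hE, mul_one]
  set c : V → ℝ := fun v => x v * f v with hcdef
  have hchild_cf : ∀ u v, childRel T r u v → c u + c v = f v := by
    intro u v h
    have hvr := child_ne_root h
    have h1 : (0:ℝ) < 1 - x v := by have := hxhalf v hvr; linarith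
    have h2 : f v * (1 - x v) = f u * x u := by
      rw [hcf u v h]
      field_simp
    show x u * f u + x v * f v = f v
    linear_combination -h2
  refine ⟨⟨f, c⟩, ⟨?_, ?_, ?_, ?_, ?_, ?_⟩, ?_⟩
  · exact fun v => (hfpos' v).le
  · exact fun v => mul_nonneg (hx0 v) (hfpos' v).le
  · exact hfr
  · intro u hu
    have hne : ch u ≠ ∅ := by
      intro h
      rw [(hchempty u).1 h] at hu
      exact Set.not_nonempty_empty hu
    rw [hfinsum f u]
    exact (hsumf u hne).symm
  · exact hchild_cf
  · intro u hu
    have h0 : x u = 0 := hxleaf u ((hchempty u).2 hu)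
    show x u * f u = 0
    rw [h0, zero_mul]
  -- uniqueness
  rintro ⟨F, C⟩ ⟨hy1, hy2, hy3, hy4, hy5, hy6⟩
  simp only at hy1 hy2 hy3 hy4 hy5 hy6
  have hy4' : ∀ u, ch u ≠ ∅ → F u = ∑ w ∈ ch u, F w := by
    intro u hu
    have hne : {w | childRel T r u w}.Nonempty := by
      rw [Set.nonempty_iff_ne_empty]
      intro h
      exact hu ((hchempty u).2 h)
    rw [← hfinsum F u]
    exact hy4 u hne
  -- 2 C v ≤ F v off root at branch vertices
  have hCF2 : ∀ v, v ≠ r → ch v ≠ ∅ → 2 * C v ≤ F v := by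
    intro v hv hch
    rcases hb v hv with h | hcard
    · exact absurd h hch
    have hsum : F v = ∑ w ∈ ch v, F w := hy4' v hch
    have hge : ∑ w ∈ ch v, C v ≤ ∑ w ∈ ch v, F w := by
      apply Finset.sum_le_sum
      intro w hw
      have h5 := hy5 v w ((hchmem v w).1 hw)
      have := hy2 w
      linarith
    have hconst : ∑ _w ∈ ch v, C v = ((ch v).card : ℝ) * C v := by
      rw [Finset.sum_const, nsmul_eq_mul]
    have hc2 : (2:ℝ) ≤ ((ch v).card : ℝ) := by exact_mod_cast hcard
    have hC0 := hy2 v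
    nlinarith [hge, hconst, hsum]
  have hA : ∀ v, v ≠ r → C v = F v → F v = 0 := by
    intro v hv hCF
    by_cases hch : ch v = ∅
    · have h0 := hy6 v ((hchempty v).1 hch)
      rw [← hCF]; exact h0
    · have := hCF2 v hv hch
      have := hy1 v
      linarith
  have hkill : ∀ u, ch u ≠ ∅ → C u = 0 → F u = 0 := by
    intro u hu hCu
    have hallzero : ∀ w ∈ ch u, F w = 0 := by
      intro w hw
      have hcw := (hchmem u w).1 hw
      have h5 := hy5 u w hcw
      exact hA w (hner u w hw) (by linarith)
    rw [hy4' u hu, Finset.sum_congr rfl hallzero]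
    simp
  have hFpos : ∀ n v, T.dist r v = n → 0 < F v := by
    intro n
    induction n with
    | zero => intro v h; rw [hroot0 v h, hy3]; norm_num
    | succ n ih =>
      intro v h
      have hvr : v ≠ r := by
        intro hv; rw [hv, SimpleGraph.dist_self] at h; omega
      obtain ⟨u, hu⟩ := parent_exists hconn hvr
      have hdu : T.dist r u = n := by have := hu.2; omega
      have hFu := ih u hdu
      by_contra hFv
      push_neg at hFv
      have hFv0 : F v = 0 := le_antisymm hFv (hy1 v)
      have h5 := hy5 u v hu
      have hCu0 : C u = 0 := by
        have := hy2 u; have := hy2 v; linarith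
      have hFu0 : F u = 0 := hkill u (hchne u v hu) hCu0
      linarith
  have hFpos' : ∀ v, 0 < F v := fun v => hFpos _ v rfl
  have hCpos : ∀ u, ch u ≠ ∅ → 0 < C u := by
    intro u hu
    rcases lt_or_eq_of_le (hy2 u) with h | h
    · exact h
    · exfalso
      have := hkill u hu h.symm
      have := hFpos' u
      linarith
  set ξ : V → ℝ := fun v => C v / F v with hξdef
  have hξ0 : ∀ v, 0 ≤ ξ v := fun v => div_nonneg (hy2 v) (hFpos' v).le
  have hξleaf : ∀ v, ch v = ∅ → ξ v = 0 := by
    intro v h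
    have h0 := hy6 v ((hchempty v).1 h)
    show C v / F v = 0
    rw [h0, zero_div]
  have hξhalf : ∀ v, v ≠ r → ξ v ≤ 1/2 := by
    intro v hv
    by_cases hch : ch v = ∅
    · rw [hξleaf v hch]; norm_num
    · have h2 := hCF2 v hv hch
      have hF := hFpos' v
      show C v / F v ≤ 1/2
      rw [div_le_iff₀ hF]
      linarith
  have hξeq : ∀ v, ch v ≠ ∅ → ξ v * ∑ w ∈ ch v, (1 - ξ w)⁻¹ = 1 := by
    intro v hv
    have hCv := hCpos v hv
    have hterm : ∀ w ∈ ch v, (1 - ξ w)⁻¹ = F w / C v := by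
      intro w hw
      have hcw := (hchmem v w).1 hw
      have h5 := hy5 v w hcw
      have hFw := hFpos' w
      have h1 : 1 - ξ w = C v / F w := by
        show 1 - C w / F w = C v / F w
        field_simp
        linarith
      rw [h1, inv_div]
    rw [Finset.sum_congr rfl hterm, ← Finset.sum_div, ← hy4' v hv]
    show C v / F v * (F v / C v) = 1
    rw [div_mul_div_comm, mul_comm (F v) (C v),
      div_self (mul_ne_zero hCv.ne' (hFpos' v).ne')]
  have hxξ : x = ξ := by
    apply pair_unique r ch hner hb x ξ x ξ
      (fun w _ => hx0 w) hxhalf (fun w _ => hξ0 w) hξhalf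
      (fun w => rfl)
      (fun w hw => by
        have h1 := hx0 w; have h2 := hxhalf w hw
        have h3 := hξ0 w; have h4 := hξhalf w hw
        rw [abs_le]; constructor <;> linarith)
      (fun v h => by rw [hxleaf v h, hξleaf v h])
      (fun v h => (hxeq v h).2)
      hξeq
  have hCval : ∀ v, C v = x v * F v := by
    intro v
    rw [hxξ]
    show C v = C v / F v * F v
    rw [div_mul_cancel₀ _ (hFpos' v).ne']
  have hFf : ∀ n v, T.dist r v = n → F v = f v := by
    intro n
    induction n with
    | zero => intro v h; rw [hroot0 v h, hy3, hfr]
    | succ n ih =>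
      intro v h
      have hvr : v ≠ r := by
        intro hv; rw [hv, SimpleGraph.dist_self] at h; omega
      obtain ⟨u, hu⟩ := parent_exists hconn hvr
      have hdu : T.dist r u = n := by have := hu.2; omega
      have hFu := ih u hdu
      have h5 := hy5 u v hu
      have hCu := hCval u
      have hCv := hCval v
      have hx1 : (0:ℝ) < 1 - x v := by have := hxhalf v hvr; linarith
      have hFveq : F v * (1 - x v) = F u * x u := by
        linear_combination hCu + hCv - h5
      rw [hcf u v hu, ← hFu, eq_div_iff hx1.ne']
      linarith [hFveq]
  have hFeq : F = f := funext fun v => hFf _ v rfl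
  have hCeq : C = c := by
    funext v
    show C v = x v * f v
    rw [hCval v, hFeq]
  rw [Prod.mk.injEq]
  exact ⟨hFeq, hCeq⟩
end
end

section
/- Let W ∈ 𝒲₀ be a stepfunction which is d-regular and satisfies ∫_{[0,1]⁴} W(x₁,x₂)W(x₂,x₃)W(x₃,x₄)(1 − W(x₁,x₃))(1 − W(x₂,x₄))(1 − W(x₁,x₄)) dx₁dx₂dx₃dx₄ = 0 (i.e. the density of induced paths on four vertices in W is zero, so W is a complement reducible graphon). Then d is a rational number. -/
open MeasureTheory
open scoped Classical

noncomputable section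

/-- `W ∈ 𝒲` is a stepfunction: there is a finite measurable partition of `[0,1]`
such that `W` is a.e. constant on each product of classes. -/
def IsStepfunction (W : ℝ → ℝ → ℝ) : Prop :=
  ∃ (n : ℕ) (S : Fin n → Set ℝ),
    (∀ i, MeasurableSet (S i)) ∧
    (Pairwise fun i j => Disjoint (S i) (S j)) ∧
    (⋃ i, S i) = I01 ∧
    ∀ i j, ∃ c : ℝ, ∀ᵐ q : ℝ × ℝ ∂(volume.restrict ((S i) ×ˢ (S j))), W q.1 q.2 = c


section Aux

lemma ae_cons {n : ℕ} (p : (Fin (n+1) → ℝ) → Prop)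
    (h : ∀ᵐ x ∂(volume : Measure (Fin (n+1) → ℝ)), p x) :
    ∀ᵐ a ∂(volume : Measure ℝ), ∀ᵐ y ∂(volume : Measure (Fin n → ℝ)), p (Fin.cons a y) := by
  have mp := (volume_preserving_piFinSuccAbove (fun _ : Fin (n+1) => ℝ) 0).symm
  have h2 := mp.quasiMeasurePreserving.tendsto_ae.eventually h
  rw [Measure.volume_eq_prod] at h2
  have h3 := Measure.ae_ae_of_ae_prod h2
  refine h3.mono fun a ha => ha.mono fun y hy => ?_
  simpa [MeasurableEquiv.piFinSuccAbove_symm_apply, Fin.insertNth_zero', Fin.consEquiv] using hy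

lemma ae_one (p : (Fin 1 → ℝ) → Prop)
    (h : ∀ᵐ x ∂(volume : Measure (Fin 1 → ℝ)), p x) :
    ∀ᵐ d ∂(volume : Measure ℝ), p (fun _ => d) := by
  have mp := (volume_preserving_funUnique (Fin 1) ℝ).symm
  have h2 := mp.quasiMeasurePreserving.tendsto_ae.eventually h
  simp at h2
  refine h2.mono fun x hx => ?_
  have hu : (uniqueElim x : Fin 1 → ℝ) = fun _ => x := funext fun i => uniqueElim_const x i
  rwa [hu] at hx

lemma ae_fin4 (p : (Fin 4 → ℝ) → Prop)
    (h : ∀ᵐ x ∂(volume : Measure (Fin 4 → ℝ)), p x) :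
    ∀ᵐ a ∂(volume : Measure ℝ), ∀ᵐ b ∂(volume : Measure ℝ),
      ∀ᵐ c ∂(volume : Measure ℝ), ∀ᵐ d ∂(volume : Measure ℝ), p ![a,b,c,d] := by
  refine (ae_cons _ h).mono fun a ha => ?_
  refine (ae_cons _ ha).mono fun b hb => ?_
  refine (ae_cons _ hb).mono fun c hc => ?_
  refine (ae_one _ hc).mono fun d hd => ?_
  have e : (fun _ : Fin 1 => d) = ![d] := by
    funext i; rw [Subsingleton.elim i 0]; rfl
  rw [e] at hd
  exact hd

variable {α : Type*} [DecidableEq α]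

/-- Symmetry of a relation on a finite vertex set. -/
def SymOn (R : α → α → Prop) (V : Finset α) : Prop :=
  ∀ a ∈ V, ∀ b ∈ V, R a b → R b a

/-- No induced path on four distinct vertices. -/
def P4Free (R : α → α → Prop) (V : Finset α) : Prop :=
  ∀ a ∈ V, ∀ b ∈ V, ∀ c ∈ V, ∀ d ∈ V,
    a ≠ b → a ≠ c → a ≠ d → b ≠ c → b ≠ d → c ≠ d →
    R a b → R b c → R c d → ¬R a c → ¬R b d → ¬R a d → False

lemma SymOn.mono' {R : α → α → Prop} {V V' : Finset α} (h : SymOn R V) (hs : V' ⊆ V) :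
    SymOn R V' := fun a ha b hb => h a (hs ha) b (hs hb)

lemma P4Free.mono' {R : α → α → Prop} {V V' : Finset α} (h : P4Free R V) (hs : V' ⊆ V) :
    P4Free R V' := fun a ha b hb c hc d hd => h a (hs ha) b (hs hb) c (hs hc) d (hs hd)

lemma P4Free.compl {R : α → α → Prop} {V : Finset α} (hsym : SymOn R V) (h : P4Free R V) :
    P4Free (fun a b => ¬ R a b) V := by
  intro a ha b hb c hc d hd hab hac had hbc hbd hcd nab nbc ncd hac' hbd' had'
  replace hac' : R a c := not_not.1 hac'
  replace hbd' : R b d := not_not.1 hbd'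
  replace had' : R a d := not_not.1 had'
  exact h c hc a ha d hd b hb (Ne.symm hac) hcd (Ne.symm hbc) had hab (Ne.symm hbd)
    (hsym a ha c hc hac') had' (hsym b hb d hd hbd') ncd nab
    (fun h' => nbc (hsym c hc b hb h'))

/-- One step of the Seinsche argument: given a "union" split of `V.erase v`,
produce a split of `V`. -/
lemma auxCase {R : α → α → Prop} {V : Finset α} (hsym : SymOn R V) (hfree : P4Free R V)
    {v : α} (hv : v ∈ V) {A B : Finset α}
    (hA : A ⊆ V.erase v) (hB : B ⊆ V.erase v) (hAB : V.erase v ⊆ A ∪ B)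
    (hdisj : Disjoint A B)
    (hcross : ∀ a ∈ A, ∀ b ∈ B, ¬ R a b)
    {u : α} (hu : u ∈ A) (huv : ¬ R v u) {b₀ : α} (hb₀ : b₀ ∈ B) (hvb₀ : R v b₀) :
    ∃ A' : Finset α, A' ⊆ V ∧ A'.Nonempty ∧ (V \ A').Nonempty ∧
      (∀ a ∈ A', ∀ b ∈ V \ A', ¬ R a b) := by
  have hAV : A ⊆ V := hA.trans (Finset.erase_subset _ _)
  have hBV : B ⊆ V := hB.trans (Finset.erase_subset _ _)
  refine ⟨A.filter (fun a => ¬ R v a), (Finset.filter_subset _ _).trans hAV,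
    ⟨u, Finset.mem_filter.2 ⟨hu, huv⟩⟩, ⟨v, Finset.mem_sdiff.2 ⟨hv, fun hvmem => ?_⟩⟩, ?_⟩
  · exact Finset.notMem_erase v V (hA ((Finset.filter_subset _ _) hvmem))
  · intro y hy x hx
    obtain ⟨hyA, hyv⟩ := Finset.mem_filter.1 hy
    obtain ⟨hxV, hxA'⟩ := Finset.mem_sdiff.1 hx
    by_cases hxv : x = v
    · subst hxv
      exact fun h' => hyv (hsym y (hAV hyA) x hv h')
    · have hxe : x ∈ V.erase v := Finset.mem_erase.2 ⟨hxv, hxV⟩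
      rcases Finset.mem_union.1 (hAB hxe) with hxA | hxB
      · -- x ∈ A but not filtered : R v x
        have hvx : R v x := by
          by_contra h'
          exact hxA' (Finset.mem_filter.2 ⟨hxA, h'⟩)
        -- suppose R y x : P4 on (y, x, v, b₀)
        intro hyx
        have hyv' : y ≠ v := Finset.ne_of_mem_erase (hA hyA)
        have hxv' : x ≠ v := hxv
        have hyb₀ : y ≠ b₀ := fun h => (Finset.disjoint_left.1 hdisj hyA) (h ▸ hb₀)
        have hxb₀ : x ≠ b₀ := fun h => (Finset.disjoint_left.1 hdisj hxA) (h ▸ hb₀)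
        have hvb₀' : v ≠ b₀ := fun h => Finset.notMem_erase v V (h ▸ hB hb₀)
        have hyx' : y ≠ x := fun h => hyv (h ▸ hvx)
        exact hfree y (hAV hyA) x (hAV hxA) v hv b₀ (hBV hb₀)
          hyx' hyv' hyb₀ hxv' hxb₀ hvb₀'
          hyx (hsym v hv x (hAV hxA) hvx) hvb₀
          (fun h' => hyv (hsym y (hAV hyA) v hv h'))
          (hcross x hxA b₀ hb₀) (hcross y hyA b₀ hb₀)
      · exact hcross y hyA x hxB

/-- Seinsche's theorem: a `P₄`-free graph on at least two vertices is
disconnected or its complement is disconnected (in split form). -/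
lemma seinsche {R : α → α → Prop} : ∀ (N : ℕ) (V : Finset α), V.card ≤ N →
    SymOn R V → P4Free R V → 2 ≤ V.card →
    ∃ A : Finset α, A ⊆ V ∧ A.Nonempty ∧ (V \ A).Nonempty ∧
      ((∀ a ∈ A, ∀ b ∈ V \ A, ¬ R a b) ∨ (∀ a ∈ A, ∀ b ∈ V \ A, R a b)) := by
  intro N
  induction N with
  | zero => intro V hc _ _ h2; omega
  | succ N ih =>
    intro V hc hsym hfree h2
    obtain ⟨v, hv⟩ := (Finset.card_pos (s := V)).1 (by omega)
    set V' := V.erase v with hV'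
    have hcard' : V'.card = V.card - 1 := Finset.card_erase_of_mem hv
    have hV'sub : V' ⊆ V := Finset.erase_subset _ _
    by_cases hsmall : V.card = 2
    · -- V = {v, w}
      obtain ⟨w, hw⟩ : V'.Nonempty := Finset.card_pos.1 (by omega)
      have hwv : w ≠ v := Finset.ne_of_mem_erase hw
      have hwV : w ∈ V := hV'sub hw
      refine ⟨{v}, Finset.singleton_subset_iff.2 hv, ⟨v, Finset.mem_singleton_self v⟩,
        ⟨w, Finset.mem_sdiff.2 ⟨hwV, fun h => hwv (Finset.mem_singleton.1 h)⟩⟩, ?_⟩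
      by_cases hR : R v w
      · refine Or.inr fun a ha b hb => ?_
        have hav : a = v := Finset.mem_singleton.1 ha
        obtain ⟨hbV, hbv⟩ := Finset.mem_sdiff.1 hb
        have hbw : b = w := by
          have hbe : b ∈ V' := Finset.mem_erase.2 ⟨fun h => hbv (h ▸ Finset.mem_singleton_self v), hbV⟩
          have : V'.card = 1 := by omega
          obtain ⟨x, hx⟩ := Finset.card_eq_one.1 this
          rw [hx] at hbe hw
          rw [Finset.mem_singleton.1 hbe, Finset.mem_singleton.1 hw]
        subst hav; subst hbw; exact hR
      · refine Or.inl fun a ha b hb => ?_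
        have hav : a = v := Finset.mem_singleton.1 ha
        obtain ⟨hbV, hbv⟩ := Finset.mem_sdiff.1 hb
        have hbw : b = w := by
          have hbe : b ∈ V' := Finset.mem_erase.2 ⟨fun h => hbv (h ▸ Finset.mem_singleton_self v), hbV⟩
          have : V'.card = 1 := by omega
          obtain ⟨x, hx⟩ := Finset.card_eq_one.1 this
          rw [hx] at hbe hw
          rw [Finset.mem_singleton.1 hbe, Finset.mem_singleton.1 hw]
        subst hav; subst hbw; exact hR
    · -- V.card ≥ 3, so V'.card ≥ 2
      have h2' : 2 ≤ V'.card := by omega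
      obtain ⟨A, hAsub, hAne, hBne, hsplit⟩ :=
        ih V' (by omega) (hsym.mono' hV'sub) (hfree.mono' hV'sub) h2'
      set B := V' \ A with hB
      have hBsub : B ⊆ V' := Finset.sdiff_subset
      have hABcov : V' ⊆ A ∪ B := fun x hx => by
        by_cases hxA : x ∈ A
        · exact Finset.mem_union.2 (Or.inl hxA)
        · exact Finset.mem_union.2 (Or.inr (Finset.mem_sdiff.2 ⟨hx, hxA⟩))
      have hdisj : Disjoint A B := Finset.disjoint_sdiff
      -- helper to handle the union case for an arbitrary symmetric P4-free relation
      have main : ∀ (R' : α → α → Prop), SymOn R' V → P4Free R' V →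
          (∀ a ∈ A, ∀ b ∈ B, ¬ R' a b) →
          ∃ A' : Finset α, A' ⊆ V ∧ A'.Nonempty ∧ (V \ A').Nonempty ∧
            ((∀ a ∈ A', ∀ b ∈ V \ A', ¬ R' a b) ∨ (∀ a ∈ A', ∀ b ∈ V \ A', R' a b)) := by
        intro R' hsym' hfree' hcross
        by_cases hA0 : ∀ a ∈ A, ¬ R' v a
        · -- A is split off from all of V
          refine ⟨A, hAsub.trans hV'sub, hAne,
            ⟨v, Finset.mem_sdiff.2 ⟨hv, fun h => Finset.notMem_erase v V (hAsub h)⟩⟩,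
            Or.inl fun a ha b hb => ?_⟩
          obtain ⟨hbV, hbA⟩ := Finset.mem_sdiff.1 hb
          by_cases hbv : b = v
          · subst hbv
            exact fun h' => hA0 a ha (hsym' a (hV'sub (hAsub ha)) b hbV h')
          · have hbe : b ∈ V' := Finset.mem_erase.2 ⟨hbv, hbV⟩
            rcases Finset.mem_union.1 (hABcov hbe) with h | h
            · exact absurd h hbA
            · exact hcross a ha b h
        by_cases hB0 : ∀ b ∈ B, ¬ R' v b
        · refine ⟨B, hBsub.trans hV'sub, hBne,
            ⟨v, Finset.mem_sdiff.2 ⟨hv, fun h => Finset.notMem_erase v V (hBsub h)⟩⟩,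
            Or.inl fun b hb x hx => ?_⟩
          obtain ⟨hxV, hxB⟩ := Finset.mem_sdiff.1 hx
          by_cases hxv : x = v
          · subst hxv
            exact fun h' => hB0 b hb (hsym' b (hV'sub (hBsub hb)) x hxV h')
          · have hxe : x ∈ V' := Finset.mem_erase.2 ⟨hxv, hxV⟩
            rcases Finset.mem_union.1 (hABcov hxe) with h | h
            · exact fun h' => hcross x h b hb
                (hsym' b (hV'sub (hBsub hb)) x (hV'sub hxe) h')
            · exact absurd h hxB
        push_neg at hA0 hB0
        obtain ⟨a₀, ha₀, hva₀⟩ := hA0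
        obtain ⟨b₀, hb₀, hvb₀⟩ := hB0
        by_cases hall : ∀ u ∈ V', R' v u
        · -- v joined to everything : complement split {V'} ∪ {v}
          refine ⟨V', hV'sub, ⟨a₀, hAsub ha₀⟩,
            ⟨v, Finset.mem_sdiff.2 ⟨hv, Finset.notMem_erase v V⟩⟩,
            Or.inr fun a ha b hb => ?_⟩
          obtain ⟨hbV, hbV'⟩ := Finset.mem_sdiff.1 hb
          have hbv : b = v := by
            by_contra h
            exact hbV' (Finset.mem_erase.2 ⟨h, hbV⟩)
          subst hbv
          exact hsym' b hv a (hV'sub ha) (hall a ha)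
        push_neg at hall
        obtain ⟨u, hu, hvu⟩ := hall
        rcases Finset.mem_union.1 (hABcov hu) with huA | huB
        · obtain ⟨A', h1, h2, h3, h4⟩ := auxCase hsym' hfree' hv hAsub hBsub hABcov hdisj
            hcross huA hvu hb₀ hvb₀
          exact ⟨A', h1, h2, h3, Or.inl h4⟩
        · obtain ⟨A', h1, h2, h3, h4⟩ := auxCase hsym' hfree' hv hBsub hAsub
            (fun x hx => Finset.union_comm A B ▸ hABcov hx) hdisj.symm
            (fun b hb a ha h' => hcross a ha b hb (hsym' b (hV'sub (hBsub hb)) a (hV'sub (hAsub ha)) h'))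
            huB hvu ha₀ hva₀
          exact ⟨A', h1, h2, h3, Or.inl h4⟩
      rcases hsplit with hU | hJ
      · exact main R hsym hfree hU
      · obtain ⟨A', h1, h2', h3, h4⟩ := main (fun a b => ¬ R a b)
          (fun a ha b hb h' h'' => h' (hsym b hb a ha h''))
          (hfree.compl hsym)
          (fun a ha b hb h' => h' (hJ a ha b (hB ▸ hb)))
        refine ⟨A', h1, h2', h3, ?_⟩
        rcases h4 with h | h
        · exact Or.inr fun a ha b hb => not_not.1 (h a ha b hb)
        · exact Or.inl fun a ha b hb => h a ha b hb

/-- The weighted rationality lemma: a regular `P₄`-free weighted 0-1 pattern has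
degree a rational multiple of its total weight. -/
lemma weighted_rat {α : Type*} [DecidableEq α] : ∀ (N : ℕ) (V : Finset α), V.card ≤ N →
    ∀ (μ : α → ℝ) (K : α → α → ℝ) (d : ℝ),
    V.Nonempty →
    (∀ i ∈ V, 0 < μ i) →
    (∀ i ∈ V, ∀ j ∈ V, K i j = K j i) →
    (∀ i ∈ V, ∀ j ∈ V, K i j = 0 ∨ K i j = 1) →
    (∀ i ∈ V, ∀ j ∈ V, ∀ k ∈ V, ∀ l ∈ V,
      i ≠ j → i ≠ k → i ≠ l → j ≠ k → j ≠ l → k ≠ l →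
      ¬(K i j = 1 ∧ K j k = 1 ∧ K k l = 1 ∧ K i k = 0 ∧ K j l = 0 ∧ K i l = 0)) →
    (∀ i ∈ V, ∑ j ∈ V, K i j * μ j = d) →
    ∃ q : ℚ, d = (q : ℝ) * ∑ j ∈ V, μ j := by
  intro N
  induction N with
  | zero =>
    intro V hc μ K d hne
    obtain ⟨i, hi⟩ := hne
    have := Finset.card_pos.2 ⟨i, hi⟩
    omega
  | succ N ih =>
    intro V hc μ K d hne hpos hsymK hzo hfree hreg
    by_cases hone : V.card = 1
    · obtain ⟨i, hVi⟩ := Finset.card_eq_one.1 hone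
      subst hVi
      have hi : i ∈ ({i} : Finset α) := Finset.mem_singleton_self i
      have hd := hreg i hi
      rw [Finset.sum_singleton] at hd
      rcases hzo i hi i hi with h | h
      · exact ⟨0, by rw [Finset.sum_singleton]; rw [h] at hd; simpa using hd.symm⟩
      · exact ⟨1, by rw [Finset.sum_singleton]; rw [h] at hd; simpa using hd.symm⟩
    · have h2 : 2 ≤ V.card := by
        have := Finset.card_pos.2 hne; omega
      -- the adjacency relation
      set R : α → α → Prop := fun a b => K a b = 1 with hR
      have hsymR : SymOn R V := fun a ha b hb h => by rw [hR]; dsimp only; rw [hsymK b hb a ha]; exact h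
      have hfreeR : P4Free R V := by
        intro a ha b hb c hc d hd hab hac had hbc hbd hcd r1 r2 r3 n1 n2 n3
        refine hfree a ha b hb c hc d hd hab hac had hbc hbd hcd ⟨r1, r2, r3, ?_, ?_, ?_⟩
        · rcases hzo a ha c hc with h | h; exact h; exact absurd h n1
        · rcases hzo b hb d hd with h | h; exact h; exact absurd h n2
        · rcases hzo a ha d hd with h | h; exact h; exact absurd h n3
      obtain ⟨A, hAsub, hAne, hBne, hsplit⟩ := seinsche (N+1) V hc hsymR hfreeR h2
      set B := V \ A with hB
      have hBsub : B ⊆ V := Finset.sdiff_subset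
      have hcardA : A.card < V.card := Finset.card_lt_card ⟨hAsub, fun h => by
        obtain ⟨b, hb⟩ := hBne
        obtain ⟨hbV, hbA⟩ := Finset.mem_sdiff.1 hb
        exact hbA (h hbV)⟩
      have hcardB : B.card < V.card := Finset.card_lt_card ⟨hBsub, fun h => by
        obtain ⟨a, ha⟩ := hAne
        have := Finset.mem_sdiff.1 (h (hAsub ha))
        exact this.2 ha⟩
      have hsum : ∀ f : α → ℝ, ∑ j ∈ B, f j + ∑ j ∈ A, f j = ∑ j ∈ V, f j :=
        fun f => Finset.sum_sdiff hAsub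
      set mA := ∑ j ∈ A, μ j with hmA
      set mB := ∑ j ∈ B, μ j with hmB
      have hmApos : 0 < mA := Finset.sum_pos (fun i hi => hpos i (hAsub hi)) hAne
      have hmBpos : 0 < mB := Finset.sum_pos (fun i hi => hpos i (hBsub hi)) hBne
      -- restrictions of hypotheses
      have res : ∀ (C : Finset α), C ⊆ V → C.card ≤ N → C.Nonempty → ∀ d' : ℝ,
          (∀ i ∈ C, ∑ j ∈ C, K i j * μ j = d') →
          ∃ q : ℚ, d' = (q : ℝ) * ∑ j ∈ C, μ j := by
        intro C hCsub hCcard hCne d' hreg'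
        exact ih C hCcard μ K d' hCne (fun i hi => hpos i (hCsub hi))
          (fun i hi j hj => hsymK i (hCsub hi) j (hCsub hj))
          (fun i hi j hj => hzo i (hCsub hi) j (hCsub hj))
          (fun i hi j hj k hk l hl => hfree i (hCsub hi) j (hCsub hj) k (hCsub hk) l (hCsub hl))
          hreg'
      have hmV : ∑ j ∈ V, μ j = mB + mA := (hsum μ).symm
      rcases hsplit with hU | hJ
      · -- union case : no edges between A and B, so K = 0 across
        have hcross : ∀ a ∈ A, ∀ b ∈ B, K a b = 0 := by
          intro a ha b hb
          rcases hzo a (hAsub ha) b (hBsub hb) with h | h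
          · exact h
          · exact absurd h (hU a ha b hb)
        obtain ⟨qA, hqA⟩ := res A hAsub (by omega) hAne d (by
          intro i hi
          have := hreg i (hAsub hi)
          rw [← hsum (fun j => K i j * μ j)] at this
          have hz : ∑ j ∈ B, K i j * μ j = 0 := Finset.sum_eq_zero (fun j hj => by
            rw [hcross i hi j hj, zero_mul])
          linarith)
        obtain ⟨qB, hqB⟩ := res B hBsub (by omega) hBne d (by
          intro i hi
          have := hreg i (hBsub hi)
          rw [← hsum (fun j => K i j * μ j)] at this
          have hz : ∑ j ∈ A, K i j * μ j = 0 := Finset.sum_eq_zero (fun j hj => by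
            rw [hsymK i (hBsub hi) j (hAsub hj), hcross j hj i hi, zero_mul])
          linarith)
        rw [← hmA] at hqA
        rw [← hmB] at hqB
        by_cases hd : d = 0
        · refine ⟨0, ?_⟩
          rw [hd]
          push_cast
          rw [zero_mul]
        · have hqA0 : (qA : ℝ) ≠ 0 := fun h => hd (by rw [hqA, h, zero_mul])
          have hqB0 : (qB : ℝ) ≠ 0 := fun h => hd (by rw [hqB, h, zero_mul])
          refine ⟨(qA⁻¹ + qB⁻¹)⁻¹, ?_⟩
          have hmAe : mA = d * (qA : ℝ)⁻¹ := by
            rw [hqA, mul_comm (qA : ℝ) mA, mul_inv_cancel_right₀ hqA0]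
          have hmBe : mB = d * (qB : ℝ)⁻¹ := by
            rw [hqB, mul_comm (qB : ℝ) mB, mul_inv_cancel_right₀ hqB0]
          have hcast : ((qA⁻¹ + qB⁻¹ : ℚ) : ℝ) = (qA:ℝ)⁻¹ + (qB:ℝ)⁻¹ := by push_cast; ring
          have hmsum : mB + mA = d * ((qA:ℝ)⁻¹ + (qB:ℝ)⁻¹) := by
            rw [hmAe, hmBe]; ring
          have hsne : (qA:ℝ)⁻¹ + (qB:ℝ)⁻¹ ≠ 0 := by
            intro h
            rw [h, mul_zero] at hmsum
            linarith
          rw [hmV, Rat.cast_inv, hcast, hmsum, mul_comm d ((qA:ℝ)⁻¹ + (qB:ℝ)⁻¹),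
            ← mul_assoc, inv_mul_cancel₀ hsne, one_mul]
      · -- join case : K = 1 across
        have hcross : ∀ a ∈ A, ∀ b ∈ B, K a b = 1 := fun a ha b hb => hJ a ha b hb
        obtain ⟨qA, hqA⟩ := res A hAsub (by omega) hAne (d - mB) (by
          intro i hi
          have := hreg i (hAsub hi)
          rw [← hsum (fun j => K i j * μ j)] at this
          have hz : ∑ j ∈ B, K i j * μ j = mB := by
            rw [hmB]
            refine Finset.sum_congr rfl (fun j hj => by rw [hcross i hi j hj, one_mul])
          linarith)
        obtain ⟨qB, hqB⟩ := res B hBsub (by omega) hBne (d - mA) (by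
          intro i hi
          have := hreg i (hBsub hi)
          rw [← hsum (fun j => K i j * μ j)] at this
          have hz : ∑ j ∈ A, K i j * μ j = mA := by
            rw [hmA]
            refine Finset.sum_congr rfl (fun j hj => by
              rw [hsymK i (hBsub hi) j (hAsub hj), hcross j hj i hi, one_mul])
          linarith)
        rw [← hmA] at hqA
        rw [← hmB] at hqB
        have heA : d - (mB + mA) = ((qA : ℝ) - 1) * mA := by rw [sub_one_mul]; linarith
        have heB : d - (mB + mA) = ((qB : ℝ) - 1) * mB := by rw [sub_one_mul]; linarith
        by_cases hd : d - (mB + mA) = 0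
        · refine ⟨1, ?_⟩
          rw [hmV]
          push_cast
          rw [one_mul]
          linarith
        · have hqA1 : ((qA : ℝ) - 1) ≠ 0 := fun h => hd (by rw [heA, h, zero_mul])
          have hqB1 : ((qB : ℝ) - 1) ≠ 0 := fun h => hd (by rw [heB, h, zero_mul])
          refine ⟨1 + ((qA - 1)⁻¹ + (qB - 1)⁻¹)⁻¹, ?_⟩
          have hmAe : mA = (d - (mB + mA)) * ((qA : ℝ) - 1)⁻¹ := by
            rw [heA, mul_comm ((qA:ℝ) - 1) mA, mul_inv_cancel_right₀ hqA1]
          have hmBe : mB = (d - (mB + mA)) * ((qB : ℝ) - 1)⁻¹ := by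
            rw [heB, mul_comm ((qB:ℝ) - 1) mB, mul_inv_cancel_right₀ hqB1]
          have hcast : (((qA - 1)⁻¹ + (qB - 1)⁻¹ : ℚ) : ℝ) = ((qA:ℝ) - 1)⁻¹ + ((qB:ℝ) - 1)⁻¹ := by
            push_cast; ring
          have hmsum : mB + mA = (d - (mB + mA)) * (((qA:ℝ) - 1)⁻¹ + ((qB:ℝ) - 1)⁻¹) := by
            have h' : (d - (mB + mA)) * (((qA:ℝ) - 1)⁻¹ + ((qB:ℝ) - 1)⁻¹) = mA + mB := by
              rw [mul_add, ← hmAe, ← hmBe]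
            linarith
          have hsne : ((qA:ℝ) - 1)⁻¹ + ((qB:ℝ) - 1)⁻¹ ≠ 0 := by
            intro h
            rw [h, mul_zero] at hmsum
            linarith
          have h2 : (((qA:ℝ) - 1)⁻¹ + ((qB:ℝ) - 1)⁻¹)⁻¹ * (mB + mA) = d - (mB + mA) := by
            nth_rewrite 1 [hmsum]
            rw [mul_comm (d - (mB + mA)) (((qA:ℝ) - 1)⁻¹ + ((qB:ℝ) - 1)⁻¹),
              inv_mul_cancel_left₀ hsne]
          have expand : (1 + (((qA:ℝ) - 1)⁻¹ + ((qB:ℝ) - 1)⁻¹)⁻¹) * (mB + mA)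
              = (mB + mA) + (((qA:ℝ) - 1)⁻¹ + ((qB:ℝ) - 1)⁻¹)⁻¹ * (mB + mA) := by ring
          rw [hmV, show ((1 + ((qA - 1)⁻¹ + (qB - 1)⁻¹)⁻¹ : ℚ) : ℝ)
              = 1 + (((qA:ℝ) - 1)⁻¹ + ((qB:ℝ) - 1)⁻¹)⁻¹ from by push_cast; ring]
          rw [expand, h2]
          ring

lemma unit_mul {a b : ℝ} (ha : a ∈ Set.Icc (0:ℝ) 1) (hb : b ∈ Set.Icc (0:ℝ) 1) :
    a * b ∈ Set.Icc (0:ℝ) 1 :=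
  ⟨mul_nonneg ha.1 hb.1, mul_le_one₀ ha.2 hb.1 hb.2⟩

lemma unit_sub {a : ℝ} (ha : a ∈ Set.Icc (0:ℝ) 1) : 1 - a ∈ Set.Icc (0:ℝ) 1 :=
  ⟨by linarith [ha.2], by linarith [ha.1]⟩

lemma six_prod {a b c d e f : ℝ} (ha : a ∈ Set.Icc (0:ℝ) 1) (hb : b ∈ Set.Icc (0:ℝ) 1)
    (hc : c ∈ Set.Icc (0:ℝ) 1) (hd : d ∈ Set.Icc (0:ℝ) 1) (he : e ∈ Set.Icc (0:ℝ) 1)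
    (hf : f ∈ Set.Icc (0:ℝ) 1) :
    a * b * c * (1 - d) * (1 - e) * (1 - f) ∈ Set.Icc (0:ℝ) 1 :=
  unit_mul (unit_mul (unit_mul (unit_mul (unit_mul ha hb) hc) (unit_sub hd)) (unit_sub he))
    (unit_sub hf)

lemma six_factor {a b c d e f : ℝ} (h : a * b * c * d * e * f = 0) :
    a = 0 ∨ b = 0 ∨ c = 0 ∨ d = 0 ∨ e = 0 ∨ f = 0 := by
  rcases mul_eq_zero.1 h with h' | h'
  · rcases mul_eq_zero.1 h' with h'' | h''
    · rcases mul_eq_zero.1 h'' with h3 | h3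
      · rcases mul_eq_zero.1 h3 with h4 | h4
        · rcases mul_eq_zero.1 h4 with h5 | h5
          · exact Or.inl h5
          · exact Or.inr (Or.inl h5)
        · exact Or.inr (Or.inr (Or.inl h4))
      · exact Or.inr (Or.inr (Or.inr (Or.inl h3)))
    · exact Or.inr (Or.inr (Or.inr (Or.inr (Or.inl h''))))
  · exact Or.inr (Or.inr (Or.inr (Or.inr (Or.inr h'))))


end Aux

/-- a `d`-regular stepfunction graphon whose induced-`P₄` density
vanishes (a complement-reducible graphon) has rational degree `d`. -/
theorem statement13 (W : ℝ → ℝ → ℝ) (hW : memW0 W) (hstep : IsStepfunction W)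
    (d : ℝ) (hreg : ∀ᵐ x ∂(volume.restrict I01), (∫ y in I01, W x y) = d)
    (hP4 : (∫ x in cube 4,
      W (x 0) (x 1) * W (x 1) (x 2) * W (x 2) (x 3) *
        (1 - W (x 0) (x 2)) * (1 - W (x 1) (x 3)) * (1 - W (x 0) (x 3))) = 0) :
    ∃ q : ℚ, d = (q : ℝ) := by
  obtain ⟨hWm, hWsym, hWrange⟩ := hW
  obtain ⟨n, S, hSm, hSdisj, hSunion, hSconst⟩ := hstep
  choose K hK using hSconst
  have hI01m : MeasurableSet I01 := measurableSet_Icc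
  have hI01vol : volume I01 = 1 := by simp [I01, Real.volume_Icc]
  have hSsub : ∀ i, S i ⊆ I01 := fun i => hSunion ▸ Set.subset_iUnion S i
  have hSfin : ∀ i, volume (S i) ≠ ⊤ := fun i =>
    ne_top_of_le_ne_top (by rw [hI01vol]; exact ENNReal.one_ne_top) (measure_mono (hSsub i))
  set μ : Fin n → ℝ := fun i => (volume (S i)).toReal with hμ
  set V : Finset (Fin n) := Finset.univ.filter (fun i => volume (S i) ≠ 0) with hV
  have hmemV : ∀ i, i ∈ V ↔ volume (S i) ≠ 0 := fun i => by
    simp [hV]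
  -- total mass one
  have htotu : ∑ j : Fin n, μ j = 1 := by
    have h1 : volume (⋃ i, S i) = ∑' i, volume (S i) := measure_iUnion hSdisj hSm
    rw [hSunion, hI01vol, tsum_fintype] at h1
    have h2 := congrArg ENNReal.toReal h1
    rw [ENNReal.toReal_sum (fun a _ => hSfin a)] at h2
    simpa using h2.symm
  have htot : ∑ j ∈ V, μ j = 1 := by
    rw [← htotu]
    exact Finset.sum_subset (Finset.subset_univ V) (fun j _ hj => by
      have : volume (S j) = 0 := not_not.1 (fun h => hj ((hmemV j).2 h))
      simp [hμ, this])
  have hVne : V.Nonempty := by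
    by_contra h
    rw [Finset.not_nonempty_iff_eq_empty] at h
    rw [h, Finset.sum_empty] at htot
    norm_num at htot
  -- ae machinery
  have hprod : ∀ i j, ∀ᵐ q ∂((volume.restrict (S i)).prod (volume.restrict (S j))),
      W q.1 q.2 = K i j := by
    intro i j
    have h := hK i j
    rw [Measure.volume_eq_prod, ← Measure.prod_restrict] at h
    exact h
  have hnest : ∀ i j, ∀ᵐ x ∂volume.restrict (S i), ∀ᵐ y ∂volume.restrict (S j),
      W x y = K i j := fun i j => Measure.ae_ae_of_ae_prod (hprod i j)
  have hnest' : ∀ i j, ∀ᵐ x ∂volume.restrict (S i), ∀ᵐ y ∂volume.restrict (S j),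
      W y x = K j i := by
    intro i j
    have mp : MeasurePreserving Prod.swap
        ((volume.restrict (S i)).prod (volume.restrict (S j)))
        ((volume.restrict (S j)).prod (volume.restrict (S i))) :=
      Measure.measurePreserving_swap
    have h := mp.quasiMeasurePreserving.tendsto_ae.eventually (hprod j i)
    exact Measure.ae_ae_of_ae_prod h
  have hmem : ∀ i, ∀ᵐ x ∂volume.restrict (S i), x ∈ S i := fun i => ae_restrict_mem (hSm i)
  have hne : ∀ i ∈ V, (ae (volume.restrict (S i))).NeBot := by
    intro i hi
    rw [ae_neBot]
    intro h
    exact ((hmemV i).1 hi) (Measure.restrict_eq_zero.1 h)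
  -- symmetry of the constants
  have hKsym : ∀ i ∈ V, ∀ j ∈ V, K i j = K j i := by
    intro i hi j hj
    haveI := hne i hi
    haveI := hne j hj
    have hae : ∀ᵐ x ∂volume.restrict (S i), ∀ᵐ y ∂volume.restrict (S j), K i j = K j i := by
      filter_upwards [hnest i j, hnest' i j, hmem i] with x hx1 hx2 hxm
      filter_upwards [hx1, hx2, hmem j] with y hy1 hy2 hym
      rw [← hy1, ← hy2, hWsym x (hSsub i hxm) y (hSsub j hym)]
    obtain ⟨x, hx⟩ := hae.exists
    obtain ⟨y, hy⟩ := hx.exists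
    exact hy
  -- degrees
  haveI hfinI01 : IsFiniteMeasure (volume.restrict I01) := by
    constructor
    rw [Measure.restrict_apply_univ, hI01vol]
    exact ENNReal.one_lt_top
  have hdeg : ∀ i ∈ V, ∑ j ∈ V, K i j * μ j = d := by
    intro i hi
    haveI := hne i hi
    have h1 : ∀ᵐ x ∂volume.restrict (S i), (∫ y in I01, W x y) = d :=
      hreg.filter_mono (ae_mono (Measure.restrict_mono (hSsub i) le_rfl))
    have h2 : ∀ᵐ x ∂volume.restrict (S i), ∀ j : Fin n,
        ∀ᵐ y ∂volume.restrict (S j), W x y = K i j := ae_all_iff.2 fun j => hnest i j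
    obtain ⟨x, hx1, hx2, hxm⟩ := ((h1.and (h2.and (hmem i)))).exists
    have hWxm : Measurable (W x) := hWm.of_uncurry_left
    have hint : IntegrableOn (W x) I01 volume := by
      refine Integrable.mono' (integrable_const 1) hWxm.aestronglyMeasurable ?_
      filter_upwards [ae_restrict_mem hI01m] with y hy
      have := hWrange x (hSsub i hxm) y hy
      rw [Real.norm_eq_abs, abs_le]
      exact ⟨by linarith [this.1], this.2⟩
    have hdecomp : (∫ y in I01, W x y) = ∑ j : Fin n, ∫ y in S j, W x y := by
      rw [← hSunion]
      rw [integral_iUnion hSm hSdisj (by rw [hSunion]; exact hint)]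
      exact tsum_fintype _
    have heach : ∀ j : Fin n, (∫ y in S j, W x y) = K i j * μ j := by
      intro j
      rw [integral_congr_ae (hx2 j), setIntegral_const, smul_eq_mul, mul_comm]
      rfl
    rw [hdecomp] at hx1
    rw [Finset.sum_congr rfl (fun j _ => heach j)] at hx1
    rw [← hx1]
    exact Finset.sum_subset (Finset.subset_univ V) (fun j _ hj => by
      have : volume (S j) = 0 := not_not.1 (fun h => hj ((hmemV j).2 h))
      simp [hμ, this])
  -- induced P4 density zero gives constants pattern
  have hcubem : MeasurableSet (cube 4) := MeasurableSet.univ_pi (fun _ => hI01m)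
  have hcubevol : volume (cube 4) = 1 := by
    rw [cube, volume_pi, Measure.pi_pi]
    simp [hI01vol]
  haveI hfincube : IsFiniteMeasure (volume.restrict (cube 4)) := by
    constructor
    rw [Measure.restrict_apply_univ, hcubevol]
    exact ENNReal.one_lt_top
  set F : (Fin 4 → ℝ) → ℝ := fun x => W (x 0) (x 1) * W (x 1) (x 2) * W (x 2) (x 3) *
    (1 - W (x 0) (x 2)) * (1 - W (x 1) (x 3)) * (1 - W (x 0) (x 3)) with hF
  have hpair : ∀ a b : Fin 4, Measurable fun x : Fin 4 → ℝ => W (x a) (x b) := by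
    intro a b
    have h : Measurable fun x : Fin 4 → ℝ => (x a, x b) :=
      (measurable_pi_apply a).prodMk (measurable_pi_apply b)
    exact hWm.comp h
  have hFmeas : Measurable F := by
    exact (((((hpair 0 1).mul (hpair 1 2)).mul (hpair 2 3)).mul
      (measurable_const.sub (hpair 0 2))).mul (measurable_const.sub (hpair 1 3))).mul
      (measurable_const.sub (hpair 0 3))
  have hcoord : ∀ x ∈ cube 4, ∀ t : Fin 4, x t ∈ I01 := fun x hx t => hx t (Set.mem_univ t)
  have hFrange : ∀ x ∈ cube 4, F x ∈ Set.Icc (0:ℝ) 1 := by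
    intro x hx
    exact six_prod (hWrange _ (hcoord x hx 0) _ (hcoord x hx 1))
      (hWrange _ (hcoord x hx 1) _ (hcoord x hx 2))
      (hWrange _ (hcoord x hx 2) _ (hcoord x hx 3))
      (hWrange _ (hcoord x hx 0) _ (hcoord x hx 2))
      (hWrange _ (hcoord x hx 1) _ (hcoord x hx 3))
      (hWrange _ (hcoord x hx 0) _ (hcoord x hx 3))
  have hFnn : 0 ≤ᵐ[volume.restrict (cube 4)] F := by
    filter_upwards [ae_restrict_mem hcubem] with x hx
    exact (hFrange x hx).1
  have hFint : Integrable F (volume.restrict (cube 4)) := by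
    refine Integrable.mono' (integrable_const 1) hFmeas.aestronglyMeasurable ?_
    filter_upwards [ae_restrict_mem hcubem] with x hx
    rw [Real.norm_eq_abs, abs_le]
    exact ⟨by linarith [(hFrange x hx).1], (hFrange x hx).2⟩
  have hzero : ∀ᵐ x ∂(volume.restrict (cube 4)), F x = 0 := by
    have := (integral_eq_zero_iff_of_nonneg_ae hFnn hFint).1 hP4
    filter_upwards [this] with x hx using hx
  have hzero' : ∀ᵐ x ∂(volume : Measure (Fin 4 → ℝ)), x ∈ cube 4 → F x = 0 :=
    (ae_restrict_iff' hcubem).1 hzero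
  have h4 := ae_fin4 _ hzero'
  have hP4K : ∀ i ∈ V, ∀ j ∈ V, ∀ k ∈ V, ∀ l ∈ V,
      K i j * K j k * K k l * (1 - K i k) * (1 - K j l) * (1 - K i l) = 0 := by
    intro i hi j hj k hk l hl
    haveI := hne i hi
    haveI := hne j hj
    haveI := hne k hk
    haveI := hne l hl
    have main : ∀ᵐ x ∂volume.restrict (S i), ∀ᵐ y ∂volume.restrict (S j),
        ∀ᵐ z ∂volume.restrict (S k), ∀ᵐ w ∂volume.restrict (S l),
        K i j * K j k * K k l * (1 - K i k) * (1 - K j l) * (1 - K i l) = 0 := by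
      filter_upwards [ae_restrict_of_ae h4, hmem i, hnest i j, hnest i k, hnest i l]
        with x hx4 hxm hxj hxk hxl
      filter_upwards [ae_restrict_of_ae hx4, hmem j, hxj, hnest j k, hnest j l]
        with y hy4 hym hyij hyk hyl
      filter_upwards [ae_restrict_of_ae hy4, hmem k, hxk, hyk, hnest k l]
        with z hz4 hzm hxzik hyzjk hzl
      filter_upwards [ae_restrict_of_ae hz4, hmem l, hxl, hyl, hzl]
        with w hw4 hwm hxwil hywjl hzwkl
      have hmemc : (![x, y, z, w] : Fin 4 → ℝ) ∈ cube 4 := by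
        intro t _
        fin_cases t
        · exact hSsub i hxm
        · exact hSsub j hym
        · exact hSsub k hzm
        · exact hSsub l hwm
      have hFz := hw4 hmemc
      have hev : F ![x, y, z, w] = W x y * W y z * W z w * (1 - W x z) * (1 - W y w) *
          (1 - W x w) := rfl
      rw [hev] at hFz
      rw [hyij, hyzjk, hzwkl, hxzik, hywjl, hxwil] at hFz
      exact hFz
    obtain ⟨x, hx⟩ := main.exists
    obtain ⟨y, hy⟩ := hx.exists
    obtain ⟨z, hz⟩ := hy.exists
    obtain ⟨w, hw⟩ := hz.exists
    exact hw
  -- constants are 0 or 1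
  have hdiag : ∀ i ∈ V, K i i = 0 ∨ K i i = 1 := by
    intro i hi
    rcases six_factor (hP4K i hi i hi i hi i hi) with h | h | h | h | h | h <;>
      first
      | exact Or.inl h
      | exact Or.inr (by linarith)
  have hzo : ∀ i ∈ V, ∀ j ∈ V, K i j = 0 ∨ K i j = 1 := by
    intro i hi j hj
    have hsym := hKsym i hi j hj
    rcases hdiag i hi with hii | hii <;> rcases hdiag j hj with hjj | hjj
    · -- both 0 : pattern (i,j,i,j)
      rcases six_factor (hP4K i hi j hj i hi j hj) with h | h | h | h | h | h
      · exact Or.inl h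
      · exact Or.inl (hsym ▸ h)
      · exact Or.inl h
      · rw [hii] at h; norm_num at h
      · rw [hjj] at h; norm_num at h
      · exact Or.inr (by linarith)
    · -- K i i = 0, K j j = 1 : pattern (i,j,j,i)
      rcases six_factor (hP4K i hi j hj j hj i hi) with h | h | h | h | h | h
      · exact Or.inl h
      · rw [hjj] at h; norm_num at h
      · exact Or.inl (hsym ▸ h)
      · exact Or.inr (by linarith)
      · exact Or.inr (by rw [hsym]; linarith)
      · rw [hii] at h; norm_num at h
    · -- K i i = 1, K j j = 0 : pattern (j,i,i,j)
      rcases six_factor (hP4K j hj i hi i hi j hj) with h | h | h | h | h | h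
      · exact Or.inl (hsym ▸ h)
      · rw [hii] at h; norm_num at h
      · exact Or.inl h
      · exact Or.inr (by rw [hsym]; linarith)
      · exact Or.inr (by linarith)
      · rw [hjj] at h; norm_num at h
    · -- both 1 : pattern (i,i,j,j)
      rcases six_factor (hP4K i hi i hi j hj j hj) with h | h | h | h | h | h
      · rw [hii] at h; norm_num at h
      · exact Or.inl h
      · rw [hjj] at h; norm_num at h
      · exact Or.inr (by linarith)
      · exact Or.inr (by linarith)
      · exact Or.inr (by linarith)
  have hfree : ∀ i ∈ V, ∀ j ∈ V, ∀ k ∈ V, ∀ l ∈ V,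
      i ≠ j → i ≠ k → i ≠ l → j ≠ k → j ≠ l → k ≠ l →
      ¬(K i j = 1 ∧ K j k = 1 ∧ K k l = 1 ∧ K i k = 0 ∧ K j l = 0 ∧ K i l = 0) := by
    intro i hi j hj k hk l hl _ _ _ _ _ _
    rintro ⟨h1, h2, h3, h4, h5, h6⟩
    have := hP4K i hi j hj k hk l hl
    rw [h1, h2, h3, h4, h5, h6] at this
    norm_num at this
  have hpos : ∀ i ∈ V, 0 < μ i := fun i hi =>
    ENNReal.toReal_pos ((hmemV i).1 hi) (hSfin i)
  obtain ⟨q, hq⟩ := weighted_rat V.card V le_rfl μ K d hVne hpos hKsym hzo hfree hdeg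
  rw [htot, mul_one] at hq
  exact ⟨q, hq⟩
end
end

section
/- Let W ∈ 𝒲 have finite rank, i.e. W(x,y) = Σ_{k=1}^r λ_k w_k(x) w_k(y) for almost every (x,y) ∈ [0,1]², for some r ∈ ℕ, real numbers λ₁,…,λ_r and bounded measurable functions w₁,…,w_r : [0,1] → ℝ. Then for every finite list F₁,…,F_m of finite simple graphs there exists a stepfunction U ∈ 𝒲 such that t(F_j,U) = t(F_j,W) for j = 1,…,m. -/
open MeasureTheory
open scoped Classical

noncomputable section

/-! ### Auxiliary material for statement18 -/

section Statement18Aux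

instance : IsProbabilityMeasure (volume.restrict I01) := by
  constructor; rw [Measure.restrict_apply_univ, I01, Real.volume_Icc]; norm_num

/-- product measure of `n` copies of Lebesgue measure restricted to `[0,1]` -/
def piμ (n : ℕ) : Measure (Fin n → ℝ) := Measure.pi fun _ => volume.restrict I01

instance (n : ℕ) : IsProbabilityMeasure (piμ n) := by unfold piμ; infer_instance

lemma restrict_cube (n : ℕ) : volume.restrict (cube n) = piμ n := by
  refine (Measure.pi_eq (μ := fun _ : Fin n => volume.restrict I01) fun s hs => ?_).symm
  rw [Measure.restrict_apply (MeasurableSet.univ_pi hs), cube, ← Set.pi_inter_distrib,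
    volume_pi, Measure.pi_pi]
  simp_rw [Measure.restrict_apply (hs _)]

/-- type synonym used to apply Fubini for `Measure.pi` of restricted measures -/
def R01 : Type := ℝ

instance : MeasureSpace R01 :=
  { toMeasurableSpace := inferInstanceAs (MeasurableSpace ℝ),
    volume := MeasureTheory.volume.restrict I01 }

instance : IsProbabilityMeasure (volume : Measure R01) :=
  inferInstanceAs (IsProbabilityMeasure (MeasureTheory.volume.restrict I01))

instance : SigmaFinite (volume : Measure R01) := inferInstance

lemma fubini_pi {n : ℕ} (f : Fin n → ℝ → ℝ) :
    ∫ x, (∏ v, f v (x v)) ∂(piμ n) = ∏ v, ∫ y, f v y ∂(volume.restrict I01) :=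
  MeasureTheory.integral_fintype_prod_eq_prod (𝕜 := ℝ) (ι := Fin n)
    (E := fun _ => R01) (μ := fun _ => (volume : Measure R01)) (fun v (y : R01) => f v y)

/-- the edge set of a graph on `Fin n`, as a finset of ordered pairs -/
def ES {n : ℕ} (G : SimpleGraph (Fin n)) : Finset (Fin n × Fin n) :=
  Finset.univ.filter (fun p : Fin n × Fin n => p.1 < p.2 ∧ G.Adj p.1 p.2)

/-- the number of edges at `v` coloured `k` by the colouring `c` -/
def deg {n r : ℕ} (G : SimpleGraph (Fin n)) (c : {p // p ∈ ES G} → Fin r)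
    (v : Fin n) (k : Fin r) : ℕ :=
  ∑ e : {p // p ∈ ES G}, if c e = k then
    ((if (e : Fin n × Fin n).1 = v then 1 else 0)
      + (if (e : Fin n × Fin n).2 = v then 1 else 0)) else 0

/-- mixed moments of a family of functions on `[0,1]` -/
def Mu {r : ℕ} (u : Fin r → ℝ → ℝ) (α : Fin r → ℕ) : ℝ :=
  ∫ y in I01, ∏ k, (u k y) ^ (α k)

lemma map_pair {n : ℕ} {i j : Fin n} (hij : i ≠ j) :
    Measure.map (fun x : Fin n → ℝ => (x i, x j)) (piμ n)
      = (volume.restrict I01).prod (volume.restrict I01) := by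
  refine (Measure.prod_eq (μν := Measure.map (fun x : Fin n → ℝ => (x i, x j)) (piμ n))
    fun s t hs ht => ?_).symm
  rw [Measure.map_apply ((measurable_pi_apply i).prodMk (measurable_pi_apply j))
    (hs.prod ht)]
  have hset : (fun x : Fin n → ℝ => (x i, x j)) ⁻¹' (s ×ˢ t)
      = Set.pi Set.univ (fun k => if k = i then s else if k = j then t else Set.univ) := by
    ext x
    simp only [Set.mem_preimage, Set.mem_prod, Set.mem_pi, Set.mem_univ, true_implies]
    constructor
    · rintro ⟨h1, h2⟩ k
      by_cases hki : k = i
      · subst hki; simp [if_pos rfl, h1]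
      · by_cases hkj : k = j
        · subst hkj; simp [if_neg hki, h2]
        · simp [if_neg hki, if_neg hkj]
    · intro h
      refine ⟨?_, ?_⟩
      · have := h i; simpa using this
      · have := h j; simpa [if_neg hij.symm] using this
  rw [hset, piμ, Measure.pi_pi]
  have h1 : ∀ k, (volume.restrict I01) (if k = i then s else if k = j then t else Set.univ)
      = if k = i then (volume.restrict I01) s else if k = j then (volume.restrict I01) t
        else 1 := by
    intro k
    by_cases hki : k = i
    · simp [hki]
    · by_cases hkj : k = j
      · simp [hki, hkj, if_neg hij.symm]
      · simp [hki, hkj, measure_univ]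
  simp_rw [h1]
  rw [← Finset.mul_prod_erase Finset.univ _ (Finset.mem_univ i),
    ← Finset.mul_prod_erase _ _ (Finset.mem_erase.2 ⟨hij.symm, Finset.mem_univ j⟩),
    if_pos rfl, if_neg hij.symm, if_pos rfl]
  rw [Finset.prod_eq_one, mul_one]
  intro k hk
  rw [Finset.mem_erase, Finset.mem_erase] at hk
  rw [if_neg hk.2.1, if_neg hk.1]

lemma restrict_sq : volume.restrict (I01 ×ˢ I01)
    = (volume.restrict I01).prod (volume.restrict I01) := by
  rw [Measure.prod_restrict, ← Measure.volume_eq_prod]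

lemma ae_pair {n : ℕ} {i j : Fin n} (hij : i ≠ j) {P : ℝ × ℝ → Prop}
    (hPm : MeasurableSet {q | P q})
    (hP : ∀ᵐ q : ℝ × ℝ ∂(volume.restrict (I01 ×ˢ I01)), P q) :
    ∀ᵐ x : Fin n → ℝ ∂(piμ n), P (x i, x j) := by
  rw [restrict_sq, ← map_pair hij] at hP
  exact (MeasureTheory.ae_map_iff
    ((measurable_pi_apply i).prodMk (measurable_pi_apply j)).aemeasurable hPm).mp hP

lemma homDensity_congr_ae {n : ℕ} (G : SimpleGraph (Fin n)) (W V : ℝ → ℝ → ℝ)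
    (hWm : Measurable (Function.uncurry W)) (hVm : Measurable (Function.uncurry V))
    (h : ∀ᵐ q : ℝ × ℝ ∂(volume.restrict (I01 ×ˢ I01)), W q.1 q.2 = V q.1 q.2) :
    homDensity G W = homDensity G V := by
  rw [show homDensity G W
      = ∫ x, (∏ p ∈ ES G, W (x p.1) (x p.2)) ∂(volume.restrict (cube n)) from rfl,
    show homDensity G V
      = ∫ x, (∏ p ∈ ES G, V (x p.1) (x p.2)) ∂(volume.restrict (cube n)) from rfl,
    restrict_cube]
  refine integral_congr_ae ?_
  have hall : ∀ᵐ x ∂(piμ n), ∀ p ∈ ES G, W (x p.1) (x p.2) = V (x p.1) (x p.2) := by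
    rw [Finset.eventually_all]
    intro p hp
    have hne : p.1 ≠ p.2 := ne_of_lt (Finset.mem_filter.mp hp).2.1
    exact ae_pair hne (measurableSet_eq_fun hWm hVm) h
  filter_upwards [hall] with x hx
  exact Finset.prod_congr rfl fun p hp => hx p hp

lemma integrable_of_bound {X : Type*} [MeasurableSpace X] (μ : Measure X) [IsFiniteMeasure μ]
    (f : X → ℝ) (hm : Measurable f) (C : ℝ) (h : ∀ x, |f x| ≤ C) : Integrable f μ :=
  (MeasureTheory.integrable_const C).mono' hm.aestronglyMeasurable
    (Filter.Eventually.of_forall fun x => by simpa [Real.norm_eq_abs] using h x)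

section ExpandMain
variable {n r : ℕ} (G : SimpleGraph (Fin n)) (lam : Fin r → ℝ) (u : Fin r → ℝ → ℝ)

lemma prod_regroup (c : {p // p ∈ ES G} → Fin r) (x : Fin n → ℝ) :
    (∏ e : {p // p ∈ ES G},
        (u (c e) (x (e : Fin n × Fin n).1) * u (c e) (x (e : Fin n × Fin n).2)))
      = ∏ v, ∏ k, (u k (x v)) ^ (deg G c v k) := by
  have b1 : ∀ e : {p // p ∈ ES G},
      u (c e) (x (e : Fin n × Fin n).1) * u (c e) (x (e : Fin n × Fin n).2)
        = ∏ v, ((if (e : Fin n × Fin n).1 = v then u (c e) (x v) else 1)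
            * (if (e : Fin n × Fin n).2 = v then u (c e) (x v) else 1)) := by
    intro e
    rw [Finset.prod_mul_distrib, Finset.prod_ite_eq, Finset.prod_ite_eq]
    simp
  simp_rw [b1]
  rw [Finset.prod_comm]
  refine Finset.prod_congr rfl fun v _ => ?_
  have b2 : ∀ e : {p // p ∈ ES G},
      ((if (e : Fin n × Fin n).1 = v then u (c e) (x v) else 1)
        * (if (e : Fin n × Fin n).2 = v then u (c e) (x v) else 1))
      = (u (c e) (x v)) ^ ((if (e : Fin n × Fin n).1 = v then 1 else 0)
          + (if (e : Fin n × Fin n).2 = v then (1:ℕ) else 0)) := by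
    intro e
    by_cases h1 : (e : Fin n × Fin n).1 = v <;> by_cases h2 : (e : Fin n × Fin n).2 = v <;>
      simp [h1, h2, pow_add, pow_two]
  simp_rw [b2]
  have b3 : ∀ e : {p // p ∈ ES G},
      (u (c e) (x v)) ^ ((if (e : Fin n × Fin n).1 = v then 1 else 0)
          + (if (e : Fin n × Fin n).2 = v then (1:ℕ) else 0))
      = ∏ k, (u k (x v)) ^ (if c e = k then
          ((if (e : Fin n × Fin n).1 = v then 1 else 0)
            + (if (e : Fin n × Fin n).2 = v then (1:ℕ) else 0)) else 0) := by
    intro e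
    rw [Finset.prod_eq_single (c e)]
    · rw [if_pos rfl]
    · intro k _ hk
      rw [if_neg (fun h => hk h.symm), pow_zero]
    · intro h; exact absurd (Finset.mem_univ _) h
  simp_rw [b3]
  rw [Finset.prod_comm]
  refine Finset.prod_congr rfl fun k _ => ?_
  rw [Finset.prod_pow_eq_pow_sum]
  rfl

lemma homDensity_expand (hum : ∀ k, Measurable (u k)) (C : Fin r → ℝ)
    (hub : ∀ k x, |u k x| ≤ C k) :
    homDensity G (fun x y => ∑ k, lam k * u k x * u k y)
      = ∑ c : {p // p ∈ ES G} → Fin r,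
          (∏ e, lam (c e)) * ∏ v, Mu u (deg G c v) := by
  have hC0 : ∀ k, 0 ≤ C k := fun k => (abs_nonneg _).trans (hub k 0)
  have h1 : homDensity G (fun x y => ∑ k, lam k * u k x * u k y)
      = ∫ x, (∏ p ∈ ES G, ∑ k, lam k * u k (x p.1) * u k (x p.2)) ∂(piμ n) := by
    rw [show homDensity G (fun x y => ∑ k, lam k * u k x * u k y)
        = ∫ x, (∏ p ∈ ES G, ∑ k, lam k * u k (x p.1) * u k (x p.2))
            ∂(volume.restrict (cube n)) from rfl, restrict_cube]
  rw [h1]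
  have hpt : ∀ x : Fin n → ℝ,
      (∏ p ∈ ES G, ∑ k, lam k * u k (x p.1) * u k (x p.2))
        = ∑ c : {p // p ∈ ES G} → Fin r, ∏ e : {p // p ∈ ES G},
            (lam (c e) * u (c e) (x (e : Fin n × Fin n).1)
              * u (c e) (x (e : Fin n × Fin n).2)) := by
    intro x
    rw [← Finset.prod_coe_sort (ES G)]
    rw [Finset.prod_univ_sum (fun _ => Finset.univ)]
    rw [Fintype.piFinset_univ]
  simp_rw [hpt]
  rw [integral_finset_sum]
  · refine Finset.sum_congr rfl fun c _ => ?_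
    have h2 : ∀ x : Fin n → ℝ,
        (∏ e : {p // p ∈ ES G}, (lam (c e) * u (c e) (x (e : Fin n × Fin n).1)
            * u (c e) (x (e : Fin n × Fin n).2)))
          = (∏ e, lam (c e)) * ∏ v, ∏ k, (u k (x v)) ^ (deg G c v k) := by
      intro x
      rw [← prod_regroup G u c x]
      simp_rw [mul_assoc]
      rw [Finset.prod_mul_distrib]
    simp_rw [h2]
    rw [integral_const_mul]
    congr 1
    rw [fubini_pi (fun v y => ∏ k, (u k y) ^ (deg G c v k))]
    rfl
  · intro c _
    refine integrable_of_bound _ _ ?_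
      (∏ e : {p // p ∈ ES G}, (|lam (c e)| * C (c e) * C (c e))) ?_
    · refine Finset.measurable_prod _ fun e _ => ?_
      exact ((measurable_const.mul ((hum _).comp (measurable_pi_apply _))).mul
        ((hum _).comp (measurable_pi_apply _)))
    · intro x
      rw [Finset.abs_prod]
      refine Finset.prod_le_prod (fun e _ => abs_nonneg _) fun e _ => ?_
      rw [abs_mul, abs_mul]
      exact mul_le_mul (mul_le_mul le_rfl (hub _ _) (abs_nonneg _) (abs_nonneg _))
        (hub _ _) (abs_nonneg _) (mul_nonneg (abs_nonneg _) (hC0 _))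

lemma deg_le (c : {p // p ∈ ES G} → Fin r) (v : Fin n) (k : Fin r) :
    deg G c v k ≤ 2 * n * n := by
  have h1 : deg G c v k ≤ ∑ _e : {p // p ∈ ES G}, 2 := by
    refine Finset.sum_le_sum fun e _ => ?_
    by_cases h : c e = k
    · rw [if_pos h]
      have ha : (if (e : Fin n × Fin n).1 = v then 1 else 0) ≤ 1 := by split <;> omega
      have hb : (if (e : Fin n × Fin n).2 = v then 1 else 0) ≤ 1 := by split <;> omega
      omega
    · rw [if_neg h]; omega
  rw [Finset.sum_const, Finset.card_univ, smul_eq_mul] at h1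
  refine h1.trans ?_
  have h2 : Fintype.card {p // p ∈ ES G} ≤ n * n := by
    rw [Fintype.card_coe]
    calc (ES G).card ≤ (Finset.univ : Finset (Fin n × Fin n)).card := Finset.card_le_univ _
      _ = n * n := by rw [Finset.card_univ, Fintype.card_prod, Fintype.card_fin]
  calc Fintype.card {p // p ∈ ES G} * 2 ≤ (n * n) * 2 := Nat.mul_le_mul_right _ h2
    _ = 2 * n * n := by ring

end ExpandMain

lemma sum_extend {M : Type*} [AddCommMonoid M] {Nc tc : ℕ} (hle : tc ≤ Nc) (f : Fin tc → M) :
    (∑ i : Fin Nc, if h : (i : ℕ) < tc then f ⟨i, h⟩ else 0) = ∑ j, f j := by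
  rw [Fin.sum_univ_eq_sum_range (fun i => if h : i < tc then f ⟨i, h⟩ else 0) Nc]
  rw [← Finset.sum_subset (Finset.range_subset_range.2 hle)
    (fun i _ hi => dif_neg (by simpa using hi))]
  rw [← Fin.sum_univ_eq_sum_range (fun i => if h : i < tc then f ⟨i, h⟩ else 0) tc]
  refine Finset.sum_congr rfl fun j _ => ?_
  rw [dif_pos j.2]

lemma isCompact_convexHull_findim {d : Type*} [Fintype d] {s : Set (d → ℝ)}
    (hs : IsCompact s) (hne : s.Nonempty) : IsCompact (convexHull ℝ s) := by
  obtain ⟨z₀, hz₀⟩ := hne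
  set N := Fintype.card d + 1 with hN
  have key : convexHull ℝ s
      = (fun pz : (Fin N → ℝ) × (Fin N → d → ℝ) => ∑ i, pz.1 i • pz.2 i) ''
        ((stdSimplex ℝ (Fin N)) ×ˢ (Set.univ.pi fun _ => s)) := by
    apply Set.Subset.antisymm
    · intro x hx
      rw [convexHull_eq_union] at hx
      simp only [Set.mem_iUnion] at hx
      obtain ⟨t, hts, hai, hxt⟩ := hx
      have hcard : t.card ≤ N := by
        have h1 := hai.card_le_finrank_succ
        have h2 : Module.finrank ℝ (vectorSpan ℝ (Set.range ((↑) : t → (d → ℝ))))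
            ≤ Fintype.card d := by
          have := Submodule.finrank_le (vectorSpan ℝ (Set.range ((↑) : t → (d → ℝ))))
          simpa [Module.finrank_fintype_fun_eq_card] using this
        calc t.card = Fintype.card ↥t := (Fintype.card_coe t).symm
          _ ≤ _ := h1
          _ ≤ Fintype.card d + 1 := by omega
      rw [Finset.convexHull_eq] at hxt
      obtain ⟨w, hw0, hw1, hwx⟩ := hxt
      rw [t.centerMass_eq_of_sum_1 _ hw1] at hwx
      let eqv : Fin t.card ≃ ↥t :=
        (finCongr (Fintype.card_coe t).symm).trans (Fintype.equivFin ↥t).symm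
      refine ⟨(fun i => if h : (i : ℕ) < t.card then w (eqv ⟨i, h⟩) else 0,
        fun i => if h : (i : ℕ) < t.card then ((eqv ⟨i, h⟩ : d → ℝ)) else z₀), ⟨?_, ?_⟩, ?_⟩
      · constructor
        · intro i
          dsimp only
          by_cases h : (i : ℕ) < t.card
          · rw [dif_pos h]; exact hw0 _ (eqv ⟨i, h⟩).2
          · rw [dif_neg h]
        · dsimp only
          rw [sum_extend hcard (fun j => w (eqv j)), Equiv.sum_comp eqv (fun y => w y)]
          rw [← hw1, ← Finset.sum_coe_sort t w]
      · intro i _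
        dsimp only
        by_cases h : (i : ℕ) < t.card
        · rw [dif_pos h]; exact hts (eqv ⟨i, h⟩).2
        · rw [dif_neg h]; exact hz₀
      · dsimp only
        have hpt : ∀ i : Fin N,
            (if h : (i : ℕ) < t.card then w (eqv ⟨i, h⟩) else 0)
              • (if h : (i : ℕ) < t.card then ((eqv ⟨i, h⟩ : d → ℝ)) else z₀)
            = if h : (i : ℕ) < t.card then w (eqv ⟨i, h⟩) • (eqv ⟨i, h⟩ : d → ℝ) else 0 := by
          intro i
          by_cases h : (i : ℕ) < t.card
          · rw [dif_pos h, dif_pos h, dif_pos h]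
          · rw [dif_neg h, dif_neg h, dif_neg h, zero_smul]
        simp_rw [hpt]
        rw [sum_extend hcard (fun j => w (eqv j) • ((eqv j : d → ℝ))),
          Equiv.sum_comp eqv (fun y => w y • (y : d → ℝ))]
        rw [← hwx, ← Finset.sum_coe_sort t (fun y => w y • id y)]
        rfl
    · rintro x ⟨⟨p, z⟩, ⟨hp, hz⟩, rfl⟩
      exact (convex_convexHull ℝ s).sum_mem (fun i _ => hp.1 i) hp.2
        (fun i _ => subset_convexHull ℝ s (hz i trivial))
  rw [key]
  refine (((isCompact_stdSimplex _ _).prod (isCompact_univ_pi fun _ => hs))).image ?_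
  exact continuous_finset_sum _ fun i _ =>
    ((continuous_apply i).comp continuous_fst).smul ((continuous_apply i).comp continuous_snd)

lemma partition_exists {N : ℕ} (hN : 0 < N) (p : Fin N → ℝ) (hp0 : ∀ i, 0 ≤ p i)
    (hp1 : ∑ i, p i = 1) :
    ∃ S : Fin N → Set ℝ, (∀ i, MeasurableSet (S i)) ∧
      (Pairwise fun i j => Disjoint (S i) (S j)) ∧
      (⋃ i, S i) = I01 ∧ ∀ i, volume (S i) = ENNReal.ofReal (p i) := by
  set pext : ℕ → ℝ := fun j => if h : j < N then p ⟨j, h⟩ else 0 with hpext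
  have hpext0 : ∀ j, 0 ≤ pext j := by
    intro j; by_cases h : j < N
    · rw [hpext]; dsimp only; rw [dif_pos h]; exact hp0 _
    · rw [hpext]; dsimp only; rw [dif_neg h]
  set T : ℕ → ℝ := fun i => ∑ j ∈ Finset.range i, pext j with hT
  have hTmono : ∀ {i j : ℕ}, i ≤ j → T i ≤ T j := by
    intro i j hij
    exact Finset.sum_le_sum_of_subset_of_nonneg (Finset.range_subset_range.2 hij)
      (fun k _ _ => hpext0 k)
  have hT0 : T 0 = 0 := by simp [hT]
  have hTsucc : ∀ i, T (i + 1) = T i + pext i := fun i => Finset.sum_range_succ pext i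
  have hTN : T N = 1 := by
    rw [hT]; dsimp only
    rw [← Fin.sum_univ_eq_sum_range pext N]
    rw [← hp1]
    refine Finset.sum_congr rfl fun i _ => ?_
    rw [hpext]; dsimp only; rw [dif_pos i.2]
  have hTnonneg : ∀ i, 0 ≤ T i := fun i => hT0 ▸ hTmono (Nat.zero_le i)
  have hTle1 : ∀ {i}, i ≤ N → T i ≤ 1 := fun h => hTN ▸ hTmono h
  refine ⟨fun i => if (i : ℕ) = N - 1 then Set.Icc (T i) 1
    else Set.Ico (T i) (T ((i : ℕ) + 1)), fun i => ?_, ?_, ?_, ?_⟩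
  · dsimp only
    by_cases h : (i : ℕ) = N - 1
    · rw [if_pos h]; exact measurableSet_Icc
    · rw [if_neg h]; exact measurableSet_Ico
  · have key : ∀ i j : Fin N, i < j →
        Disjoint (if (i : ℕ) = N - 1 then Set.Icc (T i) 1 else Set.Ico (T i) (T ((i : ℕ) + 1)))
          (if (j : ℕ) = N - 1 then Set.Icc (T j) 1 else Set.Ico (T j) (T ((j : ℕ) + 1))) := by
      intro i j hij
      have hiN : (i : ℕ) ≠ N - 1 := by
        have := j.2; omega
      rw [if_neg hiN]
      rw [Set.disjoint_left]
      intro x hx hx2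
      have h1 : x < T ((i : ℕ) + 1) := hx.2
      have h2 : T j ≤ x := by
        by_cases h : (j : ℕ) = N - 1
        · rw [if_pos h] at hx2; exact hx2.1
        · rw [if_neg h] at hx2; exact hx2.1
      have h3 : T ((i : ℕ) + 1) ≤ T j := hTmono hij
      linarith
    intro i j hij
    rcases lt_or_gt_of_ne hij with h | h
    · exact key i j h
    · exact (key j i h).symm
  · dsimp only
    apply Set.Subset.antisymm
    · refine Set.iUnion_subset fun i => ?_
      by_cases h : (i : ℕ) = N - 1
      · rw [if_pos h]
        intro x hx
        exact ⟨le_trans (hTnonneg _) hx.1, hx.2⟩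
      · rw [if_neg h]
        intro x hx
        refine ⟨le_trans (hTnonneg _) hx.1, le_of_lt (lt_of_lt_of_le hx.2 (hTle1 i.2))⟩
    · intro x hx
      obtain ⟨hx0, hx1⟩ := hx
      by_cases hxe : x = 1
      · refine Set.mem_iUnion.2 ⟨⟨N - 1, by omega⟩, ?_⟩
        rw [if_pos rfl]
        refine ⟨?_, le_of_eq hxe⟩
        rw [hxe]
        have : N - 1 ≤ N := by omega
        exact hTle1 this
      · have hxlt : x < 1 := lt_of_le_of_ne hx1 hxe
        have hex : ∃ i : ℕ, x < T (i + 1) := ⟨N - 1, by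
          have : N - 1 + 1 = N := by omega
          rw [this, hTN]; exact hxlt⟩
        set i₀ := Nat.find hex with hi₀
        have h1 : x < T (i₀ + 1) := Nat.find_spec hex
        have h2 : T i₀ ≤ x := by
          rcases Nat.eq_zero_or_pos i₀ with h | h
          · rw [h, hT0]; exact hx0
          · obtain ⟨k, hk⟩ := Nat.exists_eq_succ_of_ne_zero (Nat.pos_iff_ne_zero.mp h)
            by_contra hc
            push_neg at hc
            have hmin := Nat.find_min hex (show k < i₀ by omega)
            exact hmin (by rw [show k + 1 = i₀ by omega]; exact hc)
        have hi₀N : i₀ < N := by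
          have : i₀ ≤ N - 1 := Nat.find_min' hex (by
            have : N - 1 + 1 = N := by omega
            rw [this, hTN]; exact hxlt)
          omega
        refine Set.mem_iUnion.2 ⟨⟨i₀, hi₀N⟩, ?_⟩
        by_cases h : i₀ = N - 1
        · rw [if_pos h]
          exact ⟨h2, hx1⟩
        · rw [if_neg h]
          exact ⟨h2, h1⟩
  · intro i
    dsimp only
    by_cases h : (i : ℕ) = N - 1
    · rw [if_pos h, Real.volume_Icc]
      have hNi : ((i : ℕ) + 1) = N := by omega
      have : T ((i : ℕ) + 1) = T (i : ℕ) + pext (i : ℕ) := hTsucc _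
      rw [hNi, hTN] at this
      have hpe : pext (i : ℕ) = p i := by
        rw [hpext]; dsimp only; rw [dif_pos i.2]
      rw [hpe] at this
      congr 1
      linarith
    · rw [if_neg h, Real.volume_Ico, hTsucc]
      have hpe : pext (i : ℕ) = p i := by
        rw [hpext]; dsimp only; rw [dif_pos i.2]
      rw [hpe]; ring_nf

end Statement18Aux
/-- if `W ∈ 𝒲` has finite rank, i.e. `W(x,y) = Σ_k λ_k w_k(x) w_k(y)`
a.e. on `[0,1]²` with bounded measurable `w_k`, then for every finite list of graphs
there is a stepfunction with the same densities as `W`. -/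
theorem statement18 (W : ℝ → ℝ → ℝ) (hW : memW W)
    (r : ℕ) (lam : Fin r → ℝ) (w : Fin r → ℝ → ℝ)
    (hwm : ∀ k, Measurable (w k)) (hwb : ∀ k, ∃ C : ℝ, ∀ x, |w k x| ≤ C)
    (hrank : ∀ᵐ q : ℝ × ℝ ∂(volume.restrict (I01 ×ˢ I01)),
      W q.1 q.2 = ∑ k, lam k * w k q.1 * w k q.2)
    (m : ℕ) (nn : Fin m → ℕ) (F : ∀ j, SimpleGraph (Fin (nn j))) :
    ∃ U : ℝ → ℝ → ℝ, memW U ∧ IsStepfunction U ∧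
      ∀ j, homDensity (F j) U = homDensity (F j) W := by
  classical
  choose C hC using hwb
  have hC0 : ∀ k, 0 ≤ C k := fun k => (abs_nonneg _).trans (hC k 0)
  set Dm := Finset.univ.sup nn with hDm
  set D := 2 * Dm * Dm with hDdef
  set ψ : (Fin r → ℝ) → (Fin r → Fin (D + 1)) → ℝ :=
    fun v α => ∏ k, v k ^ (α k : ℕ) with hψdef
  set B : Set (Fin r → ℝ) := Set.univ.pi fun k => Set.Icc (-(C k)) (C k) with hBdef
  have hBc : IsCompact B := isCompact_univ_pi fun k => isCompact_Icc
  have hψc : Continuous ψ :=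
    continuous_pi fun α => continuous_finset_prod _ fun k _ => (continuous_apply k).pow _
  have hSc : IsCompact (ψ '' B) := hBc.image hψc
  have h0B : (fun _ : Fin r => (0:ℝ)) ∈ B := by
    intro k _
    exact ⟨neg_nonpos.2 (hC0 k), hC0 k⟩
  have hSne : (ψ '' B).Nonempty := ⟨ψ (fun _ => 0), Set.mem_image_of_mem _ h0B⟩
  set fv : ℝ → (Fin r → Fin (D + 1)) → ℝ := fun x => ψ (fun k => w k x) with hfvdef
  have hfvmem : ∀ x, fv x ∈ ψ '' B := fun x =>
    Set.mem_image_of_mem _ (fun k _ => abs_le.mp (hC k x))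
  have hfm : Measurable fv :=
    measurable_pi_lambda _ fun α => Finset.measurable_prod _ fun k _ => (hwm k).pow_const _
  have hbnd : (0:ℝ) ≤ ∏ k, max (C k) 1 ^ D :=
    Finset.prod_nonneg fun k _ => pow_nonneg (le_trans zero_le_one (le_max_right _ _)) _
  have hfb : ∀ x, ‖fv x‖ ≤ ∏ k, max (C k) 1 ^ D := by
    intro x
    rw [pi_norm_le_iff_of_nonneg hbnd]
    intro α
    rw [Real.norm_eq_abs, hfvdef]
    dsimp only [hψdef]
    rw [Finset.abs_prod]
    refine Finset.prod_le_prod (fun k _ => abs_nonneg _) fun k _ => ?_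
    rw [abs_pow]
    calc |w k x| ^ (α k : ℕ) ≤ (max (C k) 1) ^ (α k : ℕ) := by
          exact pow_le_pow_left₀ (abs_nonneg _) (le_trans (hC k x) (le_max_left _ _)) _
      _ ≤ (max (C k) 1) ^ D :=
          pow_le_pow_right₀ (le_max_right _ _) (Nat.lt_succ_iff.mp (α k).2)
  have hInt : Integrable fv (volume.restrict I01) :=
    (integrable_const (∏ k, max (C k) 1 ^ D)).mono' hfm.aestronglyMeasurable
      (Filter.Eventually.of_forall fun x => hfb x)
  have hmemc : (∫ x, fv x ∂(volume.restrict I01)) ∈ convexHull ℝ (ψ '' B) :=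
    (convex_convexHull ℝ _).integral_mem (isCompact_convexHull_findim hSc hSne).isClosed
      (Filter.Eventually.of_forall fun x => subset_convexHull ℝ _ (hfvmem x)) hInt
  rw [mem_convexHull_iff_exists_fintype] at hmemc
  obtain ⟨ι, hι, wt, z, hwt0, hwt1, hz, hrepr⟩ := hmemc
  have hchoose : ∀ i, ∃ vi, vi ∈ B ∧ ψ vi = z i := fun i => hz i
  choose v hvB hvψ using hchoose
  haveI : Nonempty ι := by
    by_contra h
    rw [not_nonempty_iff] at h
    rw [Finset.univ_eq_empty, Finset.sum_empty] at hwt1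
    exact zero_ne_one hwt1
  set N := Fintype.card ι with hNdef
  have hNpos : 0 < N := Fintype.card_pos
  set e := Fintype.equivFin ι with he
  set pp : Fin N → ℝ := fun i => wt (e.symm i) with hppdef
  set vv : Fin N → Fin r → ℝ := fun i => v (e.symm i) with hvvdef
  have hpp0 : ∀ i, 0 ≤ pp i := fun i => hwt0 _
  have hpp1 : ∑ i, pp i = 1 := by
    rw [hppdef]
    rw [Equiv.sum_comp e.symm wt]
    exact hwt1
  have hmom : ∀ α : Fin r → Fin (D + 1),
      Mu w (fun k => (α k : ℕ)) = ∑ i, pp i * ∏ k, vv i k ^ (α k : ℕ) := by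
    intro α
    have h1 : (∫ x, fv x α ∂(volume.restrict I01))
        = (∫ x, fv x ∂(volume.restrict I01)) α :=
      (ContinuousLinearMap.proj (R := ℝ) (φ := fun _ : (Fin r → Fin (D + 1)) => ℝ)
        α).integral_comp_comm hInt
    have h2 : Mu w (fun k => (α k : ℕ)) = (∫ x, fv x ∂(volume.restrict I01)) α := h1
    rw [h2, ← hrepr]
    rw [Finset.sum_apply]
    rw [← Equiv.sum_comp e.symm (fun i => (wt i • z i) α)]
    refine Finset.sum_congr rfl fun i _ => ?_
    rw [Pi.smul_apply, smul_eq_mul, ← hvψ (e.symm i)]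
  obtain ⟨S, hSm, hSd, hSu, hSvol⟩ := partition_exists hNpos pp hpp0 hpp1
  set us : Fin r → ℝ → ℝ :=
    fun k x => ∑ i, (S i).indicator (fun _ => vv i k) x with husdef
  have us_on : ∀ i x, x ∈ S i → ∀ k, us k x = vv i k := by
    intro i x hx k
    rw [husdef]
    dsimp only
    rw [Finset.sum_eq_single i]
    · exact Set.indicator_of_mem hx _
    · intro j _ hj
      exact Set.indicator_of_notMem
        (fun hxj => (Set.disjoint_left.mp (hSd hj) hxj) hx) _
    · intro h; exact absurd (Finset.mem_univ _) h
  have usm : ∀ k, Measurable (us k) :=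
    fun k => Finset.measurable_sum _ fun i _ => (measurable_const.indicator (hSm i))
  have usb : ∀ k x, |us k x| ≤ C k := by
    intro k x
    by_cases hx : ∃ i, x ∈ S i
    · obtain ⟨i, hi⟩ := hx
      rw [us_on i x hi k]
      have h2 := hvB (e.symm i) k (Set.mem_univ k)
      exact abs_le.mpr ⟨h2.1, h2.2⟩
    · push_neg at hx
      have hzz : us k x = 0 :=
        Finset.sum_eq_zero fun i _ => Set.indicator_of_notMem (hx i) _
      rw [hzz, abs_zero]; exact hC0 k
  have hstep : ∀ β : Fin r → ℕ, Mu us β = ∑ i, pp i * ∏ k, vv i k ^ β k := by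
    intro β
    have hI : I01 = ⋃ i ∈ (Finset.univ : Finset (Fin N)), S i := by
      rw [← hSu]; simp
    have hMu : Mu us β
        = ∫ y in (⋃ i ∈ (Finset.univ : Finset (Fin N)), S i), ∏ k, us k y ^ β k := by
      rw [Mu, ← hI]
    rw [hMu]
    rw [MeasureTheory.integral_biUnion_finset Finset.univ (fun i _ => hSm i)
      (fun i _ j _ hij => hSd hij) ?hint]
    case hint =>
      intro i _
      haveI : IsFiniteMeasure (volume.restrict (S i)) := by
        constructor
        rw [Measure.restrict_apply_univ, hSvol i]
        exact ENNReal.ofReal_lt_top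
      refine integrable_of_bound _ _ ?_ (∏ k, max (C k) 1 ^ β k) ?_
      · exact Finset.measurable_prod _ fun k _ => (usm k).pow_const _
      · intro x
        rw [Finset.abs_prod]
        refine Finset.prod_le_prod (fun k _ => abs_nonneg _) fun k _ => ?_
        rw [abs_pow]
        exact pow_le_pow_left₀ (abs_nonneg _) (le_trans (usb k x) (le_max_left _ _)) _
    refine Finset.sum_congr rfl fun i _ => ?_
    rw [MeasureTheory.setIntegral_congr_fun (hSm i)
      (g := fun _ => ∏ k, vv i k ^ β k)
      (fun y hy => Finset.prod_congr rfl fun k _ => by rw [us_on i y hy k])]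
    rw [MeasureTheory.setIntegral_const, Measure.real, hSvol i, ENNReal.toReal_ofReal (hpp0 i),
      smul_eq_mul]
  refine ⟨fun x y => ∑ k, lam k * us k x * us k y, ⟨?_, ?_, ?_⟩, ?_, ?_⟩
  · -- measurable
    exact Finset.measurable_sum _ fun k _ =>
      (measurable_const.mul ((usm k).comp measurable_fst)).mul ((usm k).comp measurable_snd)
  · -- symmetric
    intro x _ y _
    exact Finset.sum_congr rfl fun k _ => by ring
  · -- bounded
    refine ⟨∑ k, |lam k| * C k * C k, fun x _ y _ => ?_⟩
    refine le_trans (Finset.abs_sum_le_sum_abs _ _) (Finset.sum_le_sum fun k _ => ?_)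
    rw [abs_mul, abs_mul]
    exact mul_le_mul (mul_le_mul le_rfl (usb _ _) (abs_nonneg _) (abs_nonneg _))
      (usb _ _) (abs_nonneg _) (mul_nonneg (abs_nonneg _) (hC0 _))
  · -- stepfunction
    refine ⟨N, S, hSm, hSd, hSu, fun i j => ⟨∑ k, lam k * vv i k * vv j k, ?_⟩⟩
    refine (ae_restrict_iff' ((hSm i).prod (hSm j))).mpr
      (Filter.Eventually.of_forall fun q hq => ?_)
    obtain ⟨h1, h2⟩ := hq
    exact Finset.sum_congr rfl fun k _ => by rw [us_on i _ h1 k, us_on j _ h2 k]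
  · -- densities
    intro j
    have hVm : Measurable (Function.uncurry fun x y => ∑ k, lam k * w k x * w k y) :=
      Finset.measurable_sum _ fun k _ =>
        (measurable_const.mul ((hwm k).comp measurable_fst)).mul ((hwm k).comp measurable_snd)
    have hcong := homDensity_congr_ae (F j) W (fun x y => ∑ k, lam k * w k x * w k y)
      hW.1 hVm hrank
    rw [hcong]
    rw [homDensity_expand (F j) lam us usm C usb,
      homDensity_expand (F j) lam w hwm C hC]
    refine Finset.sum_congr rfl fun c _ => ?_
    congr 1
    refine Finset.prod_congr rfl fun v' _ => ?_
    have hb : ∀ k, deg (F j) c v' k ≤ D := by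
      intro k
      have h1 := deg_le (F j) c v' k
      have hle : nn j ≤ Dm := Finset.le_sup (Finset.mem_univ j)
      calc deg (F j) c v' k ≤ 2 * nn j * nn j := h1
        _ ≤ 2 * Dm * Dm := Nat.mul_le_mul (Nat.mul_le_mul le_rfl hle) hle
        _ = D := by rw [hDdef]
    have hmm := hmom (fun k => (⟨deg (F j) c v' k, Nat.lt_succ_of_le (hb k)⟩ : Fin (D + 1)))
    have hss := hstep (deg (F j) c v')
    calc Mu us (deg (F j) c v') = ∑ i, pp i * ∏ k, vv i k ^ (deg (F j) c v' k) := hss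
      _ = Mu w (deg (F j) c v') := hmm.symm
end
end
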